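/- arXiv:2411.19208 — 3 statements merged into one kernel-verified Lean document; each statement's English description precedes it below -/
import Mathlib

section
/- Let $n, d, c, p, i$ be integers with $0 \le d < n$, $1 \le c \le p \le n-d$ and $0 \le i \le d$, and let $\tau \in \bar{\mathcal{S}}_p(n,d)$. If the $+$-component $\mathcal{C}^{\tau}_i$ has size $c$ and contains a $+$-subset $B$ with elements $b_1 < \dots < b_d$, then: (a) for all $j \in [i]$, $b_j \le c + j - 1$ and the $(\tau,B,j)$-series is left-aligned; (b) for all $j \in [i+1,d]$, $b_j \ge n - (c+d-j) + 1$ and the $(\tau,B,j)$-series is right-aligned. -/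
/-! Common definitions: signotopes and co-signotopes on `[n] = {1, …, n}` (encoded as
`Finset.Icc 1 n` in `ℕ`), sign functions are `Finset ℕ → Bool` (`true` = `+`, `false` = `-`)
that vanish (are `-`) away from the relevant subsets. -/

open Classical in
/-- The sign function with `+`-set `S` (and `-` elsewhere). -/
noncomputable def ofPlusSet (S : Set (Finset ℕ)) : Finset ℕ → Bool :=
  fun A => if A ∈ S then true else false

/-- Number of sign changes in a list of signs. -/
def signChanges (l : List Bool) : ℕ :=
  ((l.zip l.tail).filter fun p => p.1 ≠ p.2).length

/-- Number of `+`-subsets of a sign function. -/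
noncomputable def plusCount (τ : Finset ℕ → Bool) : ℕ :=
  {A : Finset ℕ | τ A = true}.ncard

/-- The series of signs `τ (C ∪ {x})` for `x ∈ [n] \ C` in increasing order.
For a `d`-subset `B` with `i`-th smallest element `b`, `series n τ (B.erase b)` is
the `(τ,B,i)`-series. -/
def series (n : ℕ) (τ : Finset ℕ → Bool) (C : Finset ℕ) : List Bool :=
  ((Finset.Icc 1 n \ C).sort (· ≤ ·)).map fun x => τ (insert x C)

/-- An `r`-signotope on `[n]`, encoded as a sign function on all of `Finset ℕ`
which is `-` away from the `r`-subsets of `[n]`. -/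
def IsSignotope (n r : ℕ) (σ : Finset ℕ → Bool) : Prop :=
  (∀ A, σ A = true → A ⊆ Finset.Icc 1 n ∧ A.card = r) ∧
  ∀ X : Finset ℕ, X ⊆ Finset.Icc 1 n → X.card = r + 1 →
    signChanges ((X.sort (· ≤ ·)).map fun x => σ (X.erase x)) ≤ 1

/-- A `d`-co-signotope on `[n]`: every `(τ,B,i)`-series has at most one sign change. -/
def IsCoSignotope (n d : ℕ) (τ : Finset ℕ → Bool) : Prop :=
  (∀ A, τ A = true → A ⊆ Finset.Icc 1 n ∧ A.card = d) ∧
  ∀ B : Finset ℕ, B ⊆ Finset.Icc 1 n → B.card = d → ∀ b ∈ B,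
    signChanges (series n τ (B.erase b)) ≤ 1

/-- `𝒮_p(n,r)`: `r`-signotopes on `[n]` with exactly `p` `+`-signs. -/
noncomputable def sigSet (n r p : ℕ) : Set (Finset ℕ → Bool) :=
  {σ | IsSignotope n r σ ∧ plusCount σ = p}

/-- `𝒮_{≤p}(n,r)`. -/
noncomputable def sigSetLe (n r p : ℕ) : Set (Finset ℕ → Bool) :=
  {σ | IsSignotope n r σ ∧ plusCount σ ≤ p}

/-- `𝒮̄_p(n,d)`: `d`-co-signotopes on `[n]` with exactly `p` `+`-subsets. -/
noncomputable def coSigSet (n d p : ℕ) : Set (Finset ℕ → Bool) :=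
  {τ | IsCoSignotope n d τ ∧ plusCount τ = p}

/-- `𝒮̄_{≤p}(n,d)`. -/
noncomputable def coSigSetLe (n d p : ℕ) : Set (Finset ℕ → Bool) :=
  {τ | IsCoSignotope n d τ ∧ plusCount τ ≤ p}

/-- `σ` and `τ` differ by a single step: `σ⁻¹(+) ⊊ τ⁻¹(+)` and `|τ⁻¹(+)| = |σ⁻¹(+)| + 1`. -/
noncomputable def SingleStep (σ τ : Finset ℕ → Bool) : Prop :=
  {A | σ A = true} ⊂ {A | τ A = true} ∧ plusCount τ = plusCount σ + 1

/-- The higher Bruhat order on `r`-signotopes on `[n]`: reflexive-transitive closure of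
the single step relation. -/
noncomputable def BruhatLe (n r : ℕ) (σ τ : Finset ℕ → Bool) : Prop :=
  Relation.ReflTransGen (fun a b => IsSignotope n r a ∧ IsSignotope n r b ∧ SingleStep a b) σ τ

/-- The complementary higher Bruhat order on `d`-co-signotopes on `[n]`. -/
noncomputable def CoBruhatLe (n d : ℕ) (σ τ : Finset ℕ → Bool) : Prop :=
  Relation.ReflTransGen (fun a b => IsCoSignotope n d a ∧ IsCoSignotope n d b ∧ SingleStep a b) σ τ

/-- Adjacency in the graph `G_{n,d}`: `B' = (B \ {x}) ∪ {y}` with no element of `B \ {x}`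
strictly between `x` and `y`. -/
def GAdj (n d : ℕ) (B B' : Finset ℕ) : Prop :=
  B ⊆ Finset.Icc 1 n ∧ B.card = d ∧ B' ⊆ Finset.Icc 1 n ∧ B'.card = d ∧
  ∃ x ∈ B, ∃ y ∈ Finset.Icc 1 n, y ∉ B ∧ B' = insert y (B.erase x) ∧
    ∀ z ∈ B.erase x, ¬(min x y < z ∧ z < max x y)

/-- The source subset `S_{n,d,i} = {1,…,i} ∪ {n-d+i+1,…,n}`. -/
def sourceSubset (n d i : ℕ) : Finset ℕ :=
  Finset.Icc 1 i ∪ Finset.Icc (n - d + i + 1) n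

/-- Connectivity inside the `+`-subsets of `τ` (the induced subgraph `G_{n,d}[τ]`). -/
def plusConn (n d : ℕ) (τ : Finset ℕ → Bool) : Finset ℕ → Finset ℕ → Prop :=
  Relation.ReflTransGen fun A A' => τ A = true ∧ τ A' = true ∧ GAdj n d A A'

/-- The vertex set `𝒞^τ_i` of the `+`-component of `τ` containing `S_{n,d,i}`
(empty if `S_{n,d,i}` is not a `+`-subset). -/
def comp (n d : ℕ) (τ : Finset ℕ → Bool) (i : ℕ) : Set (Finset ℕ) :=
  {B | τ (sourceSubset n d i) = true ∧ τ B = true ∧ plusConn n d τ (sourceSubset n d i) B}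

/-- The `j`-th smallest element (1-based) of a finite set of naturals. -/
def nthElt (B : Finset ℕ) (j : ℕ) : ℕ := (B.sort (· ≤ ·)).getD (j - 1) 0

/-- `b_j` with the conventions `b_0 = 0` and `b_{d+1} = n+1` (as an integer). -/
def extNth (n d : ℕ) (B : Finset ℕ) (j : ℕ) : ℤ :=
  if j = 0 then 0 else if j ≤ d then (nthElt B j : ℤ) else (n : ℤ) + 1

/-- A series is left-aligned if it starts with `+` and ends with `-`. -/
def LeftAligned (l : List Bool) : Prop :=
  l.head? = some true ∧ l.getLast? = some false

/-- A series is right-aligned if it starts with `-` and ends with `+`. -/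
def RightAligned (l : List Bool) : Prop :=
  l.head? = some false ∧ l.getLast? = some true

/-- `𝒮̄_{p,i}(n,d)`: co-signotopes in `𝒮̄_p(n,d)` whose only nonempty `+`-component
is `𝒞^τ_i` (i.e. every `+`-subset lies in `𝒞^τ_i`). -/
noncomputable def coSigOnly (n d p i : ℕ) : Set (Finset ℕ → Bool) :=
  {τ | IsCoSignotope n d τ ∧ plusCount τ = p ∧ ∀ B, τ B = true → B ∈ comp n d τ i}

/-- `Z(d,i)`: points `(a_1,…,a_d) ∈ ℤ_{>0}^d` (0-indexed in Lean) with `a_j ≥ a_{j-1}`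
for `j ∈ [2,i]` and `a_j ≥ a_{j+1}` for `j ∈ [i+1,d-1]` (1-based indices). -/
def ZSet (d i : ℕ) : Set (Fin d → ℤ) :=
  {a | (∀ j, 0 < a j) ∧
    (∀ j k : Fin d, (j : ℕ) + 1 = (k : ℕ) → (k : ℕ) + 1 ≤ i → a j ≤ a k) ∧
    (∀ j k : Fin d, (j : ℕ) + 1 = (k : ℕ) → i ≤ (j : ℕ) → a k ≤ a j)}

/-- A `(d,i)`-Ferrers diagram with respect to `p`. -/
def IsFerrers (d i p : ℕ) (F : Set (Fin d → ℤ)) : Prop :=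
  F ⊆ ZSet d i ∧ F.ncard = p ∧
  ∀ a ∈ F, ∀ a' ∈ ZSet d i, (∀ j, a' j ≤ a j) → a' ∈ F

/-- The number of `(d,i)`-Ferrers diagrams with respect to `p`. -/
noncomputable def ferrersCount (d i p : ℕ) : ℕ :=
  {F : Set (Fin d → ℤ) | IsFerrers d i p F}.ncard

/-- `f_{n,d,i,j}` (here `j` is the 1-based coordinate index). -/
def fFun (n d i j : ℕ) (x : ℕ) : ℤ :=
  if j ≤ i then (x : ℤ) - j + 1 else ((n : ℤ) - x) - ((d : ℤ) - j) + 1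

/-- `g_{n,d,i}` maps a `d`-subset `B = (b_1 < … < b_d)` to
`(f_{n,d,i,1}(b_1), …, f_{n,d,i,d}(b_d))`. -/
def gMap (n d i : ℕ) (B : Finset ℕ) : Fin d → ℤ :=
  fun k => fFun n d i ((k : ℕ) + 1) (nthElt B ((k : ℕ) + 1))

/-- A sparse composition of `p` of length `d+1`. -/
def IsSparseComposition (d p : ℕ) (c : Fin (d + 1) → ℕ) : Prop :=
  (∑ i, c i) = p ∧
  ∀ i : Fin (d + 1), 1 ≤ (i : ℕ) →
    c i = 0 ∨ c ⟨(i : ℕ) - 1, lt_of_le_of_lt (Nat.sub_le _ _) i.isLt⟩ = 0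

/-- The component `τ_i` of the `+`-component decomposition `Δ(τ)`:
the sign function whose `+`-set is `𝒞^τ_i`. -/
noncomputable def compFun (n d : ℕ) (τ : Finset ℕ → Bool) (i : ℕ) : Finset ℕ → Bool :=
  ofPlusSet (comp n d τ i)

/-- Keep the `i` smallest elements of `B` and shift the others by `ñ - n`
(this is `g⁻¹_{ñ,d,i} ∘ g_{n,d,i}` on `d`-subsets). -/
def gammaSet (n tn i : ℕ) (B : Finset ℕ) : Finset ℕ :=
  ((B.sort (· ≤ ·)).mapIdx fun k x => if k < i then x else x + tn - n).toFinset

/-- The map `h_{n,ñ,d,p,i}` on sign functions. -/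
noncomputable def hFun (n tn i : ℕ) (τ : Finset ℕ → Bool) : Finset ℕ → Bool :=
  ofPlusSet {A | ∃ B, τ B = true ∧ A = gammaSet n tn i B}

open Classical in
/-- `γ_{τ,ñ}(B)`: replace `b_j` by `b_j + ñ - n` whenever the `(τ,B,j)`-series is
right-aligned. -/
noncomputable def gammaFun (n tn : ℕ) (τ : Finset ℕ → Bool) (B : Finset ℕ) : Finset ℕ :=
  B.image fun x => if RightAligned (series n τ (B.erase x)) then x + tn - n else x

/-- The simple bijection `φ_{n,ñ,d,p}` on sign functions. -/
noncomputable def phiFun (n tn : ℕ) (τ : Finset ℕ → Bool) : Finset ℕ → Bool :=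
  ofPlusSet {A | ∃ B, τ B = true ∧ A = gammaFun n tn τ B}
section DEV


lemma sc_cons₂ (x y : Bool) (t : List Bool) :
    signChanges (x :: y :: t) = (if x = y then 0 else 1) + signChanges (y :: t) := by
  by_cases h : x = y <;> simp [signChanges, h] <;> omega

lemma sc_tail (x : Bool) (t : List Bool) : signChanges t ≤ signChanges (x :: t) := by
  cases t with
  | nil => simp [signChanges]
  | cons y t' => rw [sc_cons₂]; omega

lemma sc_zero_const (l : List Bool) (h : signChanges l = 0) :
    ∀ c, (hc : c < l.length) → (h0 : 0 < l.length) → l[c] = l[0] := by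
  induction l with
  | nil => intro c hc; simp at hc
  | cons x t ih =>
    intro c hc h0
    match t, c with
    | _, 0 => rfl
    | [], c+1 => simp at hc
    | y :: t', c+1 =>
      rw [sc_cons₂] at h
      have hxy : x = y := by by_cases hxy : x = y; exact hxy; simp [hxy] at h
      have h' : signChanges (y :: t') = 0 := by omega
      have := ih h' c (by simpa using hc) (by simp)
      simpa [hxy] using this

lemma sc_core (l : List Bool) (h : signChanges l ≤ 1) :
    ∀ a b c, a ≤ b → b ≤ c →
      (ha : a < l.length) → (hb : b < l.length) → (hc : c < l.length) →
      l[a] = l[c] → l[b] = l[c] := by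
  induction l with
  | nil => intro a b c _ _ ha; simp at ha
  | cons x t ih =>
    intro a b c hab hbc ha hb hc hv
    match a, b, c with
    | 0, 0, c => exact hv
    | 0, b+1, c+1 =>
      match t with
      | [] => simp at hc
      | y :: t' =>
        rw [sc_cons₂] at h
        by_cases hxy : x = y
        · simp only [if_pos hxy] at h
          have hc' : c < (y :: t').length := by simpa using hc
          have hb' : b < (y :: t').length := by simpa using hb
          have hxv : x = (y :: t')[c]'hc' := by simpa using hv
          have h0 : (y :: t')[0]'(by simp) = (y :: t')[c]'hc' := by
            rw [hxy] at hxv; simpa using hxv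
          have := ih (by omega) 0 b c (by omega) (by omega) (by simp) hb' hc' h0
          simpa using this
        · simp only [if_neg hxy] at h
          have h' : signChanges (y :: t') = 0 := by omega
          have := sc_zero_const _ h' c (by simpa using hc) (by simp)
          simp only [List.getElem_cons_zero] at this
          simp only [List.getElem_cons_succ] at hv
          simp only [List.getElem_cons_zero] at hv
          rw [this] at hv
          exact absurd hv hxy
    | a+1, b+1, c+1 =>
      match t with
      | [] => simp at hc
      | y :: t' =>
        have h' : signChanges (y :: t') ≤ 1 := le_trans (sc_tail _ _) h
        have := ih h' a b c (by omega) (by omega) (by simpa using ha)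
          (by simpa using hb) (by simpa using hc) (by simpa using hv)
        simpa using this


lemma sort_getElem_rank (B : Finset ℕ) (m : ℕ) (hm : m < (B.sort (· ≤ ·)).length) :
    (B.filter (· ≤ (B.sort (· ≤ ·))[m])).card = m + 1 := by
  have hsort : (B.sort (· ≤ ·)).Pairwise (· < ·) := List.sortedLT_iff_pairwise.mp (Finset.sortedLT_sort B)
  have hpw := List.pairwise_iff_getElem.mp hsort
  have hnd : (B.sort (· ≤ ·)).Nodup := Finset.sort_nodup B _
  have hset : B.filter (· ≤ (B.sort (· ≤ ·))[m]) = ((B.sort (· ≤ ·)).take (m+1)).toFinset := by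
    ext z
    simp only [Finset.mem_filter, List.mem_toFinset]
    constructor
    · rintro ⟨hzB, hzle⟩
      have hzL : z ∈ B.sort (· ≤ ·) := (Finset.mem_sort _).mpr hzB
      obtain ⟨t, ht, rfl⟩ := List.mem_iff_getElem.mp hzL
      have htm : t ≤ m := by
        by_contra hgt
        exact absurd hzle (not_le.mpr (hpw m t hm ht (by omega)))
      have htake : t < ((B.sort (· ≤ ·)).take (m+1)).length := by
        rw [List.length_take]; omega
      have heq : ((B.sort (· ≤ ·)).take (m+1))[t]'htake = (B.sort (· ≤ ·))[t]'ht :=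
        List.getElem_take
      exact heq ▸ List.getElem_mem _
    · intro hz
      have hsub : z ∈ B.sort (· ≤ ·) := List.take_subset _ _ hz
      refine ⟨(Finset.mem_sort _).mp hsub, ?_⟩
      obtain ⟨t, ht, rfl⟩ := List.mem_iff_getElem.mp hz
      have ht' : t < m + 1 := by rw [List.length_take] at ht; omega
      have heq : ((B.sort (· ≤ ·)).take (m+1))[t]'ht = (B.sort (· ≤ ·))[t]'(by
          rw [List.length_take] at ht; omega) := List.getElem_take
      rw [heq]
      rcases Nat.lt_or_ge t m with h | h
      · exact le_of_lt (hpw t m (by omega) hm h)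
      · have : t = m := by omega
        subst this; exact le_refl _
  rw [hset, List.toFinset_card_of_nodup (List.Nodup.sublist (List.take_sublist _ _) hnd),
    List.length_take]
  omega

lemma nthElt_eq_getElem (B : Finset ℕ) (j : ℕ) (hj1 : 1 ≤ j) (hj2 : j ≤ B.card) :
    nthElt B j = (B.sort (· ≤ ·))[j-1]'(by rw [Finset.length_sort]; omega) :=
  List.getD_eq_getElem _ _ _

lemma nthElt_mem (B : Finset ℕ) (j : ℕ) (hj1 : 1 ≤ j) (hj2 : j ≤ B.card) :
    nthElt B j ∈ B := by
  rw [nthElt_eq_getElem B j hj1 hj2]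
  exact (Finset.mem_sort _).mp (List.getElem_mem _)

lemma rank_nthElt (B : Finset ℕ) (j : ℕ) (hj1 : 1 ≤ j) (hj2 : j ≤ B.card) :
    (B.filter (· ≤ nthElt B j)).card = j := by
  rw [nthElt_eq_getElem B j hj1 hj2, sort_getElem_rank]
  omega

lemma nthElt_of_rank (B : Finset ℕ) (b : ℕ) (hb : b ∈ B) :
    nthElt B ((B.filter (· ≤ b)).card) = b := by
  have hbL : b ∈ B.sort (· ≤ ·) := (Finset.mem_sort _).mpr hb
  obtain ⟨t, ht, rfl⟩ := List.mem_iff_getElem.mp hbL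
  rw [sort_getElem_rank B t ht]
  rw [nthElt_eq_getElem B (t+1) (by omega) (by rw [← Finset.length_sort (· ≤ ·)]; omega)]
  congr 1

lemma st6_rank_pos (B : Finset ℕ) (b : ℕ) (hb : b ∈ B) : 1 ≤ (B.filter (· ≤ b)).card :=
  Finset.card_pos.mpr ⟨b, Finset.mem_filter.mpr ⟨hb, le_refl _⟩⟩

lemma st6_rank_le_card (B : Finset ℕ) (b : ℕ) : (B.filter (· ≤ b)).card ≤ B.card :=
  Finset.card_le_card (Finset.filter_subset _ _)

lemma rank_lt_rank (B : Finset ℕ) {z z' : ℕ} (hz' : z' ∈ B) (h : z < z') :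
    (B.filter (· ≤ z)).card < (B.filter (· ≤ z')).card := by
  apply Finset.card_lt_card
  constructor
  · intro w hw
    simp only [Finset.mem_filter] at hw ⊢
    exact ⟨hw.1, le_trans hw.2 (le_of_lt h)⟩
  · intro hsub
    have := hsub (Finset.mem_filter.mpr ⟨hz', le_refl _⟩)
    simp only [Finset.mem_filter] at this
    omega

lemma lt_of_rank_lt (B : Finset ℕ) {z z' : ℕ} (hz : z ∈ B)
    (h : (B.filter (· ≤ z)).card < (B.filter (· ≤ z')).card) : z < z' := by
  by_contra hge
  push_neg at hge
  rcases Nat.lt_or_ge z' z with h' | h'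
  · exact absurd (rank_lt_rank B hz h') (by omega)
  · have : z = z' := by omega
    subst this; omega

lemma rank_le_self {n : ℕ} (B : Finset ℕ) (hB : B ⊆ Finset.Icc 1 n) (b : ℕ) :
    (B.filter (· ≤ b)).card ≤ b := by
  have hsub : B.filter (· ≤ b) ⊆ Finset.Icc 1 b := by
    intro z hz
    simp only [Finset.mem_filter] at hz
    have := Finset.mem_Icc.mp (hB hz.1)
    exact Finset.mem_Icc.mpr ⟨this.1, hz.2⟩
  calc (B.filter (· ≤ b)).card ≤ (Finset.Icc 1 b).card := Finset.card_le_card hsub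
  _ = b := by rw [Nat.card_Icc]; omega

lemma filter_le_insert_erase (B : Finset ℕ) (b : ℕ) (hb : b ∈ B) :
    B.filter (· ≤ b) = insert b ((B.erase b).filter (· ≤ b)) := by
  ext z
  simp only [Finset.mem_filter, Finset.mem_insert, Finset.mem_erase]
  constructor
  · rintro ⟨hzB, hzle⟩
    by_cases hzb : z = b
    · exact Or.inl hzb
    · exact Or.inr ⟨⟨hzb, hzB⟩, hzle⟩
  · rintro (rfl | ⟨⟨_, hzB⟩, hzle⟩)
    · exact ⟨hb, le_refl _⟩
    · exact ⟨hzB, hzle⟩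

lemma card_filter_erase_le (B : Finset ℕ) (b : ℕ) (hb : b ∈ B) :
    ((B.erase b).filter (· ≤ b)).card + 1 = (B.filter (· ≤ b)).card := by
  rw [filter_le_insert_erase B b hb,
    Finset.card_insert_of_notMem (by simp)]

lemma card_filter_erase_ge (B : Finset ℕ) (b : ℕ) (hb : b ∈ B) :
    ((B.erase b).filter (fun z => b ≤ z)).card + (B.filter (· ≤ b)).card = B.card := by
  have h1 : (B.erase b).filter (fun z => b ≤ z) = B.filter (fun z => ¬ z ≤ b) := by
    ext z
    simp only [Finset.mem_filter, Finset.mem_erase]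
    constructor
    · rintro ⟨⟨hzb, hzB⟩, hge⟩; exact ⟨hzB, by omega⟩
    · rintro ⟨hzB, hgt⟩; exact ⟨⟨by omega, hzB⟩, by omega⟩
  rw [h1, Nat.add_comm]
  exact Finset.card_filter_add_card_filter_not _



lemma st6_head?_getElem {α : Type*} (l : List α) (h0 : 0 < l.length) :
    l.head? = some (l[0]'h0) := by
  rw [List.head?_eq_head (List.length_pos_iff.mp h0), List.head_eq_getElem]

lemma st6_getLast?_getElem {α : Type*} (l : List α) (h0 : 0 < l.length) :
    l.getLast? = some (l[l.length - 1]'(by omega)) := by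
  rw [List.getLast?_eq_getLast (List.length_pos_iff.mp h0), List.getLast_eq_getElem]

lemma st6_getElem_congr {α : Type*} (l : List α) (a b : ℕ) (ha : a < l.length) (hab : a = b) :
    l[a]'ha = l[b]'(hab ▸ ha) := by subst hab; rfl

lemma st6_head?_map_getElem (L : List ℕ) (f : ℕ → Bool) (h0 : 0 < L.length) :
    (L.map f).head? = some (f (L[0]'h0)) := by
  rw [st6_head?_getElem _ (by rw [List.length_map]; omega)]
  congr 1
  rw [List.getElem_map]

lemma st6_getLast?_map_getElem (L : List ℕ) (f : ℕ → Bool) (h0 : 0 < L.length) :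
    (L.map f).getLast? = some (f (L[L.length - 1]'(by omega))) := by
  rw [st6_getLast?_getElem _ (by rw [List.length_map]; omega)]
  congr 1
  rw [List.getElem_map]
  congr 1
  exact st6_getElem_congr L _ _ (by rw [List.length_map] at *; omega) (by rw [List.length_map])

section Lists

variable (L : List ℕ) (f : ℕ → Bool)

lemma st6_list_dichotomy (hsort : L.Pairwise (· < ·))
    (hch : signChanges (L.map f) ≤ 1)
    (x0 : ℕ) (hx0 : x0 ∈ L) (hx0t : f x0 = true)
    (hnall : ¬ ∀ x ∈ L, f x = true) :
    LeftAligned (L.map f) ∨ RightAligned (L.map f) := by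
  have hlen : (L.map f).length = L.length := List.length_map _
  obtain ⟨q0, hq0, hq0e⟩ := List.mem_iff_getElem.mp hx0
  have hpos : 0 < L.length := by omega
  have hserq0 : (L.map f)[q0]'(by omega) = true := by
    rw [List.getElem_map, hq0e]; exact hx0t
  have hhead : (L.map f).head? = some ((L.map f)[0]'(by omega)) :=
    st6_head?_getElem _ (by omega)
  have hlast : (L.map f).getLast? =
      some ((L.map f)[(L.map f).length - 1]'(by omega)) :=
    st6_getLast?_getElem _ (by omega)
  by_cases heq : (L.map f)[0]'(by omega) = (L.map f)[(L.map f).length - 1]'(by omega)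
  · exfalso
    apply hnall
    intro x hx
    obtain ⟨q, hq, hqe⟩ := List.mem_iff_getElem.mp hx
    have h1 : (L.map f)[q]'(by omega) = (L.map f)[(L.map f).length - 1]'(by omega) :=
      sc_core _ hch 0 q ((L.map f).length - 1) (by omega) (by omega) (by omega)
        (by omega) (by omega) heq
    have h2 : (L.map f)[q0]'(by omega) = (L.map f)[(L.map f).length - 1]'(by omega) :=
      sc_core _ hch 0 q0 ((L.map f).length - 1) (by omega) (by omega) (by omega)
        (by omega) (by omega) heq
    have h3 : (L.map f)[q]'(by omega) = true := by rw [h1, ← h2]; exact hserq0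
    rw [List.getElem_map, hqe] at h3
    exact h3
  · rcases Bool.eq_false_or_eq_true ((L.map f)[0]'(by omega)) with h0 | h0 <;>
      rcases Bool.eq_false_or_eq_true ((L.map f)[(L.map f).length - 1]'(by omega)) with h1 | h1
    · exact absurd (h0.trans h1.symm) heq
    · left; exact ⟨by rw [hhead, h0], by rw [hlast, h1]⟩
    · right; exact ⟨by rw [hhead, h0], by rw [hlast, h1]⟩
    · exact absurd (h0.trans h1.symm) heq

lemma st6_list_prefix (hsort : L.Pairwise (· < ·))
    (hch : signChanges (L.map f) ≤ 1) (hLa : LeftAligned (L.map f))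
    (x0 : ℕ) (hx0 : x0 ∈ L) (hx0t : f x0 = true) :
    ∀ y ∈ L, y ≤ x0 → f y = true := by
  intro y hy hyx
  have hlen : (L.map f).length = L.length := List.length_map _
  obtain ⟨q0, hq0, hq0e⟩ := List.mem_iff_getElem.mp hx0
  obtain ⟨q, hq, hqe⟩ := List.mem_iff_getElem.mp hy
  have hserq0 : (L.map f)[q0]'(by omega) = true := by
    rw [List.getElem_map, hq0e]; exact hx0t
  have hqq0 : q ≤ q0 := by
    by_contra hgt
    have := List.pairwise_iff_getElem.mp hsort q0 q hq0 hq (by omega)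
    rw [hq0e, hqe] at this
    omega
  have hhead : (L.map f)[0]'(by omega) = true := by
    have h := st6_head?_getElem (L.map f) (by omega)
    rw [hLa.1] at h
    exact (Option.some_injective _ h).symm
  have h2 := sc_core _ hch 0 q q0 (by omega) hqq0 (by omega) (by omega) (by omega)
    (by rw [hhead, hserq0])
  rw [hserq0] at h2
  rw [List.getElem_map, hqe] at h2
  exact h2

lemma st6_list_suffix (hsort : L.Pairwise (· < ·))
    (hch : signChanges (L.map f) ≤ 1) (hRa : RightAligned (L.map f))
    (x0 : ℕ) (hx0 : x0 ∈ L) (hx0t : f x0 = true) :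
    ∀ y ∈ L, x0 ≤ y → f y = true := by
  intro y hy hyx
  have hlen : (L.map f).length = L.length := List.length_map _
  obtain ⟨q0, hq0, hq0e⟩ := List.mem_iff_getElem.mp hx0
  obtain ⟨q, hq, hqe⟩ := List.mem_iff_getElem.mp hy
  have hserq0 : (L.map f)[q0]'(by omega) = true := by
    rw [List.getElem_map, hq0e]; exact hx0t
  have hqq0 : q0 ≤ q := by
    by_contra hgt
    have := List.pairwise_iff_getElem.mp hsort q q0 hq hq0 (by omega)
    rw [hq0e, hqe] at this
    omega
  have hlast : (L.map f)[(L.map f).length - 1]'(by omega) = true := by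
    have h := st6_getLast?_getElem (L.map f) (by omega)
    rw [hRa.2] at h
    exact (Option.some_injective _ h).symm
  have h2 := sc_core _ hch q0 q ((L.map f).length - 1) hqq0 (by omega) (by omega)
    (by omega) (by omega) (by rw [hlast, hserq0])
  rw [hlast] at h2
  rw [List.getElem_map, hqe] at h2
  exact h2

end Lists

section Part4

lemma st6_plus_bound (n d : ℕ) (τ : Finset ℕ → Bool)
    (hτ1 : ∀ A, τ A = true → A ⊆ Finset.Icc 1 n ∧ A.card = d)
    (F : Finset (Finset ℕ)) (hF : ∀ A ∈ F, τ A = true) : F.card ≤ plusCount τ := by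
  have hfin : {A : Finset ℕ | τ A = true}.Finite := by
    apply Set.Finite.subset (Finset.Icc 1 n).powerset.finite_toSet
    intro A hA
    exact Finset.mem_coe.mpr (Finset.mem_powerset.mpr (hτ1 A hA).1)
  calc F.card = (↑F : Set (Finset ℕ)).ncard := (Set.ncard_coe_finset F).symm
    _ ≤ _ := Set.ncard_le_ncard (fun A hA => hF A (Finset.mem_coe.mp hA)) hfin

lemma st6_not_all_plus (n d p : ℕ) (τ : Finset ℕ → Bool)
    (hτ1 : ∀ A, τ A = true → A ⊆ Finset.Icc 1 n ∧ A.card = d)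
    (hp : plusCount τ = p) (hpd : p + d ≤ n) (hd : 1 ≤ d)
    (C : Finset ℕ) (hC : C ⊆ Finset.Icc 1 n) (hCcard : C.card = d - 1)
    (hall : ∀ x ∈ Finset.Icc 1 n \ C, τ (insert x C) = true) : False := by
  have hinj : Set.InjOn (fun x => insert x C) ↑(Finset.Icc 1 n \ C) := by
    intro a ha b hb hab
    have haC : a ∉ C := (Finset.mem_sdiff.mp (Finset.mem_coe.mp ha)).2
    have hab' : insert a C = insert b C := hab
    have : a ∈ insert b C := by rw [← hab']; exact Finset.mem_insert_self a C
    rcases Finset.mem_insert.mp this with h | h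
    · exact h
    · exact absurd h haC
  have hcard : ((Finset.Icc 1 n \ C).image (fun x => insert x C)).card = n - (d-1) := by
    rw [Finset.card_image_of_injOn hinj, Finset.card_sdiff_of_subset hC, Nat.card_Icc, hCcard]
    omega
  have hb := st6_plus_bound n d τ hτ1 ((Finset.Icc 1 n \ C).image (fun x => insert x C)) (by
    intro A hA
    obtain ⟨x, hx, rfl⟩ := Finset.mem_image.mp hA
    exact hall x hx)
  have hdn : d - 1 ≤ n := by omega
  omega

lemma st6_series_eq (n : ℕ) (τ : Finset ℕ → Bool) (C : Finset ℕ) :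
    series n τ C = ((Finset.Icc 1 n \ C).sort (· ≤ ·)).map (fun x => τ (insert x C)) := rfl

lemma st6_series_facts (n d p : ℕ) (τ : Finset ℕ → Bool) (hτ : IsCoSignotope n d τ)
    (hp : plusCount τ = p) (hpd : p + d ≤ n)
    (B : Finset ℕ) (hB : τ B = true) (b : ℕ) (hb : b ∈ B) :
    (LeftAligned (series n τ (B.erase b)) ∨ RightAligned (series n τ (B.erase b))) ∧
    (LeftAligned (series n τ (B.erase b)) →
      ∀ v, v ∈ Finset.Icc 1 n → v ∉ B.erase b → v ≤ b → τ (insert v (B.erase b)) = true) ∧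
    (RightAligned (series n τ (B.erase b)) →
      ∀ v, v ∈ Finset.Icc 1 n → v ∉ B.erase b → b ≤ v → τ (insert v (B.erase b)) = true) := by
  obtain ⟨hτ1, hτ2⟩ := hτ
  obtain ⟨hBsub, hBcard⟩ := hτ1 B hB
  have hd : 1 ≤ d := by
    rw [← hBcard]
    exact Finset.card_pos.mpr ⟨b, hb⟩
  have hCsub : B.erase b ⊆ Finset.Icc 1 n := (Finset.erase_subset _ _).trans hBsub
  have hCcard : (B.erase b).card = d - 1 := by rw [Finset.card_erase_of_mem hb, hBcard]
  have hch : signChanges (series n τ (B.erase b)) ≤ 1 := hτ2 B hBsub hBcard b hb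
  rw [st6_series_eq] at hch ⊢
  have hsort := List.sortedLT_iff_pairwise.mp (Finset.sortedLT_sort (Finset.Icc 1 n \ B.erase b))
  have hbmem : b ∈ (Finset.Icc 1 n \ B.erase b).sort (· ≤ ·) := by
    rw [Finset.mem_sort]
    exact Finset.mem_sdiff.mpr ⟨hBsub hb, Finset.notMem_erase b B⟩
  have hbt : τ (insert b (B.erase b)) = true := by rw [Finset.insert_erase hb]; exact hB
  have hmem : ∀ v, v ∈ Finset.Icc 1 n → v ∉ B.erase b →
      v ∈ (Finset.Icc 1 n \ B.erase b).sort (· ≤ ·) := by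
    intro v h1 h2
    rw [Finset.mem_sort]
    exact Finset.mem_sdiff.mpr ⟨h1, h2⟩
  refine ⟨?_, ?_, ?_⟩
  · apply st6_list_dichotomy _ _ hsort hch b hbmem hbt
    intro hall
    apply st6_not_all_plus n d p τ hτ1 hp hpd hd (B.erase b) hCsub hCcard
    intro x hx
    exact hall x ((Finset.mem_sort _).mpr hx)
  · intro hLa v h1 h2 h3
    exact st6_list_prefix _ _ hsort hch hLa b hbmem hbt v (hmem v h1 h2) h3
  · intro hRa v h1 h2 h3
    exact st6_list_suffix _ _ hsort hch hRa b hbmem hbt v (hmem v h1 h2) h3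

end Part4

section Part5

lemma st6_insert_injOn (C : Finset ℕ) (s : Finset ℕ) (hs : ∀ v ∈ s, v ∉ C) :
    Set.InjOn (fun v => insert v C) ↑s := by
  intro a ha b hb hab
  have hab' : insert a C = insert b C := hab
  have haC : a ∉ C := hs a (Finset.mem_coe.mp ha)
  have : a ∈ insert b C := by rw [← hab']; exact Finset.mem_insert_self a C
  rcases Finset.mem_insert.mp this with h | h
  · exact h
  · exact absurd h haC

lemma st6_filter_swap_lt (Bm : Finset ℕ) (x y z z' : ℕ) (hx : x ∈ Bm) (hy : y ∉ Bm)
    (hcong : ∀ w ∈ Bm.erase x, (w ≤ z' ↔ w ≤ z)) (hxz : x ≤ z) (hyz' : y ≤ z') :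
    ((insert y (Bm.erase x)).filter (· ≤ z')).card = (Bm.filter (· ≤ z)).card := by
  have h1 : Bm.filter (· ≤ z) = insert x ((Bm.erase x).filter (· ≤ z)) := by
    ext w
    simp only [Finset.mem_filter, Finset.mem_insert, Finset.mem_erase]
    constructor
    · rintro ⟨hwB, hwz⟩
      by_cases hwx : w = x
      · exact Or.inl hwx
      · exact Or.inr ⟨⟨hwx, hwB⟩, hwz⟩
    · rintro (rfl | ⟨⟨hwx, hwB⟩, hwz⟩)
      · exact ⟨hx, hxz⟩
      · exact ⟨hwB, hwz⟩
  have h2 : (insert y (Bm.erase x)).filter (· ≤ z') =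
      insert y ((Bm.erase x).filter (· ≤ z')) := by
    rw [Finset.filter_insert, if_pos hyz']
  have h3 : (Bm.erase x).filter (· ≤ z') = (Bm.erase x).filter (· ≤ z) :=
    Finset.filter_congr (fun w hw => by simpa using hcong w hw)
  rw [h1, h2, h3, Finset.card_insert_of_notMem (by simp [hy]),
    Finset.card_insert_of_notMem (by simp)]

lemma st6_filter_swap_gt (Bm : Finset ℕ) (x y z z' : ℕ) (hx : x ∈ Bm) (hy : y ∉ Bm)
    (hcong : ∀ w ∈ Bm.erase x, (w ≤ z' ↔ w ≤ z)) (hxz : ¬ x ≤ z) (hyz' : ¬ y ≤ z') :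
    ((insert y (Bm.erase x)).filter (· ≤ z')).card = (Bm.filter (· ≤ z)).card := by
  have h1 : Bm.filter (· ≤ z) = (Bm.erase x).filter (· ≤ z) := by
    ext w
    simp only [Finset.mem_filter, Finset.mem_erase]
    constructor
    · rintro ⟨hwB, hwz⟩
      refine ⟨⟨?_, hwB⟩, hwz⟩
      rintro rfl; exact hxz hwz
    · rintro ⟨⟨_, hwB⟩, hwz⟩; exact ⟨hwB, hwz⟩
  have h2 : (insert y (Bm.erase x)).filter (· ≤ z') = (Bm.erase x).filter (· ≤ z') := by
    rw [Finset.filter_insert, if_neg hyz']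
  have h3 : (Bm.erase x).filter (· ≤ z') = (Bm.erase x).filter (· ≤ z) :=
    Finset.filter_congr (fun w hw => by simpa using hcong w hw)
  rw [h1, h2, h3]

lemma st6_two_sided (n d p : ℕ) (τ : Finset ℕ → Bool)
    (hτ1 : ∀ A, τ A = true → A ⊆ Finset.Icc 1 n ∧ A.card = d)
    (hp : plusCount τ = p) (hpd : p + d ≤ n)
    (B B' : Finset ℕ) (hB : τ B = true) (hB' : τ B' = true)
    (b x y : ℕ) (hbB : b ∈ B) (hxB : x ∈ B) (hyB : y ∉ B)
    (hxb : x ≠ b) (hyb : y ≠ b) (hBeq : B' = insert y (B.erase x))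
    (hside : x < b ↔ y < b)
    (h1 : ∀ v, v ∈ Finset.Icc 1 n → v ∉ B.erase b → v ≤ b → τ (insert v (B.erase b)) = true)
    (h2 : ∀ w, w ∈ Finset.Icc 1 n → w ∉ B'.erase b → b ≤ w → τ (insert w (B'.erase b)) = true) :
    False := by
  obtain ⟨hBsub, hBcard⟩ := hτ1 B hB
  obtain ⟨hB'sub, hB'card⟩ := hτ1 B' hB'
  have hbB' : b ∈ B' := by
    rw [hBeq]
    exact Finset.mem_insert_of_mem (Finset.mem_erase.mpr ⟨Ne.symm hxb, hbB⟩)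
  obtain ⟨hb1, hb2⟩ := Finset.mem_Icc.mp (hBsub hbB)
  have hr1 : 1 ≤ (B.filter (· ≤ b)).card := st6_rank_pos B b hbB
  have hrd : (B.filter (· ≤ b)).card ≤ d := hBcard ▸ st6_rank_le_card B b
  have hrb : (B.filter (· ≤ b)).card ≤ b := rank_le_self B hBsub b
  have hdr : d - (B.filter (· ≤ b)).card ≤ n - b := by
    have hsub2 : B.filter (fun z => ¬ z ≤ b) ⊆ Finset.Icc (b+1) n := by
      intro w hw
      obtain ⟨hwB, hwb⟩ := Finset.mem_filter.mp hw
      have := Finset.mem_Icc.mp (hBsub hwB)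
      exact Finset.mem_Icc.mpr ⟨by omega, this.2⟩
    have hcount := Finset.card_filter_add_card_filter_not (s := B) (p := (· ≤ b))
    have hle := Finset.card_le_card hsub2
    rw [Nat.card_Icc] at hle
    omega
  have hr' : (B'.filter (· ≤ b)).card = (B.filter (· ≤ b)).card := by
    rw [hBeq]
    by_cases hxlt : x < b
    · exact st6_filter_swap_lt B x y b b hxB hyB (fun w _ => Iff.rfl)
        (le_of_lt hxlt) (le_of_lt (hside.mp hxlt))
    · have hygt : ¬ y < b := fun h => hxlt (hside.mpr h)
      exact st6_filter_swap_gt B x y b b hxB hyB (fun w _ => Iff.rfl)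
        (by omega) (by omega)
  have hD1card : (Finset.Icc 1 b \ (B.erase b)).card = b - ((B.filter (· ≤ b)).card - 1) := by
    have hint : Finset.Icc 1 b ∩ (B.erase b) = (B.erase b).filter (· ≤ b) := by
      ext w
      simp only [Finset.mem_inter, Finset.mem_Icc, Finset.mem_filter, Finset.mem_erase]
      constructor
      · rintro ⟨⟨_, hw2⟩, hw3⟩; exact ⟨hw3, hw2⟩
      · rintro ⟨⟨hwb, hwB⟩, hw2⟩
        have := Finset.mem_Icc.mp (hBsub hwB)
        exact ⟨⟨this.1, hw2⟩, ⟨hwb, hwB⟩⟩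
    have hci := Finset.card_inter_add_card_sdiff (Finset.Icc 1 b) (B.erase b)
    rw [hint] at hci
    have h4 := card_filter_erase_le B b hbB
    rw [Nat.card_Icc] at hci
    omega
  have hD2card : (Finset.Icc b n \ (B'.erase b)).card
      = (n + 1 - b) - (d - (B.filter (· ≤ b)).card) := by
    have hint : Finset.Icc b n ∩ (B'.erase b) = (B'.erase b).filter (fun z => b ≤ z) := by
      ext w
      simp only [Finset.mem_inter, Finset.mem_Icc, Finset.mem_filter, Finset.mem_erase]
      constructor
      · rintro ⟨⟨hw1, _⟩, hw3⟩; exact ⟨hw3, hw1⟩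
      · rintro ⟨⟨hwb, hwB⟩, hw2⟩
        have := Finset.mem_Icc.mp (hB'sub hwB)
        exact ⟨⟨hw2, this.2⟩, ⟨hwb, hwB⟩⟩
    have hci := Finset.card_inter_add_card_sdiff (Finset.Icc b n) (B'.erase b)
    rw [hint] at hci
    have h4 := card_filter_erase_ge B' b hbB'
    rw [hr', hB'card] at h4
    rw [Nat.card_Icc] at hci
    omega
  have hF1card : ((Finset.Icc 1 b \ (B.erase b)).image (fun v => insert v (B.erase b))).card
      = b - ((B.filter (· ≤ b)).card - 1) := by
    rw [Finset.card_image_of_injOn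
      (st6_insert_injOn _ _ (fun v hv => (Finset.mem_sdiff.mp hv).2)), hD1card]
  have hF2card : ((Finset.Icc b n \ (B'.erase b)).image (fun w => insert w (B'.erase b))).card
      = (n + 1 - b) - (d - (B.filter (· ≤ b)).card) := by
    rw [Finset.card_image_of_injOn
      (st6_insert_injOn _ _ (fun v hv => (Finset.mem_sdiff.mp hv).2)), hD2card]
  have hdisj : Disjoint ((Finset.Icc 1 b \ (B.erase b)).image (fun v => insert v (B.erase b)))
      ((Finset.Icc b n \ (B'.erase b)).image (fun w => insert w (B'.erase b))) := by
    rw [Finset.disjoint_left]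
    intro A hA1 hA2
    obtain ⟨v, hv, rfl⟩ := Finset.mem_image.mp hA1
    obtain ⟨w, hw, heq⟩ := Finset.mem_image.mp hA2
    have heq' : insert w (B'.erase b) = insert v (B.erase b) := heq
    have hyB' : y ∈ B'.erase b := by
      rw [hBeq]; exact Finset.mem_erase.mpr ⟨hyb, Finset.mem_insert_self y _⟩
    have hxBe : x ∈ B.erase b := Finset.mem_erase.mpr ⟨hxb, hxB⟩
    have hxnB' : x ∉ B' := by
      rw [hBeq]
      intro hmem
      rcases Finset.mem_insert.mp hmem with h | h
      · exact hyB (h ▸ hxB)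
      · exact (Finset.mem_erase.mp h).1 rfl
    have hynB : y ∉ B.erase b := fun h => hyB (Finset.mem_erase.mp h).2
    have hyv : y = v := by
      have hmem : y ∈ insert v (B.erase b) := by
        rw [← heq']; exact Finset.mem_insert_of_mem hyB'
      rcases Finset.mem_insert.mp hmem with h | h
      · exact h
      · exact absurd h hynB
    have hxw : x = w := by
      have hmem : x ∈ insert w (B'.erase b) := by
        rw [heq']; exact Finset.mem_insert_of_mem hxBe
      rcases Finset.mem_insert.mp hmem with h | h
      · exact h
      · exact absurd (Finset.mem_erase.mp h).2 hxnB'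
    have hvb : v ≤ b := (Finset.mem_Icc.mp (Finset.mem_sdiff.mp hv).1).2
    have hwb : b ≤ w := (Finset.mem_Icc.mp (Finset.mem_sdiff.mp hw).1).1
    have hylt : y < b := by omega
    have hxlt : x < b := hside.mpr hylt
    omega
  have hunion : ∀ A ∈ ((Finset.Icc 1 b \ (B.erase b)).image (fun v => insert v (B.erase b))) ∪
      ((Finset.Icc b n \ (B'.erase b)).image (fun w => insert w (B'.erase b))), τ A = true := by
    intro A hA
    rcases Finset.mem_union.mp hA with h | h
    · obtain ⟨v, hv, rfl⟩ := Finset.mem_image.mp h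
      obtain ⟨hvI, hvC⟩ := Finset.mem_sdiff.mp hv
      have hIcc := Finset.mem_Icc.mp hvI
      exact h1 v (Finset.mem_Icc.mpr ⟨hIcc.1, le_trans hIcc.2 hb2⟩) hvC hIcc.2
    · obtain ⟨w, hw, rfl⟩ := Finset.mem_image.mp h
      obtain ⟨hwI, hwC⟩ := Finset.mem_sdiff.mp hw
      have hIcc := Finset.mem_Icc.mp hwI
      exact h2 w (Finset.mem_Icc.mpr ⟨by omega, hIcc.2⟩) hwC hIcc.1
  have hbound := st6_plus_bound n d τ hτ1 _ hunion
  rw [Finset.card_union_of_disjoint hdisj, hF1card, hF2card] at hbound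
  omega

end Part5

section Part6

def INVp (n d i : ℕ) (τ : Finset ℕ → Bool) (B : Finset ℕ) : Prop :=
  ∀ j, 1 ≤ j → j ≤ d →
    (j ≤ i → LeftAligned (series n τ (B.erase (nthElt B j)))) ∧
    (i + 1 ≤ j → RightAligned (series n τ (B.erase (nthElt B j))))

lemma st6_btw_le_iff (x y w : ℕ) (hnb : ¬(min x y < w ∧ w < max x y))
    (hwx : w ≠ x) (hwy : w ≠ y) : (w ≤ y ↔ w ≤ x) := by
  rcases le_total x y with h | h
  · rw [min_eq_left h, max_eq_right h] at hnb; omega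
  · rw [min_eq_right h, max_eq_left h] at hnb; omega

lemma st6_side (x y w : ℕ) (hnb : ¬(min x y < w ∧ w < max x y))
    (hwx : w ≠ x) (hwy : w ≠ y) : (x < w ↔ y < w) := by
  rcases le_total x y with h | h
  · rw [min_eq_left h, max_eq_right h] at hnb; omega
  · rw [min_eq_right h, max_eq_left h] at hnb; omega

lemma st6_sort_head (s : Finset ℕ) (m : ℕ) (hm : m ∈ s) (hmin : ∀ v ∈ s, m ≤ v) :
    ∃ h0 : 0 < (s.sort (· ≤ ·)).length, (s.sort (· ≤ ·))[0]'h0 = m := by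
  have hmem := (Finset.mem_sort (α := ℕ) (· ≤ ·)).mpr hm
  obtain ⟨t, ht, hte⟩ := List.mem_iff_getElem.mp hmem
  refine ⟨by omega, ?_⟩
  have h0 : (s.sort (· ≤ ·))[0]'(by omega) ∈ s := (Finset.mem_sort _).mp (List.getElem_mem _)
  have h1 : m ≤ (s.sort (· ≤ ·))[0]'(by omega) := hmin _ h0
  rcases Nat.eq_or_lt_of_le (Nat.zero_le t) with h | h
  · rw [← hte]; congr 1
  · have h2 := List.pairwise_iff_getElem.mp (List.sortedLT_iff_pairwise.mp (Finset.sortedLT_sort s)) 0 t (by omega) ht h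
    rw [hte] at h2; omega

lemma st6_sort_last (s : Finset ℕ) (m : ℕ) (hm : m ∈ s) (hmax : ∀ v ∈ s, v ≤ m) :
    ∃ h0 : 0 < (s.sort (· ≤ ·)).length,
      (s.sort (· ≤ ·))[(s.sort (· ≤ ·)).length - 1]'(by omega) = m := by
  have hmem := (Finset.mem_sort (α := ℕ) (· ≤ ·)).mpr hm
  obtain ⟨t, ht, hte⟩ := List.mem_iff_getElem.mp hmem
  refine ⟨by omega, ?_⟩
  have h0 : (s.sort (· ≤ ·))[(s.sort (· ≤ ·)).length - 1]'(by omega) ∈ s :=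
    (Finset.mem_sort _).mp (List.getElem_mem _)
  have h1 : (s.sort (· ≤ ·))[(s.sort (· ≤ ·)).length - 1]'(by omega) ≤ m := hmax _ h0
  rcases Nat.eq_or_lt_of_le (Nat.le_sub_one_of_lt ht) with h | h
  · rw [← hte]; congr 1; omega
  · have h2 := List.pairwise_iff_getElem.mp (List.sortedLT_iff_pairwise.mp (Finset.sortedLT_sort s)) t
      ((s.sort (· ≤ ·)).length - 1) ht (by omega) h
    rw [hte] at h2; omega

lemma st6_inv_step (n d p i : ℕ) (τ : Finset ℕ → Bool) (hτ : IsCoSignotope n d τ)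
    (hp : plusCount τ = p) (hpd : p + d ≤ n) (Bm Bc : Finset ℕ)
    (hBm : τ Bm = true) (hBc : τ Bc = true)
    (hadj : GAdj n d Bm Bc) (hINV : INVp n d i τ Bm) : INVp n d i τ Bc := by
  obtain ⟨hBmI, hBmc, hBcI, hBcc, x, hx, y, hyI, hyn, hBeq, hbtw⟩ := hadj
  intro j hj1 hjd
  have hb'mem : nthElt Bc j ∈ Bc := nthElt_mem Bc j hj1 (by omega)
  set b' := nthElt Bc j with hb'
  have hxy : x ≠ y := fun h => hyn (h ▸ hx)
  have hynotBme : y ∉ Bm.erase x := fun h => hyn (Finset.mem_erase.mp h).2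
  have herase : Bc.erase y = Bm.erase x := by
    rw [hBeq, Finset.erase_insert hynotBme]
  by_cases hb'y : b' = y
  · -- the swapped index
    have hrxy : ((insert y (Bm.erase x)).filter (· ≤ y)).card = (Bm.filter (· ≤ x)).card := by
      apply st6_filter_swap_lt Bm x y x y hx hyn ?_ (le_refl x) (le_refl y)
      intro w hw
      exact st6_btw_le_iff x y w (hbtw w hw) (Finset.mem_erase.mp hw).1
        (fun h => hyn (h ▸ (Finset.mem_erase.mp hw).2))
    have hrky : (Bc.filter (· ≤ y)).card = j := by
      have := rank_nthElt Bc j hj1 (by omega)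
      rw [← hb', hb'y] at this
      exact this
    have hrkx : (Bm.filter (· ≤ x)).card = j := by
      rw [← hrxy, ← hBeq, hrky]
    have hnx : nthElt Bm j = x := by rw [← hrkx]; exact nthElt_of_rank Bm x hx
    have hIj := hINV j hj1 hjd
    rw [hnx] at hIj
    rw [hb'y, herase]
    exact hIj
  · -- other indices
    have hb'Bm : b' ∈ Bm.erase x := by
      have hmem := hb'mem
      rw [hBeq] at hmem
      rcases Finset.mem_insert.mp hmem with h | h
      · exact absurd h hb'y
      · exact h
    have hb'x : b' ≠ x := (Finset.mem_erase.mp hb'Bm).1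
    have hb'Bm' : b' ∈ Bm := (Finset.mem_erase.mp hb'Bm).2
    have hside : x < b' ↔ y < b' :=
      st6_side x y b' (hbtw b' hb'Bm) hb'x hb'y
    have hrank : (Bc.filter (· ≤ b')).card = (Bm.filter (· ≤ b')).card := by
      rw [hBeq]
      by_cases hxlt : x < b'
      · have hylt := hside.mp hxlt
        exact st6_filter_swap_lt Bm x y b' b' hx hyn (fun w _ => Iff.rfl)
          (by omega) (by omega)
      · have hynlt : ¬ y < b' := fun h => hxlt (hside.mpr h)
        exact st6_filter_swap_gt Bm x y b' b' hx hyn (fun w _ => Iff.rfl)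
          (by omega) (by omega)
    have hrkc : (Bc.filter (· ≤ b')).card = j := by
      have := rank_nthElt Bc j hj1 (by omega)
      rw [← hb'] at this
      exact this
    have hnmj : nthElt Bm j = b' := by
      have hr : (Bm.filter (· ≤ b')).card = j := by omega
      rw [← hr]
      exact nthElt_of_rank Bm b' hb'Bm'
    have hIj := hINV j hj1 hjd
    rw [hnmj] at hIj
    have hfc := st6_series_facts n d p τ hτ hp hpd Bc hBc b' hb'mem
    have hfm := st6_series_facts n d p τ hτ hp hpd Bm hBm b' hb'Bm'
    have hxnBc : x ∉ Bc := by
      rw [hBeq]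
      intro hmem
      rcases Finset.mem_insert.mp hmem with h | h
      · exact hyn (h ▸ hx)
      · exact (Finset.mem_erase.mp h).1 rfl
    have hyBc : y ∈ Bc := by rw [hBeq]; exact Finset.mem_insert_self y _
    have hBeq' : Bm = insert x (Bc.erase y) := by
      rw [herase, Finset.insert_erase hx]
    constructor
    · intro hji
      have hLm := hIj.1 hji
      rcases hfc.1 with hc | hc
      · exact hc
      · exfalso
        exact st6_two_sided n d p τ hτ.1 hp hpd Bm Bc hBm hBc b' x y hb'Bm' hx hyn
          (Ne.symm hb'x) (Ne.symm hb'y) hBeq hside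
          (hfm.2.1 hLm) (hfc.2.2 hc)
    · intro hij
      have hRm := hIj.2 hij
      rcases hfc.1 with hc | hc
      · exfalso
        exact st6_two_sided n d p τ hτ.1 hp hpd Bc Bm hBc hBm b' y x hb'mem hyBc hxnBc
          (Ne.symm hb'y) (Ne.symm hb'x) hBeq' hside.symm
          (hfc.2.1 hc) (hfm.2.2 hRm)
      · exact hc

lemma st6_source_nth_low (n d i j : ℕ) (hdn : d < n) (hi : i ≤ d)
    (hj1 : 1 ≤ j) (hji : j ≤ i) : nthElt (sourceSubset n d i) j = j := by
  have hjmem : j ∈ sourceSubset n d i :=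
    Finset.mem_union_left _ (Finset.mem_Icc.mpr ⟨hj1, hji⟩)
  have hfilter : (sourceSubset n d i).filter (· ≤ j) = Finset.Icc 1 j := by
    ext z
    simp only [Finset.mem_filter, Finset.mem_Icc, sourceSubset, Finset.mem_union]
    constructor
    · rintro ⟨h | h, hzj⟩
      · exact ⟨h.1, hzj⟩
      · exfalso; omega
    · intro h
      exact ⟨Or.inl ⟨h.1, le_trans h.2 hji⟩, h.2⟩
  have h := nthElt_of_rank (sourceSubset n d i) j hjmem
  rw [hfilter, Nat.card_Icc] at h
  simpa using h

lemma st6_source_nth_high (n d i j : ℕ) (hdn : d < n) (hi : i ≤ d)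
    (hij : i + 1 ≤ j) (hjd : j ≤ d) : nthElt (sourceSubset n d i) j = n - d + j := by
  have hmem : n - d + j ∈ sourceSubset n d i :=
    Finset.mem_union_right _ (Finset.mem_Icc.mpr ⟨by omega, by omega⟩)
  have hfilter : (sourceSubset n d i).filter (· ≤ n - d + j)
      = Finset.Icc 1 i ∪ Finset.Icc (n-d+i+1) (n-d+j) := by
    ext z
    simp only [Finset.mem_filter, sourceSubset, Finset.mem_union, Finset.mem_Icc]
    constructor
    · rintro ⟨h | h, hz⟩
      · exact Or.inl h
      · exact Or.inr ⟨h.1, hz⟩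
    · rintro (h | h)
      · exact ⟨Or.inl h, by omega⟩
      · exact ⟨Or.inr ⟨h.1, by omega⟩, h.2⟩
  have hcard : ((sourceSubset n d i).filter (· ≤ n - d + j)).card = j := by
    rw [hfilter, Finset.card_union_of_disjoint (by
      rw [Finset.disjoint_left]
      intro z hz1 hz2
      have ha := Finset.mem_Icc.mp hz1
      have hb := Finset.mem_Icc.mp hz2
      omega), Nat.card_Icc, Nat.card_Icc]
    omega
  have h := nthElt_of_rank (sourceSubset n d i) (n-d+j) hmem
  rw [hcard] at h
  exact h

lemma st6_inv_source (n d p i : ℕ) (hdn : d < n) (hi : i ≤ d) (τ : Finset ℕ → Bool)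
    (hτ : IsCoSignotope n d τ) (hp : plusCount τ = p) (hpd : p + d ≤ n)
    (hsrc : τ (sourceSubset n d i) = true) : INVp n d i τ (sourceSubset n d i) := by
  intro j hj1 hjd
  constructor
  · intro hji
    rw [st6_source_nth_low n d i j hdn hi hj1 hji]
    have hjmem : j ∈ sourceSubset n d i :=
      Finset.mem_union_left _ (Finset.mem_Icc.mpr ⟨hj1, hji⟩)
    have hmin : ∀ v ∈ Finset.Icc 1 n \ (sourceSubset n d i).erase j, j ≤ v := by
      intro v hv
      obtain ⟨hvI, hvC⟩ := Finset.mem_sdiff.mp hv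
      by_contra hlt
      push_neg at hlt
      have hvI' := Finset.mem_Icc.mp hvI
      exact hvC (Finset.mem_erase.mpr ⟨by omega,
        Finset.mem_union_left _ (Finset.mem_Icc.mpr ⟨hvI'.1, by omega⟩)⟩)
    have hjmem' : j ∈ Finset.Icc 1 n \ (sourceSubset n d i).erase j :=
      Finset.mem_sdiff.mpr ⟨Finset.mem_Icc.mpr ⟨hj1, by omega⟩, Finset.notMem_erase _ _⟩
    obtain ⟨h0, hh⟩ := st6_sort_head _ j hjmem' hmin
    have hheadval : (series n τ ((sourceSubset n d i).erase j)).head? = some true := by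
      rw [st6_series_eq, st6_head?_map_getElem _ _ h0, hh, Finset.insert_erase hjmem, hsrc]
    rcases (st6_series_facts n d p τ hτ hp hpd _ hsrc j hjmem).1 with hL | hR
    · exact hL
    · exfalso; rw [hR.1] at hheadval; simp at hheadval
  · intro hij
    rw [st6_source_nth_high n d i j hdn hi hij hjd]
    have hjmem : n - d + j ∈ sourceSubset n d i :=
      Finset.mem_union_right _ (Finset.mem_Icc.mpr ⟨by omega, by omega⟩)
    have hmax : ∀ v ∈ Finset.Icc 1 n \ (sourceSubset n d i).erase (n-d+j), v ≤ n-d+j := by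
      intro v hv
      obtain ⟨hvI, hvC⟩ := Finset.mem_sdiff.mp hv
      by_contra hlt
      push_neg at hlt
      have hvI' := Finset.mem_Icc.mp hvI
      exact hvC (Finset.mem_erase.mpr ⟨by omega,
        Finset.mem_union_right _ (Finset.mem_Icc.mpr ⟨by omega, hvI'.2⟩)⟩)
    have hjmem' : n - d + j ∈ Finset.Icc 1 n \ (sourceSubset n d i).erase (n-d+j) :=
      Finset.mem_sdiff.mpr ⟨Finset.mem_Icc.mpr ⟨by omega, by omega⟩, Finset.notMem_erase _ _⟩
    obtain ⟨h0, hh⟩ := st6_sort_last _ (n-d+j) hjmem' hmax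
    have hlastval : (series n τ ((sourceSubset n d i).erase (n-d+j))).getLast? = some true := by
      rw [st6_series_eq, st6_getLast?_map_getElem _ _ h0, hh, Finset.insert_erase hjmem, hsrc]
    rcases (st6_series_facts n d p τ hτ hp hpd _ hsrc (n-d+j) hjmem).1 with hL | hR
    · exfalso; rw [hL.2] at hlastval; simp at hlastval
    · exact hR

lemma st6_inv_of_comp (n d p i : ℕ) (hdn : d < n) (hi : i ≤ d) (τ : Finset ℕ → Bool)
    (hτ : IsCoSignotope n d τ) (hp : plusCount τ = p) (hpd : p + d ≤ n)
    (B : Finset ℕ) (hB : B ∈ comp n d τ i) : INVp n d i τ B := by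
  obtain ⟨hsrc, hτB, hconn⟩ := hB
  clear hτB
  induction hconn with
  | refl => exact st6_inv_source n d p i hdn hi τ hτ hp hpd hsrc
  | tail h1 h2 ih => exact st6_inv_step n d p i τ hτ hp hpd _ _ h2.1 h2.2.1 h2.2.2 ih

lemma st6_comp_tail (n d i : ℕ) (τ : Finset ℕ → Bool) (B : Finset ℕ)
    (hB : B ∈ comp n d τ i) (B' : Finset ℕ) (hτB' : τ B' = true)
    (hadj : GAdj n d B B') : B' ∈ comp n d τ i :=
  ⟨hB.1, hτB', Relation.ReflTransGen.tail hB.2.2 ⟨hB.2.1, hτB', hadj⟩⟩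

end Part6

section Part7

lemma st6_nth_insert_high (A : Finset ℕ) (b v t : ℕ) (hb : b ∈ A) (hv : v ∉ A.erase b)
    (hva : ∀ a ∈ A, b < a → v ≤ a)
    (ht : (A.filter (· ≤ b)).card < t) (htd : t ≤ A.card) :
    nthElt (insert v (A.erase b)) t = nthElt A t := by
  have ht1 : 1 ≤ t := by have := st6_rank_pos A b hb; omega
  have hat : nthElt A t ∈ A := nthElt_mem A t ht1 htd
  have hrat : (A.filter (· ≤ nthElt A t)).card = t := rank_nthElt A t ht1 htd
  have hba : b < nthElt A t := lt_of_rank_lt A hb (by omega)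
  have haS : nthElt A t ∈ insert v (A.erase b) :=
    Finset.mem_insert_of_mem (Finset.mem_erase.mpr ⟨by omega, hat⟩)
  have h1 : (insert v (A.erase b)).filter (· ≤ nthElt A t)
      = insert v ((A.erase b).filter (· ≤ nthElt A t)) := by
    rw [Finset.filter_insert, if_pos (hva _ hat hba)]
  have h2 : (A.erase b).filter (· ≤ nthElt A t) = (A.filter (· ≤ nthElt A t)).erase b := by
    ext z
    simp only [Finset.mem_filter, Finset.mem_erase]
    tauto
  have h3 : ((A.filter (· ≤ nthElt A t)).erase b).card = t - 1 := by
    rw [Finset.card_erase_of_mem (Finset.mem_filter.mpr ⟨hb, by omega⟩), hrat]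
  have hvnot : v ∉ (A.erase b).filter (· ≤ nthElt A t) := fun h => hv (Finset.mem_filter.mp h).1
  have hrS : ((insert v (A.erase b)).filter (· ≤ nthElt A t)).card = t := by
    rw [h1, Finset.card_insert_of_notMem hvnot, h2, h3]
    omega
  have hfin := nthElt_of_rank _ _ haS
  rw [hrS] at hfin
  exact hfin

lemma st6_nth_insert_low (A : Finset ℕ) (b v t : ℕ) (hb : b ∈ A) (hv : v ∉ A.erase b)
    (hbv : b ≤ v) (ht1 : 1 ≤ t) (ht : t < (A.filter (· ≤ b)).card) :
    nthElt (insert v (A.erase b)) t = nthElt A t := by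
  have htd : t ≤ A.card := by have := st6_rank_le_card A b; omega
  have hat : nthElt A t ∈ A := nthElt_mem A t ht1 htd
  have hrat : (A.filter (· ≤ nthElt A t)).card = t := rank_nthElt A t ht1 htd
  have hab : nthElt A t < b := lt_of_rank_lt A hat (by omega)
  have haS : nthElt A t ∈ insert v (A.erase b) :=
    Finset.mem_insert_of_mem (Finset.mem_erase.mpr ⟨by omega, hat⟩)
  have h1 : (insert v (A.erase b)).filter (· ≤ nthElt A t)
      = (A.erase b).filter (· ≤ nthElt A t) := by
    rw [Finset.filter_insert, if_neg (by omega)]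
  have h2 : (A.erase b).filter (· ≤ nthElt A t) = A.filter (· ≤ nthElt A t) := by
    ext z
    simp only [Finset.mem_filter, Finset.mem_erase]
    constructor
    · rintro ⟨⟨_, hz⟩, hz2⟩; exact ⟨hz, hz2⟩
    · rintro ⟨hz, hz2⟩; exact ⟨⟨by omega, hz⟩, hz2⟩
  have hrS : ((insert v (A.erase b)).filter (· ≤ nthElt A t)).card = t := by
    rw [h1, h2, hrat]
  have hfin := nthElt_of_rank _ _ haS
  rw [hrS] at hfin
  exact hfin

lemma st6_nth_insert_self (A : Finset ℕ) (b v : ℕ) (hb : b ∈ A) (hv : v ∉ A.erase b)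
    (hgap : ∀ z ∈ A.erase b, (z ≤ v ↔ z ≤ b)) :
    nthElt (insert v (A.erase b)) ((A.filter (· ≤ b)).card) = v := by
  have h1 : (insert v (A.erase b)).filter (· ≤ v) = insert v ((A.erase b).filter (· ≤ v)) := by
    rw [Finset.filter_insert, if_pos (le_refl v)]
  have h2 : (A.erase b).filter (· ≤ v) = (A.erase b).filter (· ≤ b) :=
    Finset.filter_congr (fun z hz => by simpa using hgap z hz)
  have h3 := card_filter_erase_le A b hb
  have hvnot : v ∉ (A.erase b).filter (· ≤ v) := fun h => hv (Finset.mem_filter.mp h).1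
  have hc : ((insert v (A.erase b)).filter (· ≤ v)).card = (A.filter (· ≤ b)).card := by
    rw [h1, Finset.card_insert_of_notMem hvnot, h2]
    omega
  rw [← hc]
  exact nthElt_of_rank _ _ (Finset.mem_insert_self _ _)

lemma st6_chain_left (n d p i : ℕ) (hdn : d < n) (hi : i ≤ d) (τ : Finset ℕ → Bool)
    (hτ : IsCoSignotope n d τ) (hp : plusCount τ = p) (hpd : p + d ≤ n)
    (A : Finset ℕ) (hA : A ∈ comp n d τ i) (j : ℕ) (hj1 : 1 ≤ j) (hji : j ≤ i)
    (lo : ℕ) (hlo : lo < nthElt A j)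
    (hgap : ∀ z ∈ A, ¬(lo < z ∧ z < nthElt A j)) :
    ∀ v, lo < v → v ≤ nthElt A j → insert v (A.erase (nthElt A j)) ∈ comp n d τ i := by
  have hτA : τ A = true := hA.2.1
  obtain ⟨hAsub, hAcard⟩ := hτ.1 A hτA
  have hbmem : nthElt A j ∈ A := nthElt_mem A j hj1 (by omega)
  set b := nthElt A j with hbdef
  have hbn := Finset.mem_Icc.mp (hAsub hbmem)
  have hrkA : (A.filter (· ≤ b)).card = j := rank_nthElt A j hj1 (by omega)
  have hCsub : A.erase b ⊆ Finset.Icc 1 n := (Finset.erase_subset _ _).trans hAsub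
  have hCcard : (A.erase b).card = d - 1 := by rw [Finset.card_erase_of_mem hbmem, hAcard]
  have hd1 : 1 ≤ d := by rw [← hAcard]; exact Finset.card_pos.mpr ⟨b, hbmem⟩
  have hnot : ∀ v, lo < v → v ≤ b → v ∉ A.erase b := by
    intro v h1 h2 hmem
    obtain ⟨hne, hmemA⟩ := Finset.mem_erase.mp hmem
    exact hgap v hmemA ⟨h1, by omega⟩
  have key : ∀ k v, lo < v → v ≤ b → b - v = k → insert v (A.erase b) ∈ comp n d τ i := by
    intro k
    induction k with
    | zero =>
      intro v h1 h2 h3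
      have hvb : v = b := by omega
      subst hvb
      rw [Finset.insert_erase hbmem]
      exact hA
    | succ k ih =>
      intro v h1 h2 h3
      have hv1mem : insert (v+1) (A.erase b) ∈ comp n d τ i :=
        ih (v+1) (by omega) (by omega) (by omega)
      have hτA1 : τ (insert (v+1) (A.erase b)) = true := hv1mem.2.1
      have hv1not : (v+1) ∉ A.erase b := hnot (v+1) (by omega) (by omega)
      have hvnot : v ∉ A.erase b := hnot v (by omega) (by omega)
      have hrkS : nthElt (insert (v+1) (A.erase b)) j = v + 1 := by
        have hself := st6_nth_insert_self A b (v+1) hbmem hv1not (fun z hz => by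
          have hzg := hgap z (Finset.mem_erase.mp hz).2
          have hzb := (Finset.mem_erase.mp hz).1
          omega)
        rw [hrkA] at hself
        exact hself
      have hINV1 := st6_inv_of_comp n d p i hdn hi τ hτ hp hpd _ hv1mem
      have hLa := (hINV1 j hj1 (by omega)).1 hji
      rw [hrkS] at hLa
      have herase1 : (insert (v+1) (A.erase b)).erase (v+1) = A.erase b :=
        Finset.erase_insert hv1not
      rw [herase1] at hLa
      have hfacts := st6_series_facts n d p τ hτ hp hpd _ hτA1 (v+1)
        (Finset.mem_insert_self _ _)
      rw [herase1] at hfacts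
      have hτAv : τ (insert v (A.erase b)) = true :=
        hfacts.2.1 hLa v (Finset.mem_Icc.mpr ⟨by omega, by omega⟩) hvnot (by omega)
      have hadj : GAdj n d (insert (v+1) (A.erase b)) (insert v (A.erase b)) := by
        refine ⟨?_, ?_, ?_, ?_, v+1, Finset.mem_insert_self _ _, v, ?_, ?_, ?_, ?_⟩
        · exact Finset.insert_subset (Finset.mem_Icc.mpr ⟨by omega, by omega⟩) hCsub
        · rw [Finset.card_insert_of_notMem hv1not, hCcard]; omega
        · exact Finset.insert_subset (Finset.mem_Icc.mpr ⟨by omega, by omega⟩) hCsub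
        · rw [Finset.card_insert_of_notMem hvnot, hCcard]; omega
        · exact Finset.mem_Icc.mpr ⟨by omega, by omega⟩
        · intro hmem
          rcases Finset.mem_insert.mp hmem with h | h
          · omega
          · exact hvnot h
        · rw [Finset.erase_insert hv1not]
        · intro z hz
          rw [Finset.erase_insert hv1not] at hz
          rw [min_eq_right (by omega : v ≤ v + 1), max_eq_left (by omega : v ≤ v + 1)]
          omega
      exact st6_comp_tail n d i τ _ hv1mem _ hτAv hadj
  intro v h1 h2
  exact key (b - v) v h1 h2 rfl

lemma st6_chain_right (n d p i : ℕ) (hdn : d < n) (hi : i ≤ d) (τ : Finset ℕ → Bool)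
    (hτ : IsCoSignotope n d τ) (hp : plusCount τ = p) (hpd : p + d ≤ n)
    (A : Finset ℕ) (hA : A ∈ comp n d τ i) (j : ℕ) (hij : i + 1 ≤ j) (hjd : j ≤ d)
    (hiB : ℕ) (hhi : nthElt A j < hiB)
    (hgap : ∀ z ∈ A, ¬(nthElt A j < z ∧ z < hiB)) :
    ∀ v, nthElt A j ≤ v → v < hiB → v ≤ n →
      insert v (A.erase (nthElt A j)) ∈ comp n d τ i := by
  have hτA : τ A = true := hA.2.1
  obtain ⟨hAsub, hAcard⟩ := hτ.1 A hτA
  have hbmem : nthElt A j ∈ A := nthElt_mem A j (by omega) (by omega)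
  set b := nthElt A j with hbdef
  have hbn := Finset.mem_Icc.mp (hAsub hbmem)
  have hrkA : (A.filter (· ≤ b)).card = j := rank_nthElt A j (by omega) (by omega)
  have hCsub : A.erase b ⊆ Finset.Icc 1 n := (Finset.erase_subset _ _).trans hAsub
  have hCcard : (A.erase b).card = d - 1 := by rw [Finset.card_erase_of_mem hbmem, hAcard]
  have hd1 : 1 ≤ d := by rw [← hAcard]; exact Finset.card_pos.mpr ⟨b, hbmem⟩
  have hnot : ∀ v, b ≤ v → v < hiB → v ∉ A.erase b := by
    intro v h1 h2 hmem
    obtain ⟨hne, hmemA⟩ := Finset.mem_erase.mp hmem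
    exact hgap v hmemA ⟨by omega, h2⟩
  have key : ∀ k v, b ≤ v → v < hiB → v ≤ n → v - b = k →
      insert v (A.erase b) ∈ comp n d τ i := by
    intro k
    induction k with
    | zero =>
      intro v h1 h2 h3 h4
      have hvb : v = b := by omega
      subst hvb
      rw [Finset.insert_erase hbmem]
      exact hA
    | succ k ih =>
      intro v h1 h2 h3 h4
      have hv1mem : insert (v-1) (A.erase b) ∈ comp n d τ i :=
        ih (v-1) (by omega) (by omega) (by omega) (by omega)
      have hτA1 : τ (insert (v-1) (A.erase b)) = true := hv1mem.2.1
      have hv1not : (v-1) ∉ A.erase b := hnot (v-1) (by omega) (by omega)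
      have hvnot : v ∉ A.erase b := hnot v (by omega) (by omega)
      have hrkS : nthElt (insert (v-1) (A.erase b)) j = v - 1 := by
        have hself := st6_nth_insert_self A b (v-1) hbmem hv1not (fun z hz => by
          have hzg := hgap z (Finset.mem_erase.mp hz).2
          have hzb := (Finset.mem_erase.mp hz).1
          omega)
        rw [hrkA] at hself
        exact hself
      have hINV1 := st6_inv_of_comp n d p i hdn hi τ hτ hp hpd _ hv1mem
      have hRa := (hINV1 j (by omega) (by omega)).2 hij
      rw [hrkS] at hRa
      have herase1 : (insert (v-1) (A.erase b)).erase (v-1) = A.erase b :=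
        Finset.erase_insert hv1not
      rw [herase1] at hRa
      have hfacts := st6_series_facts n d p τ hτ hp hpd _ hτA1 (v-1)
        (Finset.mem_insert_self _ _)
      rw [herase1] at hfacts
      have hτAv : τ (insert v (A.erase b)) = true :=
        hfacts.2.2 hRa v (Finset.mem_Icc.mpr ⟨by omega, by omega⟩) hvnot (by omega)
      have hadj : GAdj n d (insert (v-1) (A.erase b)) (insert v (A.erase b)) := by
        refine ⟨?_, ?_, ?_, ?_, v-1, Finset.mem_insert_self _ _, v, ?_, ?_, ?_, ?_⟩
        · exact Finset.insert_subset (Finset.mem_Icc.mpr ⟨by omega, by omega⟩) hCsub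
        · rw [Finset.card_insert_of_notMem hv1not, hCcard]; omega
        · exact Finset.insert_subset (Finset.mem_Icc.mpr ⟨by omega, by omega⟩) hCsub
        · rw [Finset.card_insert_of_notMem hvnot, hCcard]; omega
        · exact Finset.mem_Icc.mpr ⟨by omega, by omega⟩
        · intro hmem
          rcases Finset.mem_insert.mp hmem with h | h
          · omega
          · exact hvnot h
        · rw [Finset.erase_insert hv1not]
        · intro z hz
          rw [Finset.erase_insert hv1not] at hz
          rw [min_eq_left (by omega : v - 1 ≤ v), max_eq_right (by omega : v - 1 ≤ v)]
          omega
      exact st6_comp_tail n d i τ _ hv1mem _ hτAv hadj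
  intro v h1 h2 h3
  exact key (v - b) v h1 h2 h3 rfl

end Part7

section Part8

lemma st6_bd_left (n d p i : ℕ) (hdn : d < n) (hi : i ≤ d) (τ : Finset ℕ → Bool)
    (hτ : IsCoSignotope n d τ) (hp : plusCount τ = p) (hpd : p + d ≤ n) :
    ∀ j, 1 ≤ j → j ≤ i → ∀ A, A ∈ comp n d τ i →
    ∃ F : Finset (Finset ℕ), (∀ S ∈ F, S ∈ comp n d τ i) ∧
      nthElt A j + 1 ≤ F.card + j ∧
      (∀ S ∈ F, ∀ t, j < t → t ≤ d → nthElt S t = nthElt A t) := by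
  intro j
  induction j using Nat.strong_induction_on with
  | _ j ihj =>
  intro hj1 hji A hA
  have hτA : τ A = true := hA.2.1
  obtain ⟨hAsub, hAcard⟩ := hτ.1 A hτA
  have hbmem : nthElt A j ∈ A := nthElt_mem A j hj1 (by omega)
  set b := nthElt A j with hbdef
  have hbn := Finset.mem_Icc.mp (hAsub hbmem)
  have hrkA : (A.filter (· ≤ b)).card = j := rank_nthElt A j hj1 (by omega)
  rcases Nat.eq_or_lt_of_le hj1 with hj1' | hj2
  · -- j = 1
    have hgap : ∀ z ∈ A, ¬(0 < z ∧ z < b) := by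
      intro z hz hzlt
      have h1 := st6_rank_pos A z hz
      have h2 := rank_lt_rank A hbmem hzlt.2
      omega
    have hchain := st6_chain_left n d p i hdn hi τ hτ hp hpd A hA j hj1 hji 0
      (by omega) hgap
    have hvnot : ∀ v, 1 ≤ v → v ≤ b → v ∉ A.erase b := by
      intro v h1 h2 hmem
      rcases Nat.eq_or_lt_of_le h2 with h | h
      · exact Finset.notMem_erase b A (h ▸ hmem)
      · exact hgap v (Finset.mem_erase.mp hmem).2 ⟨by omega, h⟩
    refine ⟨(Finset.Icc 1 b).image (fun v => insert v (A.erase b)), ?_, ?_, ?_⟩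
    · intro S hS
      obtain ⟨v, hv, rfl⟩ := Finset.mem_image.mp hS
      have hv' := Finset.mem_Icc.mp hv
      exact hchain v (by omega) (by omega)
    · have hinj : Set.InjOn (fun v => insert v (A.erase b)) ↑(Finset.Icc 1 b) :=
        st6_insert_injOn _ _ (fun v hv => by
          have hv' := Finset.mem_Icc.mp hv
          exact hvnot v hv'.1 hv'.2)
      rw [Finset.card_image_of_injOn hinj, Nat.card_Icc]
      omega
    · intro S hS t hjt htd
      obtain ⟨v, hv, rfl⟩ := Finset.mem_image.mp hS
      have hv' := Finset.mem_Icc.mp hv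
      exact st6_nth_insert_high A b v t hbmem (hvnot v hv'.1 hv'.2)
        (fun a _ hba => by omega) (by omega) (by omega)
  · -- j ≥ 2
    set lo := nthElt A (j-1) with hlodef
    have hlomem : lo ∈ A := nthElt_mem A (j-1) (by omega) (by omega)
    have hlorank : (A.filter (· ≤ lo)).card = j - 1 :=
      rank_nthElt A (j-1) (by omega) (by omega)
    have hlob : lo < b := lt_of_rank_lt A hlomem (by omega)
    have hgap : ∀ z ∈ A, ¬(lo < z ∧ z < b) := by
      intro z hz hzlt
      have h1 := rank_lt_rank A hz hzlt.1
      have h2 := rank_lt_rank A hbmem hzlt.2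
      omega
    have hchain := st6_chain_left n d p i hdn hi τ hτ hp hpd A hA j hj1 hji lo hlob hgap
    have hvnot : ∀ v, lo < v → v ≤ b → v ∉ A.erase b := by
      intro v h1 h2 hmem
      rcases Nat.eq_or_lt_of_le h2 with h | h
      · exact Finset.notMem_erase b A (h ▸ hmem)
      · exact hgap v (Finset.mem_erase.mp hmem).2 ⟨h1, h⟩
    have hA'mem : insert (lo+1) (A.erase b) ∈ comp n d τ i :=
      hchain (lo+1) (by omega) (by omega)
    have hA'rank : ((insert (lo+1) (A.erase b)).filter (· ≤ lo)).card = j - 1 := by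
      rw [Finset.filter_insert, if_neg (by omega)]
      have h2 : (A.erase b).filter (· ≤ lo) = A.filter (· ≤ lo) := by
        ext z
        simp only [Finset.mem_filter, Finset.mem_erase]
        constructor
        · rintro ⟨⟨_, hz⟩, hz2⟩; exact ⟨hz, hz2⟩
        · rintro ⟨hz, hz2⟩; exact ⟨⟨by omega, hz⟩, hz2⟩
      rw [h2, hlorank]
    have hA'nth : nthElt (insert (lo+1) (A.erase b)) (j-1) = lo := by
      have hloA' : lo ∈ insert (lo+1) (A.erase b) :=
        Finset.mem_insert_of_mem (Finset.mem_erase.mpr ⟨by omega, hlomem⟩)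
      have h := nthElt_of_rank _ _ hloA'
      rw [hA'rank] at h
      exact h
    obtain ⟨F', hF'comp, hF'card, hF'third⟩ := ihj (j-1) (by omega) (by omega)
      (by omega) _ hA'mem
    rw [hA'nth] at hF'card
    have hA'high : ∀ t, j < t → t ≤ d →
        nthElt (insert (lo+1) (A.erase b)) t = nthElt A t := by
      intro t h1 h2
      exact st6_nth_insert_high A b (lo+1) t hbmem (hvnot (lo+1) (by omega) (by omega))
        (fun a _ hba => by omega) (by omega) (by omega)
    have hA'self : nthElt (insert (lo+1) (A.erase b)) j = lo + 1 := by
      have h := st6_nth_insert_self A b (lo+1) hbmem (hvnot (lo+1) (by omega) (by omega))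
        (fun z hz => by
          have hzg := hgap z (Finset.mem_erase.mp hz).2
          have hzb := (Finset.mem_erase.mp hz).1
          omega)
      rw [hrkA] at h
      exact h
    have hinj : Set.InjOn (fun v => insert v (A.erase b)) ↑(Finset.Icc (lo+1) b) :=
      st6_insert_injOn _ _ (fun v hv => by
        have hv' := Finset.mem_Icc.mp hv
        exact hvnot v (by omega) hv'.2)
    refine ⟨((Finset.Icc (lo+1) b).image (fun v => insert v (A.erase b))) ∪ F', ?_, ?_, ?_⟩
    · intro S hS
      rcases Finset.mem_union.mp hS with h | h
      · obtain ⟨v, hv, rfl⟩ := Finset.mem_image.mp h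
        have hv' := Finset.mem_Icc.mp hv
        exact hchain v (by omega) (by omega)
      · exact hF'comp S h
    · have hFjcard : ((Finset.Icc (lo+1) b).image (fun v => insert v (A.erase b))).card
          = b - lo := by
        rw [Finset.card_image_of_injOn hinj, Nat.card_Icc]
        omega
      have hinter : ((Finset.Icc (lo+1) b).image (fun v => insert v (A.erase b))) ∩ F'
          ⊆ {insert (lo+1) (A.erase b)} := by
        intro S hS
        obtain ⟨hS1, hS2⟩ := Finset.mem_inter.mp hS
        obtain ⟨v, hv, rfl⟩ := Finset.mem_image.mp hS1
        have hv' := Finset.mem_Icc.mp hv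
        have h1 : nthElt (insert v (A.erase b)) j = v := by
          have h := st6_nth_insert_self A b v hbmem (hvnot v (by omega) (by omega))
            (fun z hz => by
              have hzg := hgap z (Finset.mem_erase.mp hz).2
              have hzb := (Finset.mem_erase.mp hz).1
              omega)
          rw [hrkA] at h
          exact h
        have h2 := hF'third _ hS2 j (by omega) (by omega)
        rw [h1, hA'self] at h2
        rw [Finset.mem_singleton, h2]
      have hintercard : (((Finset.Icc (lo+1) b).image (fun v => insert v (A.erase b)))
          ∩ F').card ≤ 1 :=
        le_trans (Finset.card_le_card hinter) (le_of_eq (Finset.card_singleton _))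
      have huni := Finset.card_union_add_card_inter
        ((Finset.Icc (lo+1) b).image (fun v => insert v (A.erase b))) F'
      omega
    · intro S hS t hjt htd
      rcases Finset.mem_union.mp hS with h | h
      · obtain ⟨v, hv, rfl⟩ := Finset.mem_image.mp h
        have hv' := Finset.mem_Icc.mp hv
        exact st6_nth_insert_high A b v t hbmem (hvnot v (by omega) (by omega))
          (fun a _ hba => by omega) (by omega) (by omega)
      · rw [hF'third S h t (by omega) htd, hA'high t hjt htd]

lemma st6_bd_right (n d p i : ℕ) (hdn : d < n) (hi : i ≤ d) (τ : Finset ℕ → Bool)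
    (hτ : IsCoSignotope n d τ) (hp : plusCount τ = p) (hpd : p + d ≤ n) :
    ∀ k j, d = j + k → i + 1 ≤ j → j ≤ d → ∀ A, A ∈ comp n d τ i →
    ∃ F : Finset (Finset ℕ), (∀ S ∈ F, S ∈ comp n d τ i) ∧
      n + 1 ≤ F.card + nthElt A j + (d - j) ∧
      (∀ S ∈ F, ∀ t, 1 ≤ t → t < j → nthElt S t = nthElt A t) := by
  intro k
  induction k with
  | zero =>
    intro j hdj hij hjd A hA
    have hτA : τ A = true := hA.2.1
    obtain ⟨hAsub, hAcard⟩ := hτ.1 A hτA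
    have hbmem : nthElt A j ∈ A := nthElt_mem A j (by omega) (by omega)
    set b := nthElt A j with hbdef
    have hbn := Finset.mem_Icc.mp (hAsub hbmem)
    have hrkA : (A.filter (· ≤ b)).card = j := rank_nthElt A j (by omega) (by omega)
    have hgap : ∀ z ∈ A, ¬(b < z ∧ z < n + 1) := by
      intro z hz hzlt
      have h2 := rank_lt_rank A hz hzlt.1
      have h3 := st6_rank_le_card A z
      omega
    have hchain := st6_chain_right n d p i hdn hi τ hτ hp hpd A hA j hij hjd (n+1)
      (by omega) hgap
    have hvnot : ∀ v, b ≤ v → v ≤ n → v ∉ A.erase b := by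
      intro v h1 h2 hmem
      rcases Nat.eq_or_lt_of_le h1 with h | h
      · exact Finset.notMem_erase b A (h ▸ hmem)
      · exact hgap v (Finset.mem_erase.mp hmem).2 ⟨h, by omega⟩
    refine ⟨(Finset.Icc b n).image (fun v => insert v (A.erase b)), ?_, ?_, ?_⟩
    · intro S hS
      obtain ⟨v, hv, rfl⟩ := Finset.mem_image.mp hS
      have hv' := Finset.mem_Icc.mp hv
      exact hchain v (by omega) (by omega) (by omega)
    · have hinj : Set.InjOn (fun v => insert v (A.erase b)) ↑(Finset.Icc b n) :=
        st6_insert_injOn _ _ (fun v hv => by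
          have hv' := Finset.mem_Icc.mp hv
          exact hvnot v hv'.1 hv'.2)
      rw [Finset.card_image_of_injOn hinj, Nat.card_Icc]
      omega
    · intro S hS t ht1 htj
      obtain ⟨v, hv, rfl⟩ := Finset.mem_image.mp hS
      have hv' := Finset.mem_Icc.mp hv
      exact st6_nth_insert_low A b v t hbmem (hvnot v hv'.1 hv'.2) hv'.1 ht1 (by omega)
  | succ k ih =>
    intro j hdj hij hjd A hA
    have hτA : τ A = true := hA.2.1
    obtain ⟨hAsub, hAcard⟩ := hτ.1 A hτA
    have hbmem : nthElt A j ∈ A := nthElt_mem A j (by omega) (by omega)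
    set b := nthElt A j with hbdef
    have hbn := Finset.mem_Icc.mp (hAsub hbmem)
    have hrkA : (A.filter (· ≤ b)).card = j := rank_nthElt A j (by omega) (by omega)
    set hiB := nthElt A (j+1) with hhidef
    have himem : hiB ∈ A := nthElt_mem A (j+1) (by omega) (by omega)
    have hirank : (A.filter (· ≤ hiB)).card = j + 1 :=
      rank_nthElt A (j+1) (by omega) (by omega)
    have hin := Finset.mem_Icc.mp (hAsub himem)
    have hbhi : b < hiB := lt_of_rank_lt A hbmem (by omega)
    have hgap : ∀ z ∈ A, ¬(b < z ∧ z < hiB) := by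
      intro z hz hzlt
      have h1 := rank_lt_rank A hz hzlt.1
      have h2 := rank_lt_rank A himem hzlt.2
      omega
    have hchain := st6_chain_right n d p i hdn hi τ hτ hp hpd A hA j hij hjd hiB hbhi hgap
    have hvnot : ∀ v, b ≤ v → v < hiB → v ∉ A.erase b := by
      intro v h1 h2 hmem
      rcases Nat.eq_or_lt_of_le h1 with h | h
      · exact Finset.notMem_erase b A (h ▸ hmem)
      · exact hgap v (Finset.mem_erase.mp hmem).2 ⟨h, h2⟩
    have hA''mem : insert (hiB - 1) (A.erase b) ∈ comp n d τ i :=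
      hchain (hiB - 1) (by omega) (by omega) (by omega)
    have hA''hi : nthElt (insert (hiB - 1) (A.erase b)) (j+1) = hiB := by
      have h := st6_nth_insert_high A b (hiB - 1) (j+1) hbmem
        (hvnot (hiB - 1) (by omega) (by omega))
        (fun a ha hba => by
          have := hgap a ha
          omega)
        (by omega) (by omega)
      rw [h]
    obtain ⟨F'', hF''comp, hF''card, hF''third⟩ := ih (j+1) (by omega) (by omega)
      (by omega) _ hA''mem
    rw [hA''hi] at hF''card
    have hA''self : nthElt (insert (hiB - 1) (A.erase b)) j = hiB - 1 := by
      have h := st6_nth_insert_self A b (hiB - 1) hbmem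
        (hvnot (hiB - 1) (by omega) (by omega))
        (fun z hz => by
          have hzg := hgap z (Finset.mem_erase.mp hz).2
          have hzb := (Finset.mem_erase.mp hz).1
          omega)
      rw [hrkA] at h
      exact h
    have hA''low : ∀ t, 1 ≤ t → t < j →
        nthElt (insert (hiB - 1) (A.erase b)) t = nthElt A t := by
      intro t h1 h2
      exact st6_nth_insert_low A b (hiB - 1) t hbmem
        (hvnot (hiB - 1) (by omega) (by omega)) (by omega) h1 (by omega)
    have hinj : Set.InjOn (fun v => insert v (A.erase b)) ↑(Finset.Icc b (hiB - 1)) :=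
      st6_insert_injOn _ _ (fun v hv => by
        have hv' := Finset.mem_Icc.mp hv
        exact hvnot v hv'.1 (by omega))
    refine ⟨((Finset.Icc b (hiB - 1)).image (fun v => insert v (A.erase b))) ∪ F'', ?_, ?_, ?_⟩
    · intro S hS
      rcases Finset.mem_union.mp hS with h | h
      · obtain ⟨v, hv, rfl⟩ := Finset.mem_image.mp h
        have hv' := Finset.mem_Icc.mp hv
        exact hchain v (by omega) (by omega) (by omega)
      · exact hF''comp S h
    · have hFjcard : ((Finset.Icc b (hiB - 1)).image (fun v => insert v (A.erase b))).card
          = hiB - b := by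
        rw [Finset.card_image_of_injOn hinj, Nat.card_Icc]
        omega
      have hinter : ((Finset.Icc b (hiB - 1)).image (fun v => insert v (A.erase b))) ∩ F''
          ⊆ {insert (hiB - 1) (A.erase b)} := by
        intro S hS
        obtain ⟨hS1, hS2⟩ := Finset.mem_inter.mp hS
        obtain ⟨v, hv, rfl⟩ := Finset.mem_image.mp hS1
        have hv' := Finset.mem_Icc.mp hv
        have h1 : nthElt (insert v (A.erase b)) j = v := by
          have h := st6_nth_insert_self A b v hbmem (hvnot v (by omega) (by omega))
            (fun z hz => by
              have hzg := hgap z (Finset.mem_erase.mp hz).2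
              have hzb := (Finset.mem_erase.mp hz).1
              omega)
          rw [hrkA] at h
          exact h
        have h2 := hF''third _ hS2 j (by omega) (by omega)
        rw [h1, hA''self] at h2
        rw [Finset.mem_singleton, h2]
      have hintercard : (((Finset.Icc b (hiB - 1)).image (fun v => insert v (A.erase b)))
          ∩ F'').card ≤ 1 :=
        le_trans (Finset.card_le_card hinter) (le_of_eq (Finset.card_singleton _))
      have huni := Finset.card_union_add_card_inter
        ((Finset.Icc b (hiB - 1)).image (fun v => insert v (A.erase b))) F''
      omega
    · intro S hS t ht1 htj
      rcases Finset.mem_union.mp hS with h | h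
      · obtain ⟨v, hv, rfl⟩ := Finset.mem_image.mp h
        have hv' := Finset.mem_Icc.mp hv
        exact st6_nth_insert_low A b v t hbmem (hvnot v hv'.1 (by omega)) hv'.1 ht1 (by omega)
      · rw [hF''third S h t ht1 (by omega), hA''low t ht1 htj]

end Part8


/-- **Lemma.** If `𝒞^τ_i` has size `c` and contains the `+`-subset `B = (b_1 < … < b_d)`,
then for `j ∈ [i]` we have `b_j ≤ c + j - 1` and the `(τ,B,j)`-series is left-aligned,
and for `j ∈ [i+1,d]` we have `b_j ≥ n - (c + d - j) + 1` and the `(τ,B,j)`-series is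
right-aligned. -/
theorem statement6 (n d c p i : ℕ) (hdn : d < n) (hc : 1 ≤ c) (hcp : c ≤ p)
    (hp : p + d ≤ n) (hi : i ≤ d)
    (τ : Finset ℕ → Bool) (hτ : τ ∈ coSigSet n d p)
    (hsize : (comp n d τ i).ncard = c)
    (B : Finset ℕ) (hB : B ∈ comp n d τ i) :
    (∀ j, 1 ≤ j → j ≤ i →
      nthElt B j ≤ c + j - 1 ∧ LeftAligned (series n τ (B.erase (nthElt B j)))) ∧
    (∀ j, i + 1 ≤ j → j ≤ d →
      n - (c + d - j) + 1 ≤ nthElt B j ∧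
        RightAligned (series n τ (B.erase (nthElt B j)))) := by
  obtain ⟨hco, hpc⟩ := hτ
  have hINV := st6_inv_of_comp n d p i hdn hi τ hco hpc hp B hB
  have hcompfin : (comp n d τ i).Finite := by
    apply Set.Finite.subset (Finset.Icc 1 n).powerset.finite_toSet
    intro A hA
    exact Finset.mem_coe.mpr (Finset.mem_powerset.mpr (hco.1 A hA.2.1).1)
  have hcompcard : ∀ F : Finset (Finset ℕ), (∀ S ∈ F, S ∈ comp n d τ i) → F.card ≤ c := by
    intro F hF
    calc F.card = (↑F : Set (Finset ℕ)).ncard := (Set.ncard_coe_finset F).symm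
      _ ≤ (comp n d τ i).ncard :=
        Set.ncard_le_ncard (fun S hS => hF S (Finset.mem_coe.mp hS)) hcompfin
      _ = c := hsize
  constructor
  · intro j hj1 hji
    have hleft := (hINV j hj1 (by omega)).1 hji
    refine ⟨?_, hleft⟩
    obtain ⟨F, hFcomp, hFcard, _⟩ :=
      st6_bd_left n d p i hdn hi τ hco hpc hp j hj1 hji B hB
    have hFc := hcompcard F hFcomp
    omega
  · intro j hij hjd
    have hright := (hINV j (by omega) hjd).2 hij
    refine ⟨?_, hright⟩
    obtain ⟨F, hFcomp, hFcard, _⟩ :=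
      st6_bd_right n d p i hdn hi τ hco hpc hp (d - j) j (by omega) hij hjd B hB
    have hFc := hcompcard F hFcomp
    omega

end DEV
end

section
/- Let $n, d, p$ be integers with $0 \le d < n$ and $1 \le p \le n-d$. Let $\tau \in \bar{\mathcal{S}}_p(n,d)$ and let $B$ be a $+$-subset of $\tau$. Let $i$ be the largest index in $[d]$ such that the $(\tau,B,i)$-series is left-aligned, or $i = 0$ if no such index exists. Then $B$ is contained in the $+$-component $\mathcal{C}^{\tau}_i$. -/
lemma exists_flip (l : List Bool) : ∀ (m a b : ℕ), b - a ≤ m → (hab : a < b) → (hb : b < l.length) →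
    l[a]'(by omega) ≠ l[b]'hb → ∃ k, a ≤ k ∧ k + 1 ≤ b ∧ ∃ h : k + 1 < l.length,
      l[k]'(by omega) ≠ l[k+1]'h := by
  intro m
  induction m with
  | zero => intro a b h hab _ _; omega
  | succ m ih =>
    intro a b h hab hb hne
    by_cases he : l[a]'(by omega) = l[a+1]'(by omega)
    · have hab' : a + 1 < b := by
        rcases Nat.lt_or_ge (a+1) b with h1 | h1
        · exact h1
        · have : a + 1 = b := by omega
          subst this; exact absurd he hne
      obtain ⟨k, hk1, hk2, hk3⟩ := ih (a+1) b (by omega) (by omega) hb (by rw [← he]; exact hne)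
      exact ⟨k, by omega, hk2, hk3⟩
    · exact ⟨a, le_refl _, by omega, by omega, he⟩

lemma one_le_filter {α} (P : α → Bool) (z : List α) (j : ℕ) (hj : j < z.length)
    (hP : P (z[j]'hj) = true) : 1 ≤ (z.filter P).length := by
  have : z[j]'hj ∈ z.filter P := List.mem_filter.mpr ⟨z.getElem_mem hj, hP⟩
  exact List.length_pos_iff.mpr (List.ne_nil_of_mem this)

lemma two_le_filter {α} (P : α → Bool) : ∀ (z : List α) (j1 j2 : ℕ), (h12 : j1 < j2) → (h2 : j2 < z.length) →
    P (z[j1]'(by omega)) = true → P (z[j2]'h2) = true → 2 ≤ (z.filter P).length := by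
  intro z
  induction z with
  | nil => intro j1 j2 h1 h2; simp at h2
  | cons hd tl ih =>
    intro j1 j2 h12 h2 hP1 hP2
    match j1, h12 with
    | 0, _ =>
      have hPhd : P hd = true := hP1
      rw [List.filter_cons_of_pos hPhd]
      have h2' : j2 - 1 < tl.length := by simp at h2; omega
      have : tl[j2-1]'h2' = (hd :: tl)[j2]'h2 := by
        have : j2 = (j2 - 1) + 1 := by omega
        rw [List.getElem_cons]
        simp only [show ¬ (j2 = 0) by omega, dite_false]
      have h1le := one_le_filter P tl (j2-1) h2' (by rw [this]; exact hP2)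
      simp only [List.length_cons]
      omega
    | (j1'+1), _ =>
      have h2' : j2 - 1 < tl.length := by simp at h2; omega
      have e1 : tl[j1']'(by omega) = (hd :: tl)[j1'+1]'(by omega) := by simp
      have e2 : tl[j2-1]'h2' = (hd :: tl)[j2]'h2 := by
        rw [List.getElem_cons]
        simp only [show ¬ (j2 = 0) by omega, dite_false]
      have := ih j1' (j2-1) (by omega) h2' (by rw [e1]; exact hP1) (by rw [e2]; exact hP2)
      rw [List.filter_cons]
      split
      · simp only [List.length_cons]; omega
      · exact this

lemma two_le_signChanges (l : List Bool) (k1 k2 : ℕ) (h12 : k1 < k2) (h2 : k2 + 1 < l.length)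
    (hne1 : l[k1]'(by omega) ≠ l[k1+1]'(by omega)) (hne2 : l[k2]'(by omega) ≠ l[k2+1]'h2) :
    2 ≤ signChanges l := by
  set z := l.zip l.tail with hz
  have hzl : z.length = l.length - 1 := by
    rw [hz, List.length_zip, List.length_tail]; omega
  have hzget : ∀ (j : ℕ) (hj : j < z.length), z[j]'hj = (l[j]'(by omega), l[j+1]'(by omega)) := by
    intro j hj
    have : z[j]'hj = (l[j]'(by omega), l.tail[j]'(by rw [List.length_tail]; omega)) :=
      List.getElem_zip
    rw [this, List.getElem_tail]
  have hk1z : k1 < z.length := by omega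
  have hk2z : k2 < z.length := by omega
  have hP1 : (fun p : Bool × Bool => decide (p.1 ≠ p.2)) (z[k1]'hk1z) = true := by
    rw [hzget k1 hk1z]; simpa using hne1
  have hP2 : (fun p : Bool × Bool => decide (p.1 ≠ p.2)) (z[k2]'hk2z) = true := by
    rw [hzget k2 hk2z]; simpa using hne2
  exact two_le_filter _ z k1 k2 h12 hk2z hP1 hP2

lemma convex_list (l : List Bool) (hsc : signChanges l ≤ 1) {a b c : ℕ} (hab : a < b) (hbc : b < c)
    (hc : c < l.length) (he : l[a]'(by omega) = l[c]'hc) : l[b]'(by omega) = l[a]'(by omega) := by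
  by_contra hne
  obtain ⟨k1, hk11, hk12, hk13, hk14⟩ := exists_flip l (b-a) a b (le_refl _) hab (by omega) (fun h => hne h.symm)
  obtain ⟨k2, hk21, hk22, hk23, hk24⟩ := exists_flip l (c-b) b c (le_refl _) hbc hc (fun h => hne (h.trans he.symm))
  have := two_le_signChanges l k1 k2 (by omega) (by omega) hk14 hk24
  omega
open Finset in
lemma sdiff_nonempty_of_card (C : Finset ℕ) (n : ℕ) (h : C.card < n) :
    (Finset.Icc 1 n \ C).Nonempty := by
  rw [← Finset.card_pos]
  have h1 : (Finset.Icc 1 n).card = n := by rw [Nat.card_Icc]; omega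
  have h2 : (Finset.Icc 1 n \ C).card + C.card = (Finset.Icc 1 n ∪ C).card :=
    Finset.card_sdiff_add_card _ _
  have h3 : (Finset.Icc 1 n).card ≤ (Finset.Icc 1 n ∪ C).card :=
    Finset.card_le_card Finset.subset_union_left
  omega

lemma series_le_one (n d : ℕ) (τ : Finset ℕ → Bool) (hco : IsCoSignotope n d τ)
    (hd1 : 1 ≤ d) (hdn : d < n) (C : Finset ℕ) (hC : C ⊆ Finset.Icc 1 n)
    (hCc : C.card = d - 1) : signChanges (series n τ C) ≤ 1 := by
  obtain ⟨w, hw⟩ := sdiff_nonempty_of_card C n (by omega)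
  rw [Finset.mem_sdiff] at hw
  have hwC : w ∉ C := hw.2
  have h1 : (insert w C).card = d := by rw [Finset.card_insert_of_notMem hwC]; omega
  have h2 : insert w C ⊆ Finset.Icc 1 n := Finset.insert_subset hw.1 hC
  have := hco.2 (insert w C) h2 h1 w (Finset.mem_insert_self w C)
  rwa [Finset.erase_insert hwC] at this

lemma idx_of_mem (s : Finset ℕ) {x : ℕ} (hx : x ∈ s) :
    ∃ j, ∃ hj : j < (s.sort (· ≤ ·)).length, (s.sort (· ≤ ·))[j]'hj = x :=
  List.mem_iff_getElem.mp ((Finset.mem_sort _).mpr hx)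

lemma sort_strict (s : Finset ℕ) {j1 j2 : ℕ} (h1 : j1 < (s.sort (· ≤ ·)).length)
    (h2 : j2 < (s.sort (· ≤ ·)).length)
    (hlt : (s.sort (· ≤ ·))[j1]'h1 < (s.sort (· ≤ ·))[j2]'h2) : j1 < j2 := by
  by_contra hle
  push_neg at hle
  rcases Nat.lt_or_ge j2 j1 with h | h
  · have := (List.pairwise_iff_getElem.mp (Finset.sortedLT_sort s).pairwise) j2 j1 h2 h1 h
    omega
  · have : j1 = j2 := by omega
    subst this; omega

lemma convex_pt (n d : ℕ) (τ : Finset ℕ → Bool) (hco : IsCoSignotope n d τ)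
    (hd1 : 1 ≤ d) (hdn : d < n) (C : Finset ℕ) (hC : C ⊆ Finset.Icc 1 n)
    (hCc : C.card = d - 1) {x1 x2 x3 : ℕ}
    (h1 : x1 ∈ Finset.Icc 1 n \ C) (h2 : x2 ∈ Finset.Icc 1 n \ C) (h3 : x3 ∈ Finset.Icc 1 n \ C)
    (h12 : x1 < x2) (h23 : x2 < x3)
    (he : τ (insert x1 C) = τ (insert x3 C)) : τ (insert x2 C) = τ (insert x1 C) := by
  obtain ⟨j1, hj1, e1⟩ := idx_of_mem _ h1
  obtain ⟨j2, hj2, e2⟩ := idx_of_mem _ h2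
  obtain ⟨j3, hj3, e3⟩ := idx_of_mem _ h3
  have o12 : j1 < j2 := sort_strict _ hj1 hj2 (by rw [e1, e2]; exact h12)
  have o23 : j2 < j3 := sort_strict _ hj2 hj3 (by rw [e2, e3]; exact h23)
  have hlen : (series n τ C).length = ((Finset.Icc 1 n \ C).sort (· ≤ ·)).length := by
    simp only [series, List.length_map]
  have hget : ∀ (j : ℕ) (hj : j < ((Finset.Icc 1 n \ C).sort (· ≤ ·)).length),
      (series n τ C)[j]'(by rw [hlen]; exact hj)
        = τ (insert (((Finset.Icc 1 n \ C).sort (· ≤ ·))[j]'hj) C) := by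
    intro j hj
    simp only [series, List.getElem_map]
  have hsc := series_le_one n d τ hco hd1 hdn C hC hCc
  have := convex_list (series n τ C) hsc o12 o23 (by rw [hlen]; exact hj3)
    (by rw [hget j1 hj1, hget j3 hj3, e1, e3]; exact he)
  rw [hget j2 hj2, hget j1 hj1, e1, e2] at this
  exact this
def LdownP (τ : Finset ℕ → Bool) (B : Finset ℕ) (c : ℕ) : Prop :=
  ∀ x ∈ Finset.Icc 1 c, x ∉ B.erase c → τ (insert x (B.erase c)) = true

def RupP (n : ℕ) (τ : Finset ℕ → Bool) (B : Finset ℕ) (c : ℕ) : Prop :=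
  ∀ x ∈ Finset.Icc c n, x ∉ B.erase c → τ (insert x (B.erase c)) = true

set_option linter.unusedSectionVars false

section Rays

variable {n d : ℕ} {τ : Finset ℕ → Bool} (hco : IsCoSignotope n d τ)
  (hd1 : 1 ≤ d) (hdn : d < n) {B : Finset ℕ} (hBsub : B ⊆ Finset.Icc 1 n)
  (hBcard : B.card = d) (hτB : τ B = true) {c : ℕ} (hc : c ∈ B)

include hco hd1 hdn hBsub hBcard hτB hc

lemma erase_card' : (B.erase c).card = d - 1 := by
  rw [Finset.card_erase_of_mem hc, hBcard]

lemma erase_sub' : B.erase c ⊆ Finset.Icc 1 n := (Finset.erase_subset _ _).trans hBsub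

lemma c_mem_sdiff' : c ∈ Finset.Icc 1 n \ B.erase c :=
  Finset.mem_sdiff.mpr ⟨hBsub hc, Finset.notMem_erase _ _⟩

lemma ray_up {x₀ : ℕ} (hx₀I : x₀ ∈ Finset.Icc 1 c) (hx₀ : x₀ ∉ B.erase c)
    (hbad : τ (insert x₀ (B.erase c)) = false) : RupP n τ B c := by
  intro x hxI hx
  have hcI := hBsub hc
  rw [Finset.mem_Icc] at hxI hx₀I hcI
  have hx₀c : x₀ ≠ c := by
    intro h; rw [h, Finset.insert_erase hc] at hbad; rw [hτB] at hbad; exact absurd hbad (by simp)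
  rcases eq_or_ne x c with rfl | hxc
  · rw [Finset.insert_erase hc]; exact hτB
  by_contra hxf
  have hxf : τ (insert x (B.erase c)) = false := by
    cases h : τ (insert x (B.erase c)) with
    | true => exact absurd h hxf
    | false => rfl
  have hmem : ∀ z, 1 ≤ z → z ≤ n → z ∉ B.erase c → z ∈ Finset.Icc 1 n \ B.erase c := by
    intro z h1 h2 h3; rw [Finset.mem_sdiff, Finset.mem_Icc]; exact ⟨⟨h1, h2⟩, h3⟩
  have := convex_pt n d τ hco hd1 hdn (B.erase c) (erase_sub' hco hd1 hdn hBsub hBcard hτB hc)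
    (erase_card' hco hd1 hdn hBsub hBcard hτB hc)
    (hmem x₀ hx₀I.1 (by omega) hx₀) (c_mem_sdiff' hco hd1 hdn hBsub hBcard hτB hc)
    (hmem x (by omega) hxI.2 hx) (by omega) (by omega) (by rw [hbad, hxf])
  rw [Finset.insert_erase hc, hτB, hbad] at this
  exact absurd this (by simp)

lemma ray_down {x₀ : ℕ} (hx₀I : x₀ ∈ Finset.Icc c n) (hx₀ : x₀ ∉ B.erase c)
    (hbad : τ (insert x₀ (B.erase c)) = false) : LdownP τ B c := by
  intro x hxI hx
  have hcI := hBsub hc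
  rw [Finset.mem_Icc] at hxI hx₀I hcI
  have hx₀c : x₀ ≠ c := by
    intro h; rw [h, Finset.insert_erase hc] at hbad; rw [hτB] at hbad; exact absurd hbad (by simp)
  rcases eq_or_ne x c with rfl | hxc
  · rw [Finset.insert_erase hc]; exact hτB
  by_contra hxf
  have hxf : τ (insert x (B.erase c)) = false := by
    cases h : τ (insert x (B.erase c)) with
    | true => exact absurd h hxf
    | false => rfl
  have hmem : ∀ z, 1 ≤ z → z ≤ n → z ∉ B.erase c → z ∈ Finset.Icc 1 n \ B.erase c := by
    intro z h1 h2 h3; rw [Finset.mem_sdiff, Finset.mem_Icc]; exact ⟨⟨h1, h2⟩, h3⟩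
  have := convex_pt n d τ hco hd1 hdn (B.erase c) (erase_sub' hco hd1 hdn hBsub hBcard hτB hc)
    (erase_card' hco hd1 hdn hBsub hBcard hτB hc)
    (hmem x hxI.1 (by omega) hx) (c_mem_sdiff' hco hd1 hdn hBsub hBcard hτB hc)
    (hmem x₀ (by omega) hx₀I.2 hx₀) (by omega) (by omega) (by rw [hbad, hxf])
  rw [Finset.insert_erase hc, hτB, hxf] at this
  exact absurd this (by simp)

end Rays
section HeadLast

variable {n d : ℕ} {τ : Finset ℕ → Bool} (hco : IsCoSignotope n d τ)
  (hd1 : 1 ≤ d) (hdn : d < n) {B : Finset ℕ} (hBsub : B ⊆ Finset.Icc 1 n)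
  (hBcard : B.card = d) (hτB : τ B = true) {c : ℕ} (hc : c ∈ B)

include hco hd1 hdn hBsub hBcard hτB hc

lemma sdiff_ne' : (Finset.Icc 1 n \ B.erase c).Nonempty := by
  apply sdiff_nonempty_of_card
  rw [erase_card' hco hd1 hdn hBsub hBcard hτB hc]; omega

lemma series_head' :
    (series n τ (B.erase c)).head? =
      some (τ (insert ((Finset.Icc 1 n \ B.erase c).min'
        (sdiff_ne' hco hd1 hdn hBsub hBcard hτB hc)) (B.erase c))) := by
  have hne := sdiff_ne' hco hd1 hdn hBsub hBcard hτB hc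
  have hlen : 0 < ((Finset.Icc 1 n \ B.erase c).sort (· ≤ ·)).length := by
    rw [Finset.length_sort]; exact Finset.card_pos.mpr hne
  have e0 := Finset.sorted_zero_eq_min' (h := hlen)
  rw [series, List.head?_eq_getElem?, List.getElem?_map]
  rw [List.getElem?_eq_getElem (by simpa using hlen)]
  simp only [Option.map_some]
  rw [e0]

lemma series_last' :
    (series n τ (B.erase c)).getLast? =
      some (τ (insert ((Finset.Icc 1 n \ B.erase c).max'
        (sdiff_ne' hco hd1 hdn hBsub hBcard hτB hc)) (B.erase c))) := by
  have hne := sdiff_ne' hco hd1 hdn hBsub hBcard hτB hc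
  have hlen : 0 < ((Finset.Icc 1 n \ B.erase c).sort (· ≤ ·)).length := by
    rw [Finset.length_sort]; exact Finset.card_pos.mpr hne
  have e1 := Finset.sorted_last_eq_max'
    (s := Finset.Icc 1 n \ B.erase c) (h := by omega)
  rw [series, List.getLast?_eq_getElem?, List.length_map, List.getElem?_map]
  rw [List.getElem?_eq_getElem (by omega)]
  simp only [Option.map_some]
  rw [e1]

lemma la_ldown (hla : LeftAligned (series n τ (B.erase c))) : LdownP τ B c := by
  obtain ⟨hhead, _⟩ := hla
  rw [series_head' hco hd1 hdn hBsub hBcard hτB hc] at hhead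
  set m := (Finset.Icc 1 n \ B.erase c).min' (sdiff_ne' hco hd1 hdn hBsub hBcard hτB hc) with hm
  have hτm : τ (insert m (B.erase c)) = true := by
    simpa using hhead
  have hmmem : m ∈ Finset.Icc 1 n \ B.erase c := Finset.min'_mem _ _
  intro x hxI hx
  rcases eq_or_ne x c with rfl | hxc
  · rw [Finset.insert_erase hc]; exact hτB
  rcases eq_or_ne x m with rfl | hxm
  · exact hτm
  by_contra hxf
  have hxf : τ (insert x (B.erase c)) = false := by
    cases h : τ (insert x (B.erase c)) with
    | true => exact absurd h hxf
    | false => rfl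
  -- m < x < c, endpoints m and c are true
  rw [Finset.mem_Icc] at hxI
  have hcI := hBsub hc; rw [Finset.mem_Icc] at hcI
  have hxmem : x ∈ Finset.Icc 1 n \ B.erase c := by
    rw [Finset.mem_sdiff, Finset.mem_Icc]; exact ⟨⟨hxI.1, by omega⟩, hx⟩
  have hmx : m < x := by
    have := Finset.min'_le _ x hxmem
    omega
  have hxc' : x < c := by omega
  have := convex_pt n d τ hco hd1 hdn (B.erase c) (erase_sub' hco hd1 hdn hBsub hBcard hτB hc)
    (erase_card' hco hd1 hdn hBsub hBcard hτB hc) hmmem hxmem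
    (c_mem_sdiff' hco hd1 hdn hBsub hBcard hτB hc) hmx hxc'
    (by rw [hτm, Finset.insert_erase hc, hτB])
  rw [hτm, hxf] at this
  exact absurd this (by simp)

lemma nla_rup (hnla : ¬ LeftAligned (series n τ (B.erase c))) : RupP n τ B c := by
  rw [LeftAligned, series_head' hco hd1 hdn hBsub hBcard hτB hc,
    series_last' hco hd1 hdn hBsub hBcard hτB hc] at hnla
  set m := (Finset.Icc 1 n \ B.erase c).min' (sdiff_ne' hco hd1 hdn hBsub hBcard hτB hc) with hm
  set M := (Finset.Icc 1 n \ B.erase c).max' (sdiff_ne' hco hd1 hdn hBsub hBcard hτB hc) with hM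
  have hmmem : m ∈ Finset.Icc 1 n \ B.erase c := Finset.min'_mem _ _
  have hMmem : M ∈ Finset.Icc 1 n \ B.erase c := Finset.max'_mem _ _
  have hcase : τ (insert m (B.erase c)) = false ∨ τ (insert M (B.erase c)) = true := by
    by_cases h1 : τ (insert m (B.erase c)) = true
    · right
      cases h2 : τ (insert M (B.erase c)) with
      | true => rfl
      | false => exact absurd ⟨by rw [h1], by rw [h2]⟩ hnla
    · left
      cases h : τ (insert m (B.erase c)) with
      | true => exact absurd h h1
      | false => rfl
  have hcI := hBsub hc; rw [Finset.mem_Icc] at hcI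
  intro x hxI hx
  rcases eq_or_ne x c with rfl | hxc
  · rw [Finset.insert_erase hc]; exact hτB
  rw [Finset.mem_Icc] at hxI
  by_contra hxf
  have hxf : τ (insert x (B.erase c)) = false := by
    cases h : τ (insert x (B.erase c)) with
    | true => exact absurd h hxf
    | false => rfl
  have hxmem : x ∈ Finset.Icc 1 n \ B.erase c := by
    rw [Finset.mem_sdiff, Finset.mem_Icc]; exact ⟨⟨by omega, hxI.2⟩, hx⟩
  rcases hcase with hmf | hMt
  · -- m < c < x, endpoints false
    have hmc : m ≠ c := by
      intro h; rw [h, Finset.insert_erase hc, hτB] at hmf; exact absurd hmf (by simp)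
    have hmlt : m < c := by
      have := Finset.min'_le _ c (c_mem_sdiff' hco hd1 hdn hBsub hBcard hτB hc)
      omega
    have := convex_pt n d τ hco hd1 hdn (B.erase c) (erase_sub' hco hd1 hdn hBsub hBcard hτB hc)
      (erase_card' hco hd1 hdn hBsub hBcard hτB hc) hmmem
      (c_mem_sdiff' hco hd1 hdn hBsub hBcard hτB hc) hxmem hmlt (by omega)
      (by rw [hmf, hxf])
    rw [Finset.insert_erase hc, hτB, hmf] at this
    exact absurd this (by simp)
  · -- c < x < M, endpoints true
    have hxM : x ≠ M := by
      intro h; rw [h, hMt] at hxf; exact absurd hxf (by simp)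
    have hxltM : x < M := by
      have := Finset.le_max' _ x hxmem
      omega
    have := convex_pt n d τ hco hd1 hdn (B.erase c) (erase_sub' hco hd1 hdn hBsub hBcard hτB hc)
      (erase_card' hco hd1 hdn hBsub hBcard hτB hc)
      (c_mem_sdiff' hco hd1 hdn hBsub hBcard hτB hc) hxmem hMmem (by omega) hxltM
      (by rw [Finset.insert_erase hc, hτB, hMt])
    rw [Finset.insert_erase hc, hτB, hxf] at this
    exact absurd this (by simp)

end HeadLast
lemma plus_finite {n d : ℕ} {τ : Finset ℕ → Bool} (hco : IsCoSignotope n d τ) :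
    {A : Finset ℕ | τ A = true}.Finite := by
  apply Set.Finite.subset ((Finset.Icc 1 n).powerset.finite_toSet)
  intro A hA
  simp only [Finset.coe_powerset, Set.mem_preimage, Set.mem_powerset_iff, Finset.coe_subset]
  exact (hco.1 A hA).1

lemma card_sdiff_low (C : Finset ℕ) (hC : C ⊆ Finset.Icc 1 n) (a : ℕ) (han : a ≤ n) :
    (Finset.Icc 1 a \ C).card = a - (C.filter (· ≤ a)).card := by
  have he : Finset.Icc 1 a \ C = Finset.Icc 1 a \ (C.filter (· ≤ a)) := by
    ext z
    simp only [Finset.mem_sdiff, Finset.mem_filter, Finset.mem_Icc]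
    constructor
    · rintro ⟨⟨h1, h2⟩, h3⟩; exact ⟨⟨h1, h2⟩, fun hh => h3 hh.1⟩
    · rintro ⟨⟨h1, h2⟩, h3⟩; exact ⟨⟨h1, h2⟩, fun hh => h3 ⟨hh, h2⟩⟩
  rw [he, Finset.card_sdiff_of_subset]
  · rw [Nat.card_Icc]; omega
  · intro z hz
    rw [Finset.mem_filter] at hz
    have := hC hz.1
    rw [Finset.mem_Icc] at this ⊢
    exact ⟨this.1, hz.2⟩

lemma card_sdiff_high (C : Finset ℕ) (hC : C ⊆ Finset.Icc 1 n) (a : ℕ) (ha1 : 1 ≤ a) :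
    (Finset.Icc a n \ C).card = (n + 1 - a) - (C.filter (a ≤ ·)).card := by
  have he : Finset.Icc a n \ C = Finset.Icc a n \ (C.filter (a ≤ ·)) := by
    ext z
    simp only [Finset.mem_sdiff, Finset.mem_filter, Finset.mem_Icc]
    constructor
    · rintro ⟨⟨h1, h2⟩, h3⟩; exact ⟨⟨h1, h2⟩, fun hh => h3 hh.1⟩
    · rintro ⟨⟨h1, h2⟩, h3⟩; exact ⟨⟨h1, h2⟩, fun hh => h3 ⟨hh, h1⟩⟩
  rw [he, Finset.card_sdiff_of_subset]
  · rw [Nat.card_Icc]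
  · intro z hz
    rw [Finset.mem_filter] at hz
    have := hC hz.1
    rw [Finset.mem_Icc] at this ⊢
    exact ⟨hz.2, this.2⟩

lemma pair_lemma (n d p : ℕ) (τ : Finset ℕ → Bool) (hco : IsCoSignotope n d τ)
    (hcount : plusCount τ = p) (hpd : p + d ≤ n)
    (C C' : Finset ℕ) (a a' : ℕ) (ha : a ∈ Finset.Icc 1 n) (ha' : a' ∈ Finset.Icc 1 n)
    (hC : C ⊆ Finset.Icc 1 n) (hC' : C' ⊆ Finset.Icc 1 n) (haC : a ∉ C)
    (hlow : ∀ x ∈ Finset.Icc 1 a \ C, τ (insert x C) = true)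
    (hhigh : ∀ x ∈ Finset.Icc a' n \ C', τ (insert x C') = true)
    (harith : (C.filter (· ≤ a)).card + (C'.filter (a' ≤ ·)).card + (n - d) + 2
        ≤ a + (n + 1 - a'))
    (hover : ∀ x ∈ Finset.Icc 1 a \ C, ∀ x' ∈ Finset.Icc a' n \ C',
        insert x C = insert x' C' → insert x C = insert a C) : False := by
  rw [Finset.mem_Icc] at ha ha'
  set F1 := (Finset.Icc 1 a \ C).image (fun x => insert x C) with hF1
  set F2 := (Finset.Icc a' n \ C').image (fun x => insert x C') with hF2
  have hinj : ∀ (D : Finset ℕ), ∀ x ∉ D, ∀ y ∉ D, insert x D = insert y D → x = y := by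
    intro D x hx y hy he
    have : x ∈ insert y D := he ▸ Finset.mem_insert_self x D
    rcases Finset.mem_insert.mp this with h | h
    · exact h
    · exact absurd h hx
  have hc1 : F1.card = a - (C.filter (· ≤ a)).card := by
    rw [hF1, Finset.card_image_of_injOn, card_sdiff_low C hC a ha.2]
    intro x hx y hy he
    rw [Finset.mem_coe, Finset.mem_sdiff] at hx hy
    exact hinj C x hx.2 y hy.2 he
  have hc2 : F2.card = (n + 1 - a') - (C'.filter (a' ≤ ·)).card := by
    rw [hF2, Finset.card_image_of_injOn, card_sdiff_high C' hC' a' ha'.1]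
    intro x hx y hy he
    rw [Finset.mem_coe, Finset.mem_sdiff] at hx hy
    exact hinj C' x hx.2 y hy.2 he
  have hintc : (F1 ∩ F2).card ≤ 1 := by
    have : F1 ∩ F2 ⊆ {insert a C} := by
      intro A hA
      rw [Finset.mem_inter] at hA
      obtain ⟨x, hx, hxe⟩ := Finset.mem_image.mp hA.1
      obtain ⟨x', hx', hxe'⟩ := Finset.mem_image.mp hA.2
      rw [Finset.mem_singleton, ← hxe]
      exact hover x hx x' hx' (by rw [hxe, hxe'])
    calc (F1 ∩ F2).card ≤ ({insert a C} : Finset (Finset ℕ)).card := Finset.card_le_card this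
    _ = 1 := Finset.card_singleton _
  have hsub : ↑(F1 ∪ F2) ⊆ {A : Finset ℕ | τ A = true} := by
    intro A hA
    rw [Finset.coe_union, Set.mem_union] at hA
    rcases hA with hA | hA
    · obtain ⟨x, hx, hxe⟩ := Finset.mem_image.mp hA
      rw [Set.mem_setOf_eq, ← hxe]
      exact hlow x hx
    · obtain ⟨x, hx, hxe⟩ := Finset.mem_image.mp hA
      rw [Set.mem_setOf_eq, ← hxe]
      exact hhigh x hx
  have hle : (F1 ∪ F2).card ≤ p := by
    have h1 : ((F1 ∪ F2 : Finset (Finset ℕ)) : Set (Finset ℕ)).ncard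
        ≤ {A : Finset ℕ | τ A = true}.ncard := Set.ncard_le_ncard hsub (plus_finite hco)
    rw [Set.ncard_coe_finset] at h1
    rw [plusCount] at hcount
    omega
  have huni : (F1 ∪ F2).card + (F1 ∩ F2).card = F1.card + F2.card :=
    Finset.card_union_add_card_inter _ _
  have hs1 : (C.filter (· ≤ a)).card ≤ a := by
    have : C.filter (· ≤ a) ⊆ Finset.Icc 1 a := by
      intro z hz
      rw [Finset.mem_filter] at hz
      have := hC hz.1
      rw [Finset.mem_Icc] at this ⊢
      exact ⟨this.1, hz.2⟩
    have := Finset.card_le_card this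
    rwa [Nat.card_Icc] at this
  have hs2 : (C'.filter (a' ≤ ·)).card ≤ n + 1 - a' := by
    have : C'.filter (a' ≤ ·) ⊆ Finset.Icc a' n := by
      intro z hz
      rw [Finset.mem_filter] at hz
      have := hC' hz.1
      rw [Finset.mem_Icc] at this ⊢
      exact ⟨hz.2, this.2⟩
    have := Finset.card_le_card this
    rwa [Nat.card_Icc] at this
  omega
lemma sorted_countP (l : List ℕ) (hl : l.Pairwise (· < ·)) :
    ∀ (k : ℕ) (hk : k < l.length), l.countP (fun x => decide (x ≤ l[k]'hk)) = k + 1 := by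
  induction l with
  | nil => intro k hk; simp at hk
  | cons a tl ih =>
    rw [List.pairwise_cons] at hl
    intro k hk
    match k with
    | 0 =>
      simp only [List.getElem_cons_zero, List.countP_cons, decide_eq_true_eq, le_refl, if_true]
      have : tl.countP (fun x => decide (x ≤ a)) = 0 := by
        rw [List.countP_eq_zero]
        intro x hx
        simp only [decide_eq_true_eq]
        have := hl.1 x hx
        omega
      omega
    | (k'+1) =>
      have hk' : k' < tl.length := by simpa using hk
      have hgc : (a :: tl)[k'+1]'hk = tl[k']'hk' := by simp
      simp only [hgc, List.countP_cons, decide_eq_true_eq]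
      have hmem : tl[k']'hk' ∈ tl := tl.getElem_mem hk'
      have : a ≤ tl[k']'hk' := le_of_lt (hl.1 _ hmem)
      rw [ih hl.2 k' hk']
      simp [this]

lemma filter_card_eq_countP (B : Finset ℕ) (b : ℕ) :
    (B.filter (fun x => x ≤ b)).card
      = (B.sort (· ≤ ·)).countP (fun x => decide (x ≤ b)) := by
  have hp : List.Perm (B.sort (· ≤ ·)) B.toList := Finset.sort_perm_toList _ _
  rw [hp.countP_eq, ← Multiset.coe_countP]
  have hbv : (B.toList : Multiset ℕ) = B.val := by
    simp [Finset.toList]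
  rw [hbv, Multiset.countP_eq_card_filter]
  rfl

lemma nthElt_rank (B : Finset ℕ) (b : ℕ) (hb : b ∈ B) :
    nthElt B ((B.filter (fun x => x ≤ b)).card) = b := by
  obtain ⟨k, hk, he⟩ := idx_of_mem B hb
  have hcount : (B.sort (· ≤ ·)).countP (fun x => decide (x ≤ b)) = k + 1 := by
    have := sorted_countP (B.sort (· ≤ ·)) (Finset.sortedLT_sort B).pairwise k hk
    rw [he] at this
    exact this
  have hcard : (B.filter (fun x => x ≤ b)).card = k + 1 := by
    rw [filter_card_eq_countP B b]; exact hcount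
  rw [hcard, nthElt]
  simp only [Nat.add_sub_cancel]
  rw [List.getD_eq_getElem?_getD, List.getElem?_eq_getElem hk]
  simpa using he

lemma rk_one (B : Finset ℕ) (b : ℕ) (hb : b ∈ B) :
    1 ≤ (B.filter (fun x => x ≤ b)).card := by
  have : b ∈ B.filter (fun x => x ≤ b) := Finset.mem_filter.mpr ⟨hb, le_refl b⟩
  exact Finset.card_pos.mpr ⟨b, this⟩

lemma rk_le (B : Finset ℕ) (b : ℕ) :
    (B.filter (fun x => x ≤ b)).card ≤ B.card :=
  Finset.card_le_card (Finset.filter_subset _ _)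
lemma filter_le_insert_erase_s7 (B : Finset ℕ) (q y c : ℕ) (hq : q ∈ B) (hy : y ∉ B)
    (hside : q ≤ c ↔ y ≤ c) :
    ((insert y (B.erase q)).filter (fun x => x ≤ c)).card
      = (B.filter (fun x => x ≤ c)).card := by
  rw [Finset.filter_insert]
  by_cases hyc : y ≤ c
  · have hqc : q ≤ c := hside.mpr hyc
    rw [if_pos hyc, Finset.filter_erase]
    have hqf : q ∈ B.filter (fun x => x ≤ c) := Finset.mem_filter.mpr ⟨hq, hqc⟩
    have hynf : y ∉ (B.filter (fun x => x ≤ c)).erase q := by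
      intro h
      exact hy (Finset.mem_filter.mp (Finset.mem_of_mem_erase h)).1
    rw [Finset.card_insert_of_notMem hynf, Finset.card_erase_of_mem hqf]
    have := Finset.card_pos.mpr ⟨q, hqf⟩
    omega
  · have hqc : ¬ q ≤ c := fun h => hyc (hside.mp h)
    rw [if_neg hyc, Finset.filter_erase, Finset.erase_eq_of_notMem]
    intro h
    exact hqc (Finset.mem_filter.mp h).2

lemma erase_filter_le_card (B : Finset ℕ) (c : ℕ) (hc : c ∈ B) :
    ((B.erase c).filter (fun x => x ≤ c)).card = (B.filter (fun x => x ≤ c)).card - 1 := by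
  have hcf : c ∈ B.filter (fun x => x ≤ c) := Finset.mem_filter.mpr ⟨hc, le_refl c⟩
  rw [Finset.filter_erase, Finset.card_erase_of_mem hcf]

lemma erase_filter_ge_card (B : Finset ℕ) (c : ℕ) (hc : c ∈ B) :
    ((B.erase c).filter (fun x => c ≤ x)).card = B.card - (B.filter (fun x => x ≤ c)).card := by
  have he : (B.erase c).filter (fun x => c ≤ x) = B \ B.filter (fun x => x ≤ c) := by
    ext z
    simp only [Finset.mem_filter, Finset.mem_erase, Finset.mem_sdiff]
    constructor
    · rintro ⟨⟨hz1, hz2⟩, hz3⟩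
      refine ⟨hz2, fun hh => ?_⟩
      have := hh.2
      omega
    · rintro ⟨hz1, hz2⟩
      have : ¬ z ≤ c := fun hh => hz2 ⟨hz1, hh⟩
      exact ⟨⟨by omega, hz1⟩, by omega⟩
  rw [he, Finset.card_sdiff_of_subset (Finset.filter_subset _ _)]
lemma transfer (n d p : ℕ) (τ : Finset ℕ → Bool) (hco : IsCoSignotope n d τ)
    (hcount : plusCount τ = p) (hpd : p + d ≤ n) (hd1 : 1 ≤ d) (hdn : d < n)
    (B : Finset ℕ) (q y : ℕ) (hBsub : B ⊆ Finset.Icc 1 n) (hBcard : B.card = d)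
    (hτB : τ B = true) (hq : q ∈ B) (hy : y ∉ B) (hyI : y ∈ Finset.Icc 1 n)
    (hτB' : τ (insert y (B.erase q)) = true)
    (c : ℕ) (hc : c ∈ B) (hcq : c ≠ q) (hside : q ≤ c ↔ y ≤ c) :
    (LdownP τ B c → LdownP τ (insert y (B.erase q)) c) ∧
    (RupP n τ B c → RupP n τ (insert y (B.erase q)) c) := by
  set B' := insert y (B.erase q) with hB'
  have hcy : c ≠ y := fun h => hy (h ▸ hc)
  have hqy : q ≠ y := fun h => hy (h ▸ hq)
  have hcB' : c ∈ B' := Finset.mem_insert_of_mem (Finset.mem_erase.mpr ⟨hcq, hc⟩)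
  have hB'sub : B' ⊆ Finset.Icc 1 n :=
    Finset.insert_subset hyI ((Finset.erase_subset _ _).trans hBsub)
  have hynB : y ∉ B.erase q := fun h => hy (Finset.mem_of_mem_erase h)
  have hB'card : B'.card = d := by
    rw [hB', Finset.card_insert_of_notMem hynB, Finset.card_erase_of_mem hq, hBcard]
    omega
  have hqnB' : q ∉ B' := by
    intro h
    rcases Finset.mem_insert.mp h with h | h
    · exact hqy h
    · exact (Finset.mem_erase.mp h).1 rfl
  have hcIcc : c ∈ Finset.Icc 1 n := hBsub hc
  have hcIcc' := Finset.mem_Icc.mp hcIcc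
  set t₀ := (B.filter (fun x => x ≤ c)).card with ht₀
  have ht1 : (B'.filter (fun x => x ≤ c)).card = t₀ := by
    rw [hB']; exact filter_le_insert_erase_s7 B q y c hq hy hside
  have ht₀1 : 1 ≤ t₀ := rk_one B c hc
  have ht₀d : t₀ ≤ d := hBcard ▸ rk_le B c
  have hyB'e : y ∈ B'.erase c := Finset.mem_erase.mpr ⟨fun h => hcy h.symm, Finset.mem_insert_self _ _⟩
  have hqBe : q ∈ B.erase c := Finset.mem_erase.mpr ⟨fun h => hcq h.symm, hq⟩
  have hqnB'e : q ∉ B'.erase c := fun h => hqnB' (Finset.mem_of_mem_erase h)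
  have hynBe : y ∉ B.erase c := fun h => hy (Finset.mem_of_mem_erase h)
  constructor
  · -- Ldown transfer
    intro hLd
    by_contra hbad
    rw [LdownP] at hbad
    push_neg at hbad
    obtain ⟨x₀, hx₀I, hx₀nm, hx₀ne⟩ := hbad
    have hx₀f : τ (insert x₀ (B'.erase c)) = false := by
      cases h : τ (insert x₀ (B'.erase c)) with
      | true => exact absurd h hx₀ne
      | false => rfl
    have hRu' : RupP n τ B' c :=
      ray_up hco hd1 hdn hB'sub hB'card hτB' hcB' hx₀I hx₀nm hx₀f
    refine pair_lemma n d p τ hco hcount hpd (B.erase c) (B'.erase c) c c hcIcc hcIcc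
      ((Finset.erase_subset _ _).trans hBsub) ((Finset.erase_subset _ _).trans hB'sub)
      (Finset.notMem_erase _ _) ?_ ?_ ?_ ?_
    · intro x hx
      rw [Finset.mem_sdiff] at hx
      exact hLd x hx.1 hx.2
    · intro x hx
      rw [Finset.mem_sdiff] at hx
      exact hRu' x hx.1 hx.2
    · have e1 : ((B.erase c).filter (fun x => x ≤ c)).card = t₀ - 1 :=
        erase_filter_le_card B c hc
      have e2 : ((B'.erase c).filter (fun x => c ≤ x)).card = d - t₀ := by
        rw [erase_filter_ge_card B' c hcB', hB'card, ht1]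
      rw [e1, e2]
      omega
    · intro x hx x' hx' heq
      exfalso
      rw [Finset.mem_sdiff] at hx hx'
      have hqx' : q = x' := by
        have : q ∈ insert x' (B'.erase c) := heq ▸ Finset.mem_insert_of_mem hqBe
        rcases Finset.mem_insert.mp this with h | h
        · exact h
        · exact absurd h hqnB'e
      have hyx : y = x := by
        have : y ∈ insert x (B.erase c) := heq ▸ Finset.mem_insert_of_mem hyB'e
        rcases Finset.mem_insert.mp this with h | h
        · exact h
        · exact absurd h hynBe
      have h1 : c ≤ q := by
        rw [hqx']; exact (Finset.mem_Icc.mp hx'.1).1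
      have h2 : y ≤ c := by
        rw [hyx]; exact (Finset.mem_Icc.mp hx.1).2
      have := hside.mpr h2
      exact hcq (by omega)
  · -- Rup transfer
    intro hRu
    by_contra hbad
    rw [RupP] at hbad
    push_neg at hbad
    obtain ⟨x₀, hx₀I, hx₀nm, hx₀ne⟩ := hbad
    have hx₀f : τ (insert x₀ (B'.erase c)) = false := by
      cases h : τ (insert x₀ (B'.erase c)) with
      | true => exact absurd h hx₀ne
      | false => rfl
    have hLd' : LdownP τ B' c :=
      ray_down hco hd1 hdn hB'sub hB'card hτB' hcB' hx₀I hx₀nm hx₀f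
    refine pair_lemma n d p τ hco hcount hpd (B'.erase c) (B.erase c) c c hcIcc hcIcc
      ((Finset.erase_subset _ _).trans hB'sub) ((Finset.erase_subset _ _).trans hBsub)
      (Finset.notMem_erase _ _) ?_ ?_ ?_ ?_
    · intro x hx
      rw [Finset.mem_sdiff] at hx
      exact hLd' x hx.1 hx.2
    · intro x hx
      rw [Finset.mem_sdiff] at hx
      exact hRu x hx.1 hx.2
    · have e1 : ((B'.erase c).filter (fun x => x ≤ c)).card = t₀ - 1 := by
        rw [erase_filter_le_card B' c hcB', ht1]
      have e2 : ((B.erase c).filter (fun x => c ≤ x)).card = d - t₀ := by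
        rw [erase_filter_ge_card B c hc, hBcard]
      rw [e1, e2]
      omega
    · intro x hx x' hx' heq
      exfalso
      rw [Finset.mem_sdiff] at hx hx'
      have hqx : q = x := by
        have : q ∈ insert x (B'.erase c) := heq ▸ Finset.mem_insert_of_mem hqBe
        rcases Finset.mem_insert.mp this with h | h
        · exact h
        · exact absurd h hqnB'e
      have hyx' : y = x' := by
        have : y ∈ insert x' (B.erase c) := heq ▸ Finset.mem_insert_of_mem hyB'e
        rcases Finset.mem_insert.mp this with h | h
        · exact h
        · exact absurd h hynBe
      have h1 : q ≤ c := by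
        rw [hqx]; exact (Finset.mem_Icc.mp hx.1).2
      have h2 : c ≤ y := by
        rw [hyx']; exact (Finset.mem_Icc.mp hx'.1).1
      have := hside.mp h1
      exact hcy (by omega)
structure MyInv (n d i : ℕ) (τ : Finset ℕ → Bool) (B P Q : Finset ℕ) : Prop where
  union : B = P ∪ Q
  plt : ∀ a ∈ P, ∀ b ∈ Q, a < b
  pcard : P.card = i
  tB : τ B = true
  ldown : ∀ c ∈ P, LdownP τ B c
  rup : ∀ c ∈ Q, RupP n τ B c

def wt (n : ℕ) (P Q : Finset ℕ) : ℕ := (∑ x ∈ P, x) + ∑ x ∈ Q, (n - x)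

lemma step_lemma (n d p i : ℕ) (τ : Finset ℕ → Bool) (hco : IsCoSignotope n d τ)
    (hcount : plusCount τ = p) (hpd : p + d ≤ n) (hd1 : 1 ≤ d) (hdn : d < n) (hi : i ≤ d)
    (B P Q : Finset ℕ) (hinv : MyInv n d i τ B P Q) :
    B = sourceSubset n d i ∨
      ∃ B' P' Q', MyInv n d i τ B' P' Q' ∧ GAdj n d B' B ∧ wt n P' Q' < wt n P Q := by
  obtain ⟨hPQ, hplt, hPc, htB, hld, hru⟩ := hinv
  have hBsub : B ⊆ Finset.Icc 1 n := (hco.1 B htB).1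
  have hBcard : B.card = d := (hco.1 B htB).2
  have hPB : P ⊆ B := by rw [hPQ]; exact Finset.subset_union_left
  have hQB : Q ⊆ B := by rw [hPQ]; exact Finset.subset_union_right
  have hdisj : Disjoint P Q := by
    rw [Finset.disjoint_left]
    intro a haP haQ
    exact lt_irrefl a (hplt a haP a haQ)
  have hQc : Q.card = d - i := by
    have := Finset.card_union_of_disjoint hdisj
    rw [← hPQ, hBcard, hPc] at this
    omega
  set U := (Finset.Icc 1 n \ B).filter (fun yy => ∃ qq ∈ Q, qq < yy) with hU
  by_cases hUne : U.Nonempty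
  · right
    set y := U.max' hUne with hy
    have hyU : y ∈ U := U.max'_mem hUne
    rw [hU, Finset.mem_filter, Finset.mem_sdiff] at hyU
    obtain ⟨⟨hyI, hynB⟩, q0, hq0Q, hq0y⟩ := hyU
    have hQyne : (Q.filter (fun x => x < y)).Nonempty := ⟨q0, Finset.mem_filter.mpr ⟨hq0Q, hq0y⟩⟩
    set q := (Q.filter (fun x => x < y)).max' hQyne with hq
    have hqmem : q ∈ Q.filter (fun x => x < y) := Finset.max'_mem _ _
    rw [Finset.mem_filter] at hqmem
    obtain ⟨hqQ, hqy⟩ := hqmem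
    have hqB : q ∈ B := hQB hqQ
    have hqnP : q ∉ P := Finset.disjoint_right.mp hdisj hqQ
    have hint : ∀ z ∈ B, ¬ (q < z ∧ z < y) := by
      intro z hz ⟨h1, h2⟩
      rw [hPQ, Finset.mem_union] at hz
      rcases hz with hz | hz
      · exact absurd (hplt z hz q hqQ) (by omega)
      · have : z ∈ Q.filter (fun x => x < y) := Finset.mem_filter.mpr ⟨hz, h2⟩
        have := Finset.le_max' _ z this
        omega
    have hynBe : y ∉ B.erase q := fun h => hynB (Finset.mem_of_mem_erase h)
    set B' := insert y (B.erase q) with hB'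
    have hyIcc := Finset.mem_Icc.mp hyI
    have hqIcc := Finset.mem_Icc.mp (hBsub hqB)
    have htB' : τ B' = true := by
      apply hru q hqQ y (Finset.mem_Icc.mpr ⟨le_of_lt hqy, hyIcc.2⟩) hynBe
    have hB'sub : B' ⊆ Finset.Icc 1 n :=
      Finset.insert_subset hyI ((Finset.erase_subset _ _).trans hBsub)
    have hB'card : B'.card = d := by
      rw [hB', Finset.card_insert_of_notMem hynBe, Finset.card_erase_of_mem hqB, hBcard]
      omega
    have hqnB' : q ∉ B' := by
      intro h
      rcases Finset.mem_insert.mp h with h | h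
      · omega
      · exact (Finset.mem_erase.mp h).1 rfl
    have hsideP : ∀ c ∈ P, (q ≤ c ↔ y ≤ c) := by
      intro c hcP
      have h1 := hplt c hcP q hqQ
      constructor <;> intro h <;> omega
    have hsideQ : ∀ c ∈ Q.erase q, (q ≤ c ↔ y ≤ c) := by
      intro c hcQ
      rw [Finset.mem_erase] at hcQ
      have hor : c < q ∨ y < c := by
        by_contra hcon
        push_neg at hcon
        have h1 : q < c := lt_of_le_of_ne hcon.1 (Ne.symm hcQ.1)
        have h2 : c < y := lt_of_le_of_ne hcon.2 (fun h => hynB (h ▸ hQB hcQ.2))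
        exact hint c (hQB hcQ.2) ⟨h1, h2⟩
      constructor <;> intro h <;> omega
    refine ⟨B', P, insert y (Q.erase q), ⟨?_, ?_, hPc, htB', ?_, ?_⟩, ?_, ?_⟩
    · -- union
      ext z
      rw [hB', hPQ]
      simp only [Finset.mem_insert, Finset.mem_erase, Finset.mem_union]
      constructor
      · rintro (rfl | ⟨hzq, hz⟩)
        · right; left; rfl
        · rcases hz with hz | hz
          · left; exact hz
          · right; right; exact ⟨hzq, hz⟩
      · rintro (hz | rfl | ⟨hzq, hz⟩)
        · right; exact ⟨fun h => hqnP (h ▸ hz), Or.inl hz⟩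
        · left; rfl
        · right; exact ⟨hzq, Or.inr hz⟩
    · -- plt
      intro a haP b hb
      rcases Finset.mem_insert.mp hb with rfl | hb
      · have := hplt a haP q hqQ; omega
      · exact hplt a haP b (Finset.mem_of_mem_erase hb)
    · -- ldown
      intro c hcP
      have hcB : c ∈ B := hPB hcP
      have hcq : c ≠ q := fun h => hqnP (h ▸ hcP)
      exact (transfer n d p τ hco hcount hpd hd1 hdn B q y hBsub hBcard htB hqB hynB hyI
        htB' c hcB hcq (hsideP c hcP)).1 (hld c hcP)
    · -- rup
      intro c hc
      rcases Finset.mem_insert.mp hc with rfl | hc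
      · intro x hxI hxn
        have he : B'.erase y = B.erase q := by rw [hB', Finset.erase_insert hynBe]
        rw [he]
        rw [he] at hxn
        rw [Finset.mem_Icc] at hxI
        exact hru q hqQ x (Finset.mem_Icc.mpr ⟨by omega, hxI.2⟩) hxn
      · have hcQ := Finset.mem_of_mem_erase hc
        have hcB : c ∈ B := hQB hcQ
        have hcq : c ≠ q := (Finset.mem_erase.mp hc).1
        exact (transfer n d p τ hco hcount hpd hd1 hdn B q y hBsub hBcard htB hqB hynB hyI
          htB' c hcB hcq (hsideQ c hc)).2 (hru c hcQ)
    · -- GAdj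
      refine ⟨hB'sub, hB'card, hBsub, hBcard, y, Finset.mem_insert_self _ _, q,
        hBsub hqB, hqnB', ?_, ?_⟩
      · rw [hB', Finset.erase_insert hynBe, Finset.insert_erase hqB]
      · intro z hz
        rw [hB', Finset.erase_insert hynBe] at hz
        have hzB : z ∈ B := Finset.mem_of_mem_erase hz
        rw [min_eq_right (le_of_lt hqy), max_eq_left (le_of_lt hqy)]
        exact hint z hzB
    · -- weight
      have hynQe : y ∉ Q.erase q := fun h => hynB (hQB (Finset.mem_of_mem_erase h))
      have h1 : (∑ x ∈ Q.erase q, (n - x)) + (n - q) = ∑ x ∈ Q, (n - x) :=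
        Finset.sum_erase_add Q _ hqQ
      have h2 : (∑ x ∈ insert y (Q.erase q), (n - x)) = (n - y) + ∑ x ∈ Q.erase q, (n - x) :=
        Finset.sum_insert hynQe
      rw [wt, wt, h2]
      have : n - y < n - q := by omega
      omega
  · set V := (Finset.Icc 1 n \ B).filter (fun yy => ∃ qq ∈ P, yy < qq) with hV
    by_cases hVne : V.Nonempty
    · right
      set y := V.min' hVne with hy
      have hyV : y ∈ V := V.min'_mem hVne
      rw [hV, Finset.mem_filter, Finset.mem_sdiff] at hyV
      obtain ⟨⟨hyI, hynB⟩, q0, hq0P, hq0y⟩ := hyV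
      have hPyne : (P.filter (fun x => y < x)).Nonempty := ⟨q0, Finset.mem_filter.mpr ⟨hq0P, hq0y⟩⟩
      set q := (P.filter (fun x => y < x)).min' hPyne with hq
      have hqmem : q ∈ P.filter (fun x => y < x) := Finset.min'_mem _ _
      rw [Finset.mem_filter] at hqmem
      obtain ⟨hqP, hqy⟩ := hqmem
      have hqB : q ∈ B := hPB hqP
      have hqnQ : q ∉ Q := Finset.disjoint_left.mp hdisj hqP
      have hint : ∀ z ∈ B, ¬ (y < z ∧ z < q) := by
        intro z hz ⟨h1, h2⟩
        rw [hPQ, Finset.mem_union] at hz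
        rcases hz with hz | hz
        · have : z ∈ P.filter (fun x => y < x) := Finset.mem_filter.mpr ⟨hz, h1⟩
          have := Finset.min'_le _ z this
          omega
        · exact absurd (hplt q hqP z hz) (by omega)
      have hynBe : y ∉ B.erase q := fun h => hynB (Finset.mem_of_mem_erase h)
      set B' := insert y (B.erase q) with hB'
      have hyIcc := Finset.mem_Icc.mp hyI
      have hqIcc := Finset.mem_Icc.mp (hBsub hqB)
      have htB' : τ B' = true := by
        apply hld q hqP y (Finset.mem_Icc.mpr ⟨hyIcc.1, le_of_lt hqy⟩) hynBe
      have hB'sub : B' ⊆ Finset.Icc 1 n :=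
        Finset.insert_subset hyI ((Finset.erase_subset _ _).trans hBsub)
      have hB'card : B'.card = d := by
        rw [hB', Finset.card_insert_of_notMem hynBe, Finset.card_erase_of_mem hqB, hBcard]
        omega
      have hsideQ' : ∀ c ∈ Q, (q ≤ c ↔ y ≤ c) := by
        intro c hcQ
        have h1 := hplt q hqP c hcQ
        constructor <;> intro h <;> omega
      have hsideP' : ∀ c ∈ P.erase q, (q ≤ c ↔ y ≤ c) := by
        intro c hcP
        rw [Finset.mem_erase] at hcP
        have hor : c < y ∨ q < c := by
          by_contra hcon
          push_neg at hcon
          have h1 : y < c := lt_of_le_of_ne hcon.1 (fun h => hynB (h.symm ▸ hPB hcP.2))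
          have h2 : c < q := lt_of_le_of_ne hcon.2 hcP.1
          exact hint c (hPB hcP.2) ⟨h1, h2⟩
        constructor <;> intro h <;> omega
      have hi1 : 1 ≤ i := by
        rw [← hPc]
        exact Finset.card_pos.mpr ⟨q, hqP⟩
      have hynPe : y ∉ P.erase q := fun h => hynB (hPB (Finset.mem_of_mem_erase h))
      refine ⟨B', insert y (P.erase q), Q, ⟨?_, ?_, ?_, htB', ?_, ?_⟩, ?_, ?_⟩
      · -- union
        ext z
        rw [hB', hPQ]
        simp only [Finset.mem_insert, Finset.mem_erase, Finset.mem_union]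
        constructor
        · rintro (rfl | ⟨hzq, hz⟩)
          · left; left; rfl
          · rcases hz with hz | hz
            · left; right; exact ⟨hzq, hz⟩
            · right; exact hz
        · rintro ((rfl | ⟨hzq, hz⟩) | hz)
          · left; rfl
          · right; exact ⟨hzq, Or.inl hz⟩
          · right; exact ⟨fun h => hqnQ (h ▸ hz), Or.inr hz⟩
      · -- plt
        intro a ha b hbQ
        rcases Finset.mem_insert.mp ha with rfl | ha
        · have := hplt q hqP b hbQ; omega
        · exact hplt a (Finset.mem_of_mem_erase ha) b hbQ
      · -- pcard
        rw [Finset.card_insert_of_notMem hynPe, Finset.card_erase_of_mem hqP, hPc]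
        omega
      · -- ldown
        intro c hc
        rcases Finset.mem_insert.mp hc with rfl | hc
        · intro x hxI hxn
          have he : B'.erase y = B.erase q := by rw [hB', Finset.erase_insert hynBe]
          rw [he]
          rw [he] at hxn
          rw [Finset.mem_Icc] at hxI
          exact hld q hqP x (Finset.mem_Icc.mpr ⟨hxI.1, by omega⟩) hxn
        · have hcP := Finset.mem_of_mem_erase hc
          have hcB : c ∈ B := hPB hcP
          have hcq : c ≠ q := (Finset.mem_erase.mp hc).1
          exact (transfer n d p τ hco hcount hpd hd1 hdn B q y hBsub hBcard htB hqB hynB hyI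
            htB' c hcB hcq (hsideP' c hc)).1 (hld c hcP)
      · -- rup
        intro c hcQ
        have hcB : c ∈ B := hQB hcQ
        have hcq : c ≠ q := fun h => hqnQ (h ▸ hcQ)
        exact (transfer n d p τ hco hcount hpd hd1 hdn B q y hBsub hBcard htB hqB hynB hyI
          htB' c hcB hcq (hsideQ' c hcQ)).2 (hru c hcQ)
      · -- GAdj
        have hqnB' : q ∉ B' := by
          intro h
          rcases Finset.mem_insert.mp h with h | h
          · omega
          · exact (Finset.mem_erase.mp h).1 rfl
        refine ⟨hB'sub, hB'card, hBsub, hBcard, y, Finset.mem_insert_self _ _, q,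
          hBsub hqB, hqnB', ?_, ?_⟩
        · rw [hB', Finset.erase_insert hynBe, Finset.insert_erase hqB]
        · intro z hz
          rw [hB', Finset.erase_insert hynBe] at hz
          have hzB : z ∈ B := Finset.mem_of_mem_erase hz
          rw [min_eq_left (le_of_lt hqy), max_eq_right (le_of_lt hqy)]
          exact hint z hzB
      · -- weight
        have h1 : (∑ x ∈ P.erase q, x) + q = ∑ x ∈ P, x :=
          Finset.sum_erase_add P _ hqP
        have h2 : (∑ x ∈ insert y (P.erase q), x) = y + ∑ x ∈ P.erase q, x :=
          Finset.sum_insert hynPe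
        rw [wt, wt, h2]
        omega
    · -- no moves: B is the source subset
      left
      have hPsub : P = Finset.Icc 1 i := by
        rcases Nat.eq_zero_or_pos i with hi0 | hipos
        · rw [hi0]
          simp only [Finset.Icc_eq_empty_of_lt (by omega : (1:ℕ) > 0)]
          exact Finset.card_eq_zero.mp (by rw [hPc, hi0])
        · apply Finset.eq_of_subset_of_card_le
          · intro pp hpp
            rw [Finset.mem_Icc]
            have hpI := Finset.mem_Icc.mp (hBsub (hPB hpp))
            refine ⟨hpI.1, ?_⟩
            by_contra hgt
            push_neg at hgt
            -- pp > i; find a free slot below pp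
            have hsub : Finset.Icc 1 (pp-1) ⊆ B → False := by
              intro hsubB
              have hsub2 : Finset.Icc 1 (pp-1) ⊆ P.erase pp := by
                intro z hz
                rw [Finset.mem_Icc] at hz
                have hzB : z ∈ B := hsubB (Finset.mem_Icc.mpr hz)
                rw [Finset.mem_erase]
                refine ⟨by omega, ?_⟩
                rw [hPQ, Finset.mem_union] at hzB
                rcases hzB with h | h
                · exact h
                · exact absurd (hplt pp hpp z h) (by omega)
              have hc1 := Finset.card_le_card hsub2
              rw [Nat.card_Icc, Finset.card_erase_of_mem hpp, hPc] at hc1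
              omega
            have : ∃ z ∈ Finset.Icc 1 (pp-1), z ∉ B := by
              by_contra hcon
              push_neg at hcon
              exact hsub (fun z hz => hcon z hz)
            obtain ⟨z, hzI, hznB⟩ := this
            have hzIcc := Finset.mem_Icc.mp hzI
            have : z ∈ V := by
              rw [hV, Finset.mem_filter, Finset.mem_sdiff]
              exact ⟨⟨Finset.mem_Icc.mpr ⟨hzIcc.1, by omega⟩, hznB⟩, pp, hpp, by omega⟩
            exact hVne ⟨z, this⟩
          · rw [Nat.card_Icc, hPc]
            omega
      have hQsub : Q = Finset.Icc (n - d + i + 1) n := by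
        apply Finset.eq_of_subset_of_card_le
        · intro qq hqq
          rw [Finset.mem_Icc]
          have hqI := Finset.mem_Icc.mp (hBsub (hQB hqq))
          refine ⟨?_, hqI.2⟩
          by_contra hgt
          push_neg at hgt
          have hqle : qq ≤ n - d + i := by omega
          have hsub : Finset.Icc (qq+1) n ⊆ B → False := by
            intro hsubB
            have hsub2 : Finset.Icc (qq+1) n ⊆ Q.erase qq := by
              intro z hz
              rw [Finset.mem_Icc] at hz
              have hzB : z ∈ B := hsubB (Finset.mem_Icc.mpr hz)
              rw [Finset.mem_erase]
              refine ⟨by omega, ?_⟩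
              rw [hPQ, Finset.mem_union] at hzB
              rcases hzB with h | h
              · exact absurd (hplt z h qq hqq) (by omega)
              · exact h
            have hc1 := Finset.card_le_card hsub2
            rw [Nat.card_Icc, Finset.card_erase_of_mem hqq, hQc] at hc1
            have hQpos : 1 ≤ d - i := by
              rw [← hQc]; exact Finset.card_pos.mpr ⟨qq, hqq⟩
            omega
          have : ∃ z ∈ Finset.Icc (qq+1) n, z ∉ B := by
            by_contra hcon
            push_neg at hcon
            exact hsub (fun z hz => hcon z hz)
          obtain ⟨z, hzI, hznB⟩ := this
          have hzIcc := Finset.mem_Icc.mp hzI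
          have : z ∈ U := by
            rw [hU, Finset.mem_filter, Finset.mem_sdiff]
            exact ⟨⟨Finset.mem_Icc.mpr ⟨by omega, hzIcc.2⟩, hznB⟩, qq, hqq, by omega⟩
          exact hUne ⟨z, this⟩
        · rw [Nat.card_Icc, hQc]
          omega
      rw [hPQ, hPsub, hQsub, sourceSubset]
lemma walk_lemma (n d p i : ℕ) (τ : Finset ℕ → Bool) (hco : IsCoSignotope n d τ)
    (hcount : plusCount τ = p) (hpd : p + d ≤ n) (hd1 : 1 ≤ d) (hdn : d < n) (hi : i ≤ d) :
    ∀ W B P Q, MyInv n d i τ B P Q → wt n P Q ≤ W →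
      τ (sourceSubset n d i) = true ∧ plusConn n d τ (sourceSubset n d i) B := by
  intro W
  induction W with
  | zero =>
    intro B P Q hinv hw
    rcases step_lemma n d p i τ hco hcount hpd hd1 hdn hi B P Q hinv with
      hsrc | ⟨B', P', Q', hinv', hadj, hlt⟩
    · rw [← hsrc]
      exact ⟨hinv.tB, Relation.ReflTransGen.refl⟩
    · omega
  | succ W ih =>
    intro B P Q hinv hw
    rcases step_lemma n d p i τ hco hcount hpd hd1 hdn hi B P Q hinv with
      hsrc | ⟨B', P', Q', hinv', hadj, hlt⟩
    · rw [← hsrc]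
      exact ⟨hinv.tB, Relation.ReflTransGen.refl⟩
    · obtain ⟨hsrc, hconn⟩ := ih B' P' Q' hinv' (by omega)
      exact ⟨hsrc, hconn.tail ⟨hinv'.tB, hinv.tB, hadj⟩⟩
/-- **Corollary.** Let `B` be a `+`-subset of `τ ∈ 𝒮̄_p(n,d)` and let `i` be the largest
index in `[d]` such that the `(τ,B,i)`-series is left-aligned (or `i = 0` if none exists).
Then `B ∈ 𝒞^τ_i`. -/
theorem statement7 (n d p : ℕ) (hdn : d < n) (hp1 : 1 ≤ p) (hp : p + d ≤ n)
    (τ : Finset ℕ → Bool) (hτ : τ ∈ coSigSet n d p)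
    (B : Finset ℕ) (hB : τ B = true) (i : ℕ) (hi : i ≤ d)
    (hmax :
      (1 ≤ i ∧ LeftAligned (series n τ (B.erase (nthElt B i))) ∧
        ∀ j, i < j → j ≤ d → ¬ LeftAligned (series n τ (B.erase (nthElt B j)))) ∨
      (i = 0 ∧ ∀ j, 1 ≤ j → j ≤ d →
        ¬ LeftAligned (series n τ (B.erase (nthElt B j))))) :
    B ∈ comp n d τ i := by
  obtain ⟨hco, hcount⟩ := hτ
  have hBsub : B ⊆ Finset.Icc 1 n := (hco.1 B hB).1
  have hBcard : B.card = d := (hco.1 B hB).2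
  rcases Nat.eq_zero_or_pos d with hd0 | hd1
  · -- degenerate case d = 0
    subst hd0
    have hB0 : B = ∅ := Finset.card_eq_zero.mp hBcard
    have hi0 : i = 0 := by omega
    subst hi0
    have hsrc : sourceSubset n 0 0 = ∅ := by
      rw [sourceSubset]
      rw [Finset.Icc_eq_empty (by omega : ¬ (1:ℕ) ≤ 0),
        Finset.Icc_eq_empty (by omega : ¬ n - 0 + 0 + 1 ≤ n)]
      simp
    refine ⟨?_, hB, ?_⟩
    · rw [hsrc, ← hB0]; exact hB
    · rw [hsrc, ← hB0]
      exact Relation.ReflTransGen.refl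
  · -- main case d ≥ 1
    have hinv : ∃ P Q, MyInv n d i τ B P Q := by
      rcases hmax with ⟨hi1, hla, hnla⟩ | ⟨hi0, hnla⟩
      · -- i ≥ 1
        set t := nthElt B i with ht
        have hlen : i - 1 < (B.sort (· ≤ ·)).length := by
          rw [Finset.length_sort, hBcard]; omega
        have htget : t = (B.sort (· ≤ ·))[i-1]'hlen := by
          rw [ht, nthElt, List.getD_eq_getElem?_getD, List.getElem?_eq_getElem hlen]
          rfl
        have htB : t ∈ B := by
          rw [htget]
          exact (Finset.mem_sort _).mp (List.getElem_mem hlen)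
        have hrankt : (B.filter (fun x => x ≤ t)).card = i := by
          rw [filter_card_eq_countP B t]
          have := sorted_countP (B.sort (· ≤ ·)) (Finset.sortedLT_sort B).pairwise (i-1) hlen
          rw [← htget] at this
          rw [this]
          omega
        have hLdt : LdownP τ B t := la_ldown hco hd1 hdn hBsub hBcard hB htB hla
        refine ⟨B.filter (fun x => x ≤ t), B.filter (fun x => ¬ x ≤ t), ?_, ?_, hrankt, hB, ?_, ?_⟩
        · exact (Finset.filter_union_filter_not_eq _ B).symm
        · intro a ha b hb
          rw [Finset.mem_filter] at ha hb
          omega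
        · -- ldown
          intro c hc
          rw [Finset.mem_filter] at hc
          obtain ⟨hcB, hct⟩ := hc
          rcases eq_or_ne c t with rfl | hne
          · exact hLdt
          have hclt : c < t := lt_of_le_of_ne hct hne
          set r := (B.filter (fun x => x ≤ c)).card with hr
          have hrlt : r < i := by
            rw [← hrankt, hr]
            apply Finset.card_lt_card
            constructor
            · intro z hz
              rw [Finset.mem_filter] at hz ⊢
              exact ⟨hz.1, by omega⟩
            · intro hsup
              have := hsup (Finset.mem_filter.mpr ⟨htB, le_refl t⟩)
              rw [Finset.mem_filter] at this
              omega
          by_contra hbad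
          rw [LdownP] at hbad
          push_neg at hbad
          obtain ⟨x₀, hx₀I, hx₀nm, hx₀ne⟩ := hbad
          have hx₀f : τ (insert x₀ (B.erase c)) = false := by
            cases h : τ (insert x₀ (B.erase c)) with
            | true => exact absurd h hx₀ne
            | false => rfl
          have hRup : RupP n τ B c := ray_up hco hd1 hdn hBsub hBcard hB hcB hx₀I hx₀nm hx₀f
          have hcIcc := Finset.mem_Icc.mp (hBsub hcB)
          have htIcc := Finset.mem_Icc.mp (hBsub htB)
          refine pair_lemma n d p τ hco hcount hp (B.erase t) (B.erase c) t c
            (hBsub htB) (hBsub hcB)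
            ((Finset.erase_subset _ _).trans hBsub) ((Finset.erase_subset _ _).trans hBsub)
            (Finset.notMem_erase _ _) ?_ ?_ ?_ ?_
          · intro x hx
            rw [Finset.mem_sdiff] at hx
            exact hLdt x hx.1 hx.2
          · intro x hx
            rw [Finset.mem_sdiff] at hx
            exact hRup x hx.1 hx.2
          · -- arithmetic
            have e1 : ((B.erase t).filter (fun x => x ≤ t)).card = i - 1 := by
              rw [erase_filter_le_card B t htB, hrankt]
            have e2 : ((B.erase c).filter (fun x => c ≤ x)).card = d - r := by
              rw [erase_filter_ge_card B c hcB, hBcard, hr]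
            rw [e1, e2]
            have hsplit : ((B.filter (fun x => x ≤ t)).filter (fun x => x ≤ c)).card
                + ((B.filter (fun x => x ≤ t)).filter (fun x => ¬ x ≤ c)).card
                = (B.filter (fun x => x ≤ t)).card :=
              Finset.card_filter_add_card_filter_not (fun x => x ≤ c)
            have hff : (B.filter (fun x => x ≤ t)).filter (fun x => x ≤ c)
                = B.filter (fun x => x ≤ c) := by
              ext z
              simp only [Finset.mem_filter]
              constructor
              · rintro ⟨⟨h1, h2⟩, h3⟩; exact ⟨h1, h3⟩
              · rintro ⟨h1, h2⟩; exact ⟨⟨h1, by omega⟩, h2⟩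
            have hm : ((B.filter (fun x => x ≤ t)).filter (fun x => ¬ x ≤ c)).card ≤ t - c := by
              have hsb : (B.filter (fun x => x ≤ t)).filter (fun x => ¬ x ≤ c)
                  ⊆ Finset.Icc (c+1) t := by
                intro z hz
                simp only [Finset.mem_filter] at hz
                rw [Finset.mem_Icc]
                omega
              have := Finset.card_le_card hsb
              rw [Nat.card_Icc] at this
              omega
            rw [hff, hrankt, ← hr] at hsplit
            have hr1 : 1 ≤ r := hr ▸ rk_one B c hcB
            omega
          · -- overlap
            intro x hx x' hx' heq
            rw [Finset.mem_sdiff] at hx hx'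
            have htBe : t ∈ B.erase c := Finset.mem_erase.mpr ⟨by omega, htB⟩
            have : t ∈ insert x (B.erase t) := by
              rw [heq]
              exact Finset.mem_insert_of_mem htBe
            rcases Finset.mem_insert.mp this with h | h
            · rw [← h]
            · exact absurd h (Finset.notMem_erase _ _)
        · -- rup
          intro c hc
          rw [Finset.mem_filter] at hc
          obtain ⟨hcB, hct⟩ := hc
          set r := (B.filter (fun x => x ≤ c)).card with hr
          have hnth : nthElt B r = c := nthElt_rank B c hcB
          have hri : i < r := by
            rw [← hrankt, hr]
            apply Finset.card_lt_card
            constructor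
            · intro z hz
              rw [Finset.mem_filter] at hz ⊢
              refine ⟨hz.1, by omega⟩
            · intro hsup
              have := hsup (Finset.mem_filter.mpr ⟨hcB, le_refl c⟩)
              rw [Finset.mem_filter] at this
              omega
          have hrd : r ≤ d := by
            rw [hr, ← hBcard]
            exact rk_le B c
          have := hnla r hri hrd
          rw [hnth] at this
          exact nla_rup hco hd1 hdn hBsub hBcard hB hcB this
      · -- i = 0
        subst hi0
        refine ⟨∅, B, ?_, ?_, Finset.card_empty, hB, ?_, ?_⟩
        · rw [Finset.empty_union]
        · intro a ha
          exact absurd ha (Finset.notMem_empty a)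
        · intro c hc
          exact absurd hc (Finset.notMem_empty c)
        · intro c hcB
          set r := (B.filter (fun x => x ≤ c)).card with hr
          have hnth : nthElt B r = c := nthElt_rank B c hcB
          have hr1 : 1 ≤ r := hr ▸ rk_one B c hcB
          have hrd : r ≤ d := by
            rw [hr, ← hBcard]
            exact rk_le B c
          have := hnla r hr1 hrd
          rw [hnth] at this
          exact nla_rup hco hd1 hdn hBsub hBcard hB hcB this
    obtain ⟨P, Q, hinvB⟩ := hinv
    obtain ⟨hsrc, hconn⟩ := walk_lemma n d p i τ hco hcount hp hd1 hdn hi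
      (wt n P Q) B P Q hinvB (le_refl _)
    exact ⟨hsrc, hB, hconn⟩
end

section
/- Let $n, d, p$ be integers with $0 \le d < n$ and $0 \le p \le n-d$. For every co-signotope $\tau \in \bar{\mathcal{S}}_p(n,d)$ with $+$-component decomposition $\Delta(\tau)=(\tau_0,\tau_1,\dots,\tau_d)$, the sign function $\tau_i$ is a co-signotope belonging to $\bar{\mathcal{S}}_{|\mathcal{C}^{\tau}_i|,i}(n,d)$ for every $i \in \{0,1,\dots,d\}$. -/
section AuxStatement10

lemma ofPlusSet_eq_true {S : Set (Finset ℕ)} {A : Finset ℕ} :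
    ofPlusSet S A = true ↔ A ∈ S := by
  unfold ofPlusSet; split <;> simp_all

lemma signChanges_cons_cons (a b : Bool) (l : List Bool) :
    signChanges (a :: b :: l) = (if a = b then 0 else 1) + signChanges (b :: l) := by
  simp only [signChanges, List.tail_cons, List.zip_cons_cons, List.filter_cons]
  by_cases h : a = b <;> simp [h] <;> omega

lemma le_signChanges_cons (a : Bool) (l : List Bool) :
    signChanges l ≤ signChanges (a :: l) := by
  cases l with
  | nil => simp [signChanges]
  | cons b t => rw [signChanges_cons_cons]; exact Nat.le_add_left _ _

lemma signChanges_cons_le_cons (a b : Bool) (l : List Bool) :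
    signChanges (a :: l) ≤ signChanges (b :: l) + (if a = b then 0 else 1) := by
  cases l with
  | nil => simp [signChanges]
  | cons c t =>
    rw [signChanges_cons_cons, signChanges_cons_cons]
    cases a <;> cases b <;> cases c <;> simp <;> omega

lemma signChanges_cons_sublist {l₁ l₂ : List Bool} (h : l₁.Sublist l₂) :
    ∀ a, signChanges (a :: l₁) ≤ signChanges (a :: l₂) := by
  induction h with
  | slnil => intro a; exact le_refl _
  | @cons m₁ m₂ b h ih =>
    intro a
    calc signChanges (a :: m₁) ≤ signChanges (b :: m₁) + (if a = b then 0 else 1) :=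
          signChanges_cons_le_cons a b m₁
    _ ≤ signChanges (b :: m₂) + (if a = b then 0 else 1) := Nat.add_le_add_right (ih b) _
    _ = signChanges (a :: b :: m₂) := by rw [signChanges_cons_cons, Nat.add_comm]
  | @cons_cons m₁ m₂ b h ih =>
    intro a
    rw [signChanges_cons_cons, signChanges_cons_cons]
    exact Nat.add_le_add_left (ih b) _

lemma signChanges_sublist {l₁ l₂ : List Bool} (h : l₁.Sublist l₂) :
    signChanges l₁ ≤ signChanges l₂ := by
  induction h with
  | slnil => exact le_refl _
  | cons b h ih => exact ih.trans (le_signChanges_cons b _)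
  | @cons_cons m₁ m₂ b h ih => exact signChanges_cons_sublist h b

lemma signChanges_eq_zero : ∀ {l : List Bool}, (∀ x ∈ l, x = false) → signChanges l = 0
  | [], _ => rfl
  | [_], _ => rfl
  | a :: b :: t, h => by
    have h2 : signChanges (b :: t) = 0 :=
      signChanges_eq_zero (l := b :: t) (fun x hx => h x (List.mem_cons_of_mem _ hx))
    rw [signChanges_cons_cons, h2, h a (by simp), h b (by simp)]
    simp

lemma triple_sublist_sort {s : Finset ℕ} {a b c : ℕ} (ha : a ∈ s) (hb : b ∈ s) (hc : c ∈ s)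
    (h1 : a < b) (h2 : b < c) : [a, b, c].Sublist (s.sort (· ≤ ·)) := by
  apply List.sublist_of_subperm_of_pairwise (r := (· ≤ ·))
  · apply List.Nodup.subperm
    · simp [h1.ne, h2.ne, (h1.trans h2).ne]
    · intro x hx
      simp only [List.mem_cons, List.not_mem_nil, or_false] at hx
      rcases hx with rfl | rfl | rfl <;> simp [Finset.mem_sort, ha, hb, hc]
  · simp [List.pairwise_cons, h1.le, h2.le, (h1.trans h2).le]
  · exact Finset.pairwise_sort _ _

lemma GAdj_symm {n d : ℕ} {B B' : Finset ℕ} (h : GAdj n d B B') : GAdj n d B' B := by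
  obtain ⟨hB, hBc, hB', hB'c, x, hxB, y, hyI, hyB, hEq, hblk⟩ := h
  have hxI : x ∈ Finset.Icc 1 n := hB hxB
  have hxy : x ≠ y := fun h => hyB (h ▸ hxB)
  have hyB' : y ∈ B' := hEq ▸ Finset.mem_insert_self _ _
  have hyBe : y ∉ B.erase x := fun h => hyB (Finset.mem_of_mem_erase h)
  have hBE : B'.erase y = B.erase x := by rw [hEq, Finset.erase_insert hyBe]
  refine ⟨hB', hB'c, hB, hBc, y, hyB', x, hxI, ?_, ?_, ?_⟩
  · rw [hEq, Finset.mem_insert]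
    push_neg
    exact ⟨hxy, Finset.notMem_erase _ _⟩
  · rw [hBE, Finset.insert_erase hxB]
  · intro z hz
    rw [hBE] at hz
    have := hblk z hz
    rwa [min_comm y x, max_comm y x]

lemma plusConn_symm {n d : ℕ} {τ : Finset ℕ → Bool} {A A' : Finset ℕ}
    (h : plusConn n d τ A A') : plusConn n d τ A' A := by
  apply (@Relation.ReflTransGen.stdSymm _ _ ⟨?_⟩).symm _ _ h
  rintro X Y ⟨h1, h2, h3⟩
  exact ⟨h2, h1, GAdj_symm h3⟩

lemma mem_comp_of_conn {n d i : ℕ} {τ : Finset ℕ → Bool} {A A' : Finset ℕ}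
    (hA : A ∈ comp n d τ i) (hA' : τ A' = true)
    (hc : plusConn n d τ A A') : A' ∈ comp n d τ i :=
  ⟨hA.1, hA', hA.2.2.trans hc⟩

lemma trueSet_finite {n d : ℕ} {τ : Finset ℕ → Bool} (hτ : IsCoSignotope n d τ) :
    {A : Finset ℕ | τ A = true}.Finite := by
  apply Set.Finite.subset ((Finset.Icc 1 n).powerset : Finset (Finset ℕ)).finite_toSet
  intro A hA
  simp only [Finset.coe_powerset, Set.mem_preimage, Set.mem_powerset_iff, Finset.coe_subset]
  exact (hτ.1 A hA).1

lemma series_signChanges {n d : ℕ} {τ : Finset ℕ → Bool} (hτ : IsCoSignotope n d τ)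
    {C : Finset ℕ} {z : ℕ}
    (hC : C ⊆ Finset.Icc 1 n) (hcard : C.card + 1 = d)
    (hz : z ∈ Finset.Icc 1 n) (hzC : z ∉ C) :
    signChanges (series n τ C) ≤ 1 := by
  have := hτ.2 (insert z C) (Finset.insert_subset hz hC)
    (by rw [Finset.card_insert_of_notMem hzC, hcard]) z (Finset.mem_insert_self _ _)
  rwa [Finset.erase_insert hzC] at this

lemma series_no_alternation {n d : ℕ} {τ : Finset ℕ → Bool} (hτ : IsCoSignotope n d τ)
    {C : Finset ℕ} (hC : C ⊆ Finset.Icc 1 n) (hcard : C.card + 1 = d)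
    {a b c : ℕ} (haI : a ∈ Finset.Icc 1 n) (hbI : b ∈ Finset.Icc 1 n) (hcI : c ∈ Finset.Icc 1 n)
    (haC : a ∉ C) (hbC : b ∉ C) (hcC : c ∉ C) (h1 : a < b) (h2 : b < c) (x : Bool)
    (hta : τ (insert a C) = x) (htb : τ (insert b C) ≠ x) (htc : τ (insert c C) = x) :
    False := by
  have hmem : ∀ w, w ∈ Finset.Icc 1 n → w ∉ C → w ∈ Finset.Icc 1 n \ C := by
    intro w h1 h2; exact Finset.mem_sdiff.mpr ⟨h1, h2⟩
  have hsub : [a, b, c].Sublist ((Finset.Icc 1 n \ C).sort (· ≤ ·)) :=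
    triple_sublist_sort (hmem a haI haC) (hmem b hbI hbC) (hmem c hcI hcC) h1 h2
  have hmap := hsub.map (fun w => τ (insert w C))
  have htb' : τ (insert b C) = !x := by
    cases hx : τ (insert b C) <;> cases x <;> simp_all
  rw [List.map_cons, List.map_cons, List.map_cons, List.map_nil, hta, htb', htc] at hmap
  have hle : signChanges [x, !x, x] ≤ signChanges (series n τ C) := signChanges_sublist hmap
  have h2' : signChanges [x, !x, x] = 2 := by cases x <;> rfl
  have := series_signChanges hτ hC hcard haI haC
  omega


lemma keyP {n d : ℕ} {τ : Finset ℕ → Bool} (hτ : IsCoSignotope n d τ)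
    (hcnt : plusCount τ + d ≤ n) :
    ∀ m : ℕ, ∀ C : Finset ℕ, ∀ x y : ℕ, C ⊆ Finset.Icc 1 n → C.card + 1 = d →
      x ∈ Finset.Icc 1 n → y ∈ Finset.Icc 1 n → x ∉ C → y ∉ C → x < y → y ≤ x + m →
      (∀ w, x < w → w < y → w ∈ C) →
      τ (insert x C) = true → τ (insert y C) = true →
      plusConn n d τ (insert x C) (insert y C) := by
  intro m
  induction m with
  | zero => intro C x y _ _ _ _ _ _ hxy hm _ _ _; omega
  | succ m ih =>
    intro C x y hC hcard hxI hyI hxC hyC hxy hm hbet htx hty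
    obtain ⟨hx1, hxn⟩ := Finset.mem_Icc.mp hxI
    obtain ⟨hy1, hyn⟩ := Finset.mem_Icc.mp hyI
    have hxCcard : (insert x C).card = d := by
      rw [Finset.card_insert_of_notMem hxC, hcard]
    have hyCcard : (insert y C).card = d := by
      rw [Finset.card_insert_of_notMem hyC, hcard]
    by_cases hy1' : y = x + 1
    · apply Relation.ReflTransGen.single
      refine ⟨htx, hty, Finset.insert_subset hxI hC, hxCcard,
        Finset.insert_subset hyI hC, hyCcard,
        x, Finset.mem_insert_self _ _, y, hyI, ?_, ?_, ?_⟩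
      · rw [Finset.mem_insert]; push_neg; exact ⟨fun h => by omega, hyC⟩
      · rw [Finset.erase_insert hxC]
      · intro z hz
        rw [Finset.erase_insert hxC] at hz
        rw [min_eq_left hxy.le, max_eq_right hxy.le]
        rintro ⟨h1, h2⟩; omega
    · -- blocked case
      have hy2 : x + 2 ≤ y := by omega
      set c := y - 1 with hcdef
      have hxc : x < c := by omega
      have hcy : c < y := by omega
      have hcC : c ∈ C := hbet c (by omega) (by omega)
      have hcI : c ∈ Finset.Icc 1 n := hC hcC
      obtain ⟨hc1, hcn⟩ := Finset.mem_Icc.mp hcI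
      have hCpos : 1 ≤ C.card := Finset.card_pos.mpr ⟨c, hcC⟩
      have hxEc : x ∉ C.erase c := fun h => hxC (Finset.mem_of_mem_erase h)
      have hyEc : y ∉ C.erase c := fun h => hyC (Finset.mem_of_mem_erase h)
      set D := insert x (C.erase c) with hD
      set D' := insert y (C.erase c) with hD'
      set E := insert y D with hE
      have hyD : y ∉ D := by
        rw [hD, Finset.mem_insert]; push_neg; exact ⟨fun h => by omega, hyEc⟩
      have hxD' : x ∉ D' := by
        rw [hD', Finset.mem_insert]; push_neg; exact ⟨fun h => by omega, hxEc⟩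
      have hcD : c ∉ D := by
        rw [hD, Finset.mem_insert]; push_neg
        exact ⟨fun h => by omega, Finset.notMem_erase _ _⟩
      have hcD' : c ∉ D' := by
        rw [hD', Finset.mem_insert]; push_neg
        exact ⟨fun h => by omega, Finset.notMem_erase _ _⟩
      have hDsub : D ⊆ Finset.Icc 1 n :=
        Finset.insert_subset hxI ((Finset.erase_subset _ _).trans hC)
      have hD'sub : D' ⊆ Finset.Icc 1 n :=
        Finset.insert_subset hyI ((Finset.erase_subset _ _).trans hC)
      have hDcard : D.card + 1 = d := by
        rw [hD, Finset.card_insert_of_notMem hxEc, Finset.card_erase_of_mem hcC]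
        omega
      have hD'card : D'.card + 1 = d := by
        rw [hD', Finset.card_insert_of_notMem hyEc, Finset.card_erase_of_mem hcC]
        omega
      have hicD : insert c D = insert x C := by
        rw [hD, Finset.insert_comm, Finset.insert_erase hcC]
      have hicD' : insert c D' = insert y C := by
        rw [hD', Finset.insert_comm, Finset.insert_erase hcC]
      have hED' : insert x D' = E := by
        rw [hE, hD, hD', Finset.insert_comm]
      have hEtrue : τ E = true := by
        by_contra hEf
        have fact1 : ∀ z, z ∈ Finset.Icc 1 n → z ∉ D → z ≤ c → τ (insert z D) = true := by
          intro z hzI hzD hzc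
          rcases eq_or_lt_of_le hzc with rfl | hzlt
          · rw [hicD]; exact htx
          · by_contra hzf
            have hzf' : τ (insert z D) = false := by simpa using hzf
            have hcf : τ (insert c D) ≠ false := by rw [hicD, htx]; simp
            have hyf : τ (insert y D) = false := by
              have hEfalse : τ E = false := by simpa using hEf
              exact hEfalse
            exact series_no_alternation hτ hDsub hDcard hzI hcI hyI hzD hcD hyD hzlt hcy
              false hzf' hcf hyf
        have fact2 : ∀ z, z ∈ Finset.Icc 1 n → z ∉ D' → c ≤ z → τ (insert z D') = true := by
          intro z hzI hzD' hcz
          rcases eq_or_lt_of_le hcz with rfl | hzlt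
          · rw [hicD']; exact hty
          · by_contra hzf
            have hzf' : τ (insert z D') = false := by simpa using hzf
            have hcf : τ (insert c D') ≠ false := by rw [hicD', hty]; simp
            have hxf : τ (insert x D') = false := by rw [hED']; simpa using hEf
            exact series_no_alternation hτ hD'sub hD'card hxI hcI hzI hxD' hcD' hzD'
              hxc hzlt false hxf hcf hzf' 
        -- counting contradiction
        have hinj : ∀ D0 s : Finset ℕ, Set.InjOn (fun z => insert z D0) ↑(s \ D0) := by
          intro D0 s z hz z' hz' heq
          have hzD0 : z ∉ D0 := (Finset.mem_sdiff.mp (by exact_mod_cast hz)).2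
          have heq' : insert z D0 = insert z' D0 := heq
          have : z ∈ insert z' D0 := heq' ▸ Finset.mem_insert_self z D0
          rcases Finset.mem_insert.mp this with h | h
          · exact h
          · exact absurd h hzD0
        set T1 := (Finset.Icc 1 c \ D).image (fun z => insert z D) with hT1
        set T2 := (Finset.Icc c n \ D').image (fun z => insert z D') with hT2
        have hcard1 : T1.card = (Finset.Icc 1 c \ D).card :=
          Finset.card_image_of_injOn (hinj D _)
        have hcard2 : T2.card = (Finset.Icc c n \ D').card :=
          Finset.card_image_of_injOn (hinj D' _)
        have hID : Finset.Icc 1 c ∩ D = insert x (Finset.Icc 1 c ∩ C.erase c) := by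
          rw [hD, Finset.inter_insert_of_mem (Finset.mem_Icc.mpr ⟨hx1, hxc.le⟩)]
        have hxIC : x ∉ Finset.Icc 1 c ∩ C.erase c := fun h => hxEc (Finset.mem_inter.mp h).2
        have hIC : Finset.Icc 1 c ∩ C.erase c = (Finset.Icc 1 c ∩ C).erase c :=
          Finset.inter_erase _ _ _
        have hcmem : c ∈ Finset.Icc 1 c ∩ C :=
          Finset.mem_inter.mpr ⟨Finset.mem_Icc.mpr ⟨hc1, le_refl c⟩, hcC⟩
        have ha1pos : 1 ≤ (Finset.Icc 1 c ∩ C).card := Finset.card_pos.mpr ⟨c, hcmem⟩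
        have hIDcard : (Finset.Icc 1 c ∩ D).card = (Finset.Icc 1 c ∩ C).card := by
          rw [hID, Finset.card_insert_of_notMem hxIC, hIC, Finset.card_erase_of_mem hcmem]
          omega
        have hyIcn : y ∈ Finset.Icc c n := Finset.mem_Icc.mpr ⟨hcy.le, hyn⟩
        have hID' : Finset.Icc c n ∩ D' = insert y (Finset.Icc c n ∩ C.erase c) := by
          rw [hD', Finset.inter_insert_of_mem hyIcn]
        have hyIC : y ∉ Finset.Icc c n ∩ C.erase c := fun h => hyEc (Finset.mem_inter.mp h).2
        have hIC' : Finset.Icc c n ∩ C.erase c = (Finset.Icc c n ∩ C).erase c :=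
          Finset.inter_erase _ _ _
        have hcmem' : c ∈ Finset.Icc c n ∩ C :=
          Finset.mem_inter.mpr ⟨Finset.mem_Icc.mpr ⟨le_refl c, hcn⟩, hcC⟩
        have ha2pos : 1 ≤ (Finset.Icc c n ∩ C).card := Finset.card_pos.mpr ⟨c, hcmem'⟩
        have hID'card : (Finset.Icc c n ∩ D').card = (Finset.Icc c n ∩ C).card := by
          rw [hID', Finset.card_insert_of_notMem hyIC, hIC', Finset.card_erase_of_mem hcmem']
          omega
        have hUC : (Finset.Icc 1 c ∩ C) ∪ (Finset.Icc c n ∩ C) = C := by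
          ext w
          simp only [Finset.mem_union, Finset.mem_inter, Finset.mem_Icc]
          constructor
          · rintro (⟨_, h⟩ | ⟨_, h⟩) <;> exact h
          · intro hw
            have hwn := Finset.mem_Icc.mp (hC hw)
            rcases le_total w c with h | h
            · exact Or.inl ⟨⟨hwn.1, h⟩, hw⟩
            · exact Or.inr ⟨⟨h, hwn.2⟩, hw⟩
        have hIC2 : (Finset.Icc 1 c ∩ C) ∩ (Finset.Icc c n ∩ C) = {c} := by
          ext w
          simp only [Finset.mem_inter, Finset.mem_Icc, Finset.mem_singleton]
          constructor
          · rintro ⟨⟨⟨_, h1⟩, _⟩, ⟨h2, _⟩, _⟩; omega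
          · rintro rfl; exact ⟨⟨⟨hc1, le_refl _⟩, hcC⟩, ⟨le_refl _, hcn⟩, hcC⟩
        have hsum := Finset.card_union_add_card_inter (Finset.Icc 1 c ∩ C) (Finset.Icc c n ∩ C)
        rw [hUC, hIC2, Finset.card_singleton] at hsum
        have hT1true : ∀ A ∈ T1, τ A = true := by
          intro A hA
          obtain ⟨z, hz, rfl⟩ := Finset.mem_image.mp hA
          obtain ⟨hzI, hzD⟩ := Finset.mem_sdiff.mp hz
          obtain ⟨hz1, hzc⟩ := Finset.mem_Icc.mp hzI
          exact fact1 z (Finset.mem_Icc.mpr ⟨hz1, hzc.trans hcn⟩) hzD hzc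
        have hT2true : ∀ A ∈ T2, τ A = true := by
          intro A hA
          obtain ⟨z, hz, rfl⟩ := Finset.mem_image.mp hA
          obtain ⟨hzI, hzD'⟩ := Finset.mem_sdiff.mp hz
          obtain ⟨hzc, hzn⟩ := Finset.mem_Icc.mp hzI
          exact fact2 z (Finset.mem_Icc.mpr ⟨hc1.trans hzc, hzn⟩) hzD' hzc
        have hdisj : Disjoint T1 T2 := by
          rw [Finset.disjoint_left]
          intro A hA1 hA2
          obtain ⟨z, hz, rfl⟩ := Finset.mem_image.mp hA1
          obtain ⟨z', hz', heq⟩ := Finset.mem_image.mp hA2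
          have hx1m : x ∈ insert z D := Finset.mem_insert_of_mem (Finset.mem_insert_self _ _)
          have heq' : insert z' D' = insert z D := heq
          rw [← heq'] at hx1m
          rcases Finset.mem_insert.mp hx1m with h | h
          · obtain ⟨hzI', _⟩ := Finset.mem_sdiff.mp hz'
            have := (Finset.mem_Icc.mp hzI').1
            omega
          · exact hxD' h
        have hunion : (T1 ∪ T2).card = T1.card + T2.card := Finset.card_union_of_disjoint hdisj
        have hsubset : ((T1 ∪ T2 : Finset (Finset ℕ)) : Set (Finset ℕ)) ⊆
            {A : Finset ℕ | τ A = true} := by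
          intro A hA
          rcases Finset.mem_union.mp (by exact_mod_cast hA) with h | h
          · exact hT1true A h
          · exact hT2true A h
        have hle := Set.ncard_le_ncard hsubset (trueSet_finite hτ)
        rw [Set.ncard_coe_finset] at hle
        have hplus : {A : Finset ℕ | τ A = true}.ncard = plusCount τ := rfl
        rw [hplus, hunion] at hle
        have hccard : (Finset.Icc 1 c).card = c := by rw [Nat.card_Icc]; omega
        have hcncard : (Finset.Icc c n).card = n + 1 - c := by rw [Nat.card_Icc]
        have hsd1 := Finset.card_sdiff_add_card_inter (Finset.Icc 1 c) D
        have hsd2 := Finset.card_sdiff_add_card_inter (Finset.Icc c n) D'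
        rw [hccard, hIDcard] at hsd1
        rw [hcncard, hID'card] at hsd2
        omega
      -- build the path
      have step1 : plusConn n d τ (insert x C) E := by
        apply Relation.ReflTransGen.single
        have hErw : E = insert y ((insert x C).erase c) := by
          rw [Finset.erase_insert_of_ne (by omega : x ≠ c), hE, hD]
        refine ⟨htx, hEtrue, Finset.insert_subset hxI hC, hxCcard, ?_, ?_,
          c, Finset.mem_insert_of_mem hcC, y, hyI, ?_, hErw, ?_⟩
        · rw [hE]; exact Finset.insert_subset hyI hDsub
        · rw [hE, Finset.card_insert_of_notMem hyD]; omega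
        · rw [Finset.mem_insert]; push_neg; exact ⟨fun h => by omega, hyC⟩
        · intro z hz
          rw [min_eq_left hcy.le, max_eq_right hcy.le]
          rintro ⟨h1, h2⟩; omega
      have step2 : plusConn n d τ (insert x D') (insert c D') := by
        apply ih D' x c hD'sub hD'card hxI hcI hxD' hcD' hxc (by omega)
        · intro w hw1 hw2
          rw [hD', Finset.mem_insert]
          right
          exact Finset.mem_erase.mpr ⟨by omega, hbet w hw1 (by omega)⟩
        · rw [hED']; exact hEtrue
        · rw [hicD']; exact hty
      rw [hED', hicD'] at step2
      exact step1.trans step2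


lemma keyQ {n d : ℕ} {τ : Finset ℕ → Bool} (hτ : IsCoSignotope n d τ)
    (hcnt : plusCount τ + d ≤ n) :
    ∀ m : ℕ, ∀ C : Finset ℕ, ∀ z z' : ℕ, C ⊆ Finset.Icc 1 n → C.card + 1 = d →
      z ∈ Finset.Icc 1 n → z' ∈ Finset.Icc 1 n → z ∉ C → z' ∉ C → z < z' → z' ≤ z + m →
      τ (insert z C) = true → τ (insert z' C) = true →
      plusConn n d τ (insert z C) (insert z' C) := by
  intro m
  induction m with
  | zero => intro C z z' _ _ _ _ _ _ h1 h2 _ _; omega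
  | succ m ih =>
    intro C z z' hC hcard hzI hz'I hzC hz'C hzz hm htz htz'
    by_cases hall : ∀ w, z < w → w < z' → w ∈ C
    · exact keyP hτ hcnt (m + 1) C z z' hC hcard hzI hz'I hzC hz'C hzz hm hall htz htz'
    · push_neg at hall
      obtain ⟨w, hzw, hwz', hwC⟩ := hall
      have hwI : w ∈ Finset.Icc 1 n := by
        obtain ⟨h1, _⟩ := Finset.mem_Icc.mp hzI
        obtain ⟨_, h2⟩ := Finset.mem_Icc.mp hz'I
        exact Finset.mem_Icc.mpr ⟨by omega, by omega⟩
      have hwt : τ (insert w C) = true := by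
        by_contra hwf
        exact series_no_alternation hτ hC hcard hzI hwI hz'I hzC hwC hz'C hzw hwz'
          true htz hwf htz'
      exact (ih C z w hC hcard hzI hwI hzC hwC hzw (by omega) htz hwt).trans
        (ih C w z' hC hcard hwI hz'I hwC hz'C hwz' (by omega) hwt htz')

lemma conn_of_series {n d : ℕ} {τ : Finset ℕ → Bool} (hτ : IsCoSignotope n d τ)
    (hcnt : plusCount τ + d ≤ n) {C : Finset ℕ} {z z' : ℕ}
    (hC : C ⊆ Finset.Icc 1 n) (hcard : C.card + 1 = d)
    (hzI : z ∈ Finset.Icc 1 n) (hz'I : z' ∈ Finset.Icc 1 n) (hzC : z ∉ C) (hz'C : z' ∉ C)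
    (htz : τ (insert z C) = true) (htz' : τ (insert z' C) = true) :
    plusConn n d τ (insert z C) (insert z' C) := by
  rcases lt_trichotomy z z' with h | h | h
  · exact keyQ hτ hcnt z' C z z' hC hcard hzI hz'I hzC hz'C h (by omega) htz htz'
  · rw [h]; exact Relation.ReflTransGen.refl
  · exact plusConn_symm (keyQ hτ hcnt z C z' z hC hcard hz'I hzI hz'C hzC h (by omega) htz' htz)

end AuxStatement10

/-- **Lemma.** For `τ ∈ 𝒮̄_p(n,d)` with `+`-component decomposition
`Δ(τ) = (τ_0, …, τ_d)`, each `τ_i` is a co-signotope in `𝒮̄_{|𝒞^τ_i|, i}(n,d)`. -/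
theorem statement10 (n d p : ℕ) (hdn : d < n) (hp : p + d ≤ n)
    (τ : Finset ℕ → Bool) (hτ : τ ∈ coSigSet n d p) (i : ℕ) (hi : i ≤ d) :
    compFun n d τ i ∈ coSigOnly n d ((comp n d τ i).ncard) i := by
  obtain ⟨hcs, hpc⟩ := hτ
  have hcnt : plusCount τ + d ≤ n := by rw [hpc]; exact hp
  have hcf : ∀ A : Finset ℕ, compFun n d τ i A = true ↔ A ∈ comp n d τ i := fun A =>
    ofPlusSet_eq_true
  refine ⟨⟨?_, ?_⟩, ?_, ?_⟩
  · intro A hA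
    exact hcs.1 A ((hcf A).mp hA).2.1
  · intro B hB hBcard b hbB
    have hbpos : 1 ≤ B.card := Finset.card_pos.mpr ⟨b, hbB⟩
    have hdpos : 1 ≤ d := hBcard ▸ hbpos
    set C := B.erase b with hCdef
    have hCsub : C ⊆ Finset.Icc 1 n := (Finset.erase_subset _ _).trans hB
    have hCcard : C.card + 1 = d := by
      rw [hCdef, Finset.card_erase_of_mem hbB, hBcard]
      omega
    by_cases hex : ∃ z, z ∈ Finset.Icc 1 n ∧ z ∉ C ∧ insert z C ∈ comp n d τ i
    · obtain ⟨z₀, hz₀I, hz₀C, hz₀⟩ := hex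
      have hz₀t : τ (insert z₀ C) = true := hz₀.2.1
      have hser : series n (compFun n d τ i) C = series n τ C := by
        unfold series
        apply List.map_congr_left
        intro z hz
        obtain ⟨hzI, hzC⟩ := Finset.mem_sdiff.mp ((Finset.mem_sort _).mp hz)
        cases ht : τ (insert z C) with
        | true =>
          have hmem : insert z C ∈ comp n d τ i :=
            mem_comp_of_conn hz₀ ht
              (conn_of_series hcs hcnt hCsub hCcard hz₀I hzI hz₀C hzC hz₀t ht)
          rw [(hcf _).mpr hmem]
        | false =>
          cases hcf2 : compFun n d τ i (insert z C) with
          | false => rfl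
          | true => exact absurd ((hcf _).mp hcf2).2.1 (by rw [ht]; simp)
      rw [hser]
      exact hcs.2 B hB hBcard b hbB
    · push_neg at hex
      have hzero : signChanges (series n (compFun n d τ i) C) = 0 := by
        apply signChanges_eq_zero
        intro v hv
        obtain ⟨z, hz, rfl⟩ := List.mem_map.mp hv
        obtain ⟨hzI, hzC⟩ := Finset.mem_sdiff.mp ((Finset.mem_sort _).mp hz)
        cases hcf2 : compFun n d τ i (insert z C) with
        | false => rfl
        | true => exact absurd ((hcf _).mp hcf2) (hex z hzI hzC)
      omega
  · show plusCount (compFun n d τ i) = (comp n d τ i).ncard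
    unfold plusCount
    congr 1
    exact Set.ext fun A => hcf A
  · intro B hB
    obtain ⟨hSt, hBt, hconn⟩ := (hcf B).mp hB
    have hS : compFun n d τ i (sourceSubset n d i) = true :=
      (hcf _).mpr ⟨hSt, hSt, Relation.ReflTransGen.refl⟩
    refine ⟨hS, hB, ?_⟩
    clear hB hBt
    induction hconn with
    | refl => exact Relation.ReflTransGen.refl
    | @tail b c hsb step ih =>
      have hb : compFun n d τ i b = true := (hcf _).mpr ⟨hSt, step.1, hsb⟩
      have hc2 : compFun n d τ i c = true := (hcf _).mpr ⟨hSt, step.2.1, hsb.tail step⟩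
      exact ih.tail ⟨hb, hc2, step.2.2⟩
end
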